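/- arXiv:1810.06186 — 4 statements merged into one kernel-verified Lean document; each statement's English description precedes it below -/
import Mathlib

section
/- For every graph G in the class H there is a graph G* in the class H* such that ω(G) = ω(G*) and χ(G) = χ(G*). Moreover, G has a good stable set if and only if G* has a good stable set. -/
open SimpleGraph

/-- The gem: a path 0-1-2-3 on 4 vertices plus a fifth vertex 4 adjacent to all of them. -/
def gem : SimpleGraph (Fin 5) :=
  SimpleGraph.fromEdgeSet {s(0,1), s(1,2), s(2,3), s(4,0), s(4,1), s(4,2), s(4,3)}

/-- `G` is `H`-free: no induced subgraph of `G` is isomorphic to `H`. -/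
def InducedFree {W V : Type*} (H : SimpleGraph W) (G : SimpleGraph V) : Prop :=
  ¬ Nonempty (H ↪g G)

/-- `G` is (P5, gem)-free. -/
def P5GemFree {V : Type*} (G : SimpleGraph V) : Prop :=
  InducedFree (SimpleGraph.pathGraph 5) G ∧ InducedFree gem G

/-- `X` is complete to `Y`: every vertex of `X` is adjacent to every vertex of `Y`. -/
def CompleteTo {V : Type*} (G : SimpleGraph V) (X Y : Set V) : Prop :=
  ∀ x ∈ X, ∀ y ∈ Y, G.Adj x y

/-- `X` is anticomplete to `Y`: no vertex of `X` is adjacent to any vertex of `Y`. -/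
def AnticompleteTo {V : Type*} (G : SimpleGraph V) (X Y : Set V) : Prop :=
  ∀ x ∈ X, ∀ y ∈ Y, ¬ G.Adj x y

/-- `X` is a homogeneous set: every vertex outside `X` with a neighbor in `X` is
complete to `X`. -/
def IsHomogeneousSet {V : Type*} (G : SimpleGraph V) (X : Set V) : Prop :=
  ∀ v ∉ X, (∃ x ∈ X, G.Adj v x) → ∀ x ∈ X, G.Adj v x

/-- A partition witnessing membership in the class `H` (here `A 0, …, A 6` play the roles of
`A_1, …, A_7`). -/
structure IsHPartition {V : Type*} (G : SimpleGraph V) (A : Fin 7 → Set V) : Prop where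
  nonempty : ∀ i, (A i).Nonempty
  covers : (⋃ i, A i) = Set.univ
  disjoint : ∀ i j, i ≠ j → Disjoint (A i) (A j)
  p4free : ∀ i, InducedFree (SimpleGraph.pathGraph 4) (G.induce (A i))
  c12 : CompleteTo G (A 0) (A 1)
  c15 : CompleteTo G (A 0) (A 4)
  c16 : CompleteTo G (A 0) (A 5)
  a13 : AnticompleteTo G (A 0) (A 2)
  a14 : AnticompleteTo G (A 0) (A 3)
  a17 : AnticompleteTo G (A 0) (A 6)
  c32 : CompleteTo G (A 2) (A 1)
  c34 : CompleteTo G (A 2) (A 3)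
  c36 : CompleteTo G (A 2) (A 5)
  a35 : AnticompleteTo G (A 2) (A 4)
  a37 : AnticompleteTo G (A 2) (A 6)
  c45 : CompleteTo G (A 3) (A 4)
  c46 : CompleteTo G (A 3) (A 5)
  a42 : AnticompleteTo G (A 3) (A 1)
  a47 : AnticompleteTo G (A 3) (A 6)
  a25 : AnticompleteTo G (A 1) (A 4)
  a26 : AnticompleteTo G (A 1) (A 5)
  a27 : AnticompleteTo G (A 1) (A 6)
  a56 : AnticompleteTo G (A 4) (A 5)
  a57 : AnticompleteTo G (A 4) (A 6)
  hom : ∀ C : (G.induce (A 6)).ConnectedComponent,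
    IsHomogeneousSet G (Subtype.val '' C.supp)

/-- The class `H` of connected (P5, gem)-free graphs admitting the seven-set partition. -/
def InClassH {V : Type*} (G : SimpleGraph V) : Prop :=
  G.Connected ∧ P5GemFree G ∧ ∃ A : Fin 7 → Set V, IsHPartition G A

/-- A partition witnessing membership in the class `H*`: an `H`-partition in which
`A 0, …, A 4` (the sets `A_1, …, A_5`) and the vertex set of each connected component of the
subgraph induced by `A 6` (the set `A_7`) are cliques. -/
def IsHStarPartition {V : Type*} (G : SimpleGraph V) (A : Fin 7 → Set V) : Prop :=
  IsHPartition G A ∧ (∀ i : Fin 7, i.val < 5 → G.IsClique (A i)) ∧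
    ∀ C : (G.induce (A 6)).ConnectedComponent, G.IsClique (Subtype.val '' C.supp)

/-- The class `H*`. -/
def InClassHStar {V : Type*} (G : SimpleGraph V) : Prop :=
  G.Connected ∧ P5GemFree G ∧ ∃ A : Fin 7 → Set V, IsHStarPartition G A

/-- A stable set: a set of pairwise non-adjacent vertices. -/
def IsStableSet {V : Type*} (G : SimpleGraph V) (S : Set V) : Prop :=
  S.Pairwise (fun u v => ¬ G.Adj u v)

/-- A good stable set: a stable set meeting every clique of size `ω(G)`. -/
def HasGoodStableSet {V : Type*} [Fintype V] (G : SimpleGraph V) : Prop :=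
  ∃ S : Set V, IsStableSet G S ∧
    ∀ K : Finset V, G.IsNClique G.cliqueNum K → ∃ v ∈ S, v ∈ K

section Helpers

open Finset in
lemma inducedFree_of_embedding {U V W : Type*} {H : SimpleGraph U} {G : SimpleGraph V}
    {G' : SimpleGraph W} (f : G ↪g G') (h : InducedFree H G') : InducedFree H G := by
  rintro ⟨e⟩; exact h ⟨f.comp e⟩

/-- Embedding between induced subgraphs on nested sets. -/
def induceSubEmb {V : Type*} (G : SimpleGraph V) {s t : Set V} (h : s ⊆ t) :
    G.induce s ↪g G.induce t where
  toFun x := ⟨x.1, h x.2⟩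
  inj' := by rintro ⟨a, ha⟩ ⟨b, hb⟩ hab; simpa using congrArg Subtype.val hab
  map_rel_iff' := by intro a b; simp [comap_adj]; exact Iff.rfl

lemma isNClique_map_emb {V W : Type*} {G : SimpleGraph V} {G' : SimpleGraph W} (f : G ↪g G')
    {n : ℕ} {K : Finset V} (h : G.IsNClique n K) :
    G'.IsNClique n (K.map f.toEmbedding) := by
  constructor
  · rintro x hx y hy hne
    simp only [Finset.coe_map, Set.mem_image, Finset.mem_coe] at hx hy
    obtain ⟨a, ha, rfl⟩ := hx
    obtain ⟨b, hb, rfl⟩ := hy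
    exact f.map_adj_iff.mpr (h.isClique ha hb (fun hh => hne (by rw [hh])))
  · rw [Finset.card_map]; exact h.card_eq

lemma card_le_cliqueNum' {V : Type*} [Fintype V] {G : SimpleGraph V} {K : Finset V}
    (h : G.IsClique ↑K) : K.card ≤ G.cliqueNum :=
  SimpleGraph.IsClique.card_le_cliqueNum (tc := h)

lemma cliqueNum_le_of_embedding {V W : Type*} [Fintype V] [Fintype W] {G : SimpleGraph V}
    {G' : SimpleGraph W} (f : G ↪g G') : G.cliqueNum ≤ G'.cliqueNum := by
  obtain ⟨K, hK⟩ := G.exists_isNClique_cliqueNum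
  have := isNClique_map_emb f hK
  calc G.cliqueNum = (K.map f.toEmbedding).card := this.card_eq.symm
    _ ≤ G'.cliqueNum := card_le_cliqueNum' this.isClique

lemma cliqueNum_eq_of_iso {V W : Type*} [Fintype V] [Fintype W] {G : SimpleGraph V}
    {G' : SimpleGraph W} (f : G ≃g G') : G.cliqueNum = G'.cliqueNum :=
  le_antisymm (cliqueNum_le_of_embedding f.toEmbedding)
    (cliqueNum_le_of_embedding f.symm.toEmbedding)

lemma chromaticNumber_eq_of_iso {V W : Type*} {G : SimpleGraph V}
    {G' : SimpleGraph W} (f : G ≃g G') : G.chromaticNumber = G'.chromaticNumber :=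
  le_antisymm (chromaticNumber_mono_of_hom f.toEmbedding.toHom)
    (chromaticNumber_mono_of_hom f.symm.toEmbedding.toHom)

/-- Push a `Finset` of a subtype into the ambient type. -/
def Finset.vals {V : Type*} {s : Set V} (K : Finset ↥s) : Finset V :=
  K.map (Function.Embedding.subtype _)

lemma Finset.mem_vals {V : Type*} {s : Set V} {K : Finset ↥s} {x : V} :
    x ∈ K.vals ↔ ∃ h : x ∈ s, ⟨x, h⟩ ∈ K := by
  simp only [Finset.vals, Finset.mem_map, Function.Embedding.coe_subtype]
  constructor
  · rintro ⟨⟨a, ha⟩, h1, rfl⟩; exact ⟨ha, h1⟩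
  · rintro ⟨h, h1⟩; exact ⟨⟨x, h⟩, h1, rfl⟩

lemma isNClique_vals {V : Type*} {G : SimpleGraph V} {s : Set V} {K : Finset ↥s} {n : ℕ}
    (h : (G.induce s).IsNClique n K) : G.IsNClique n K.vals :=
  isNClique_map_emb (SimpleGraph.Embedding.induce s) h

/-- Pull a `Finset` of the ambient type contained in `s` back into the subtype. -/
noncomputable def Finset.toSub {V : Type*} (K : Finset V) (s : Set V) (h : ↑K ⊆ s) :
    Finset ↥s :=
  K.attach.map ⟨fun x => (⟨x.1, h x.2⟩ : ↥s), by rintro ⟨a, ha⟩ ⟨b, hb⟩ hab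
                                                 simpa using congrArg Subtype.val hab⟩

lemma Finset.mem_toSub {V : Type*} {K : Finset V} {s : Set V} {h : ↑K ⊆ s} {x : ↥s} :
    x ∈ K.toSub s h ↔ (x : V) ∈ K := by
  simp only [Finset.toSub, Finset.mem_map, Finset.mem_attach, true_and,
    Function.Embedding.coeFn_mk]
  constructor
  · rintro ⟨a, rfl⟩; exact a.2
  · intro hx; exact ⟨⟨x, hx⟩, rfl⟩

lemma Finset.card_toSub {V : Type*} {K : Finset V} {s : Set V} {h : ↑K ⊆ s} :
    (K.toSub s h).card = K.card := by
  simp [Finset.toSub]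

lemma isNClique_toSub {V : Type*} {G : SimpleGraph V} {s : Set V} {K : Finset V} {n : ℕ}
    (hsub : ↑K ⊆ s) (h : G.IsNClique n K) : (G.induce s).IsNClique n (K.toSub s hsub) := by
  constructor
  · rintro ⟨x, hx⟩ hx' ⟨y, hy⟩ hy' hne
    rw [Finset.mem_coe, Finset.mem_toSub] at hx' hy'
    exact h.isClique hx' hy' (by simpa using hne)
  · rw [Finset.card_toSub]; exact h.card_eq

lemma card_le_cliqueNum_induce {V : Type*} [Fintype V] {G : SimpleGraph V} {s : Set V}
    {K : Finset V} (hsub : ↑K ⊆ s) (h : G.IsClique ↑K) :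
    K.card ≤ (G.induce s).cliqueNum := by
  haveI : Fintype ↥s := Set.Finite.fintype (Set.toFinite s)
  have := isNClique_toSub hsub ⟨h, rfl⟩
  calc K.card = (K.toSub s hsub).card := Finset.card_toSub.symm
    _ ≤ _ := card_le_cliqueNum' this.isClique

end Helpers
section Cograph
open Classical in
lemma p4_embedding {V : Type*} {G : SimpleGraph V} (a b c d : V)
    (hab : G.Adj a b) (hbc : G.Adj b c) (hcd : G.Adj c d)
    (hac : ¬ G.Adj a c) (had : ¬ G.Adj a d) (hbd : ¬ G.Adj b d) (hbd' : b ≠ d) :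
    Nonempty (SimpleGraph.pathGraph 4 ↪g G) := by
  have nab : a ≠ b := hab.ne
  have nbc : b ≠ c := hbc.ne
  have ncd : c ≠ d := hcd.ne
  have nac : a ≠ c := fun h => had (h ▸ hcd)
  have nad : a ≠ d := fun h => hac (h ▸ hcd.symm)
  have hba := hab.symm; have hcb := hbc.symm; have hdc := hcd.symm
  have hca : ¬ G.Adj c a := fun h => hac h.symm
  have hda : ¬ G.Adj d a := fun h => had h.symm
  have hdb : ¬ G.Adj d b := fun h => hbd h.symm
  refine ⟨⟨⟨![a,b,c,d], ?_⟩, ?_⟩⟩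
  · intro i j hij
    fin_cases i <;> fin_cases j <;>
      simp_all [Matrix.cons_val_zero, Matrix.cons_val_one] <;>
      first
        | rfl
        | (exfalso; first
            | exact nab hij | exact nac hij | exact nad hij | exact nbc hij
            | exact nbd' hij | exact ncd hij | exact nab hij.symm | exact nac hij.symm
            | exact nad hij.symm | exact nbc hij.symm | exact hbd' hij | exact hbd' hij.symm
            | exact ncd hij.symm)
  · intro i j
    fin_cases i <;> fin_cases j <;>
      simp [SimpleGraph.pathGraph_adj, hab, hbc, hcd, hac, had, hbd, hba, hcb, hdc,
        hca, hda, hdb, G.irrefl] <;> assumption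

lemma exists_anticomplete_split {V : Type*} {G : SimpleGraph V} [Nonempty V]
    (h : ¬ G.Connected) :
    ∃ s : Set V, s.Nonempty ∧ sᶜ.Nonempty ∧ ∀ x ∈ s, ∀ y ∈ sᶜ, ¬ G.Adj x y := by
  rw [SimpleGraph.connected_iff] at h
  have hpre : ¬ G.Preconnected := fun hp => h ⟨hp, ‹_›⟩
  rw [SimpleGraph.Preconnected] at hpre
  push_neg at hpre
  obtain ⟨v, w, hvw⟩ := hpre
  refine ⟨(G.connectedComponentMk v).supp, ⟨v, rfl⟩, ⟨w, fun hw => ?_⟩, ?_⟩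
  · exact hvw (SimpleGraph.ConnectedComponent.exact hw).symm
  · intro x hx y hy hadj
    rw [SimpleGraph.ConnectedComponent.mem_supp_iff] at hx
    exact hy (by
      rw [SimpleGraph.ConnectedComponent.mem_supp_iff, ← hx]
      exact SimpleGraph.ConnectedComponent.connectedComponentMk_eq_of_adj hadj.symm)

lemma exists_cross_adj {V : Type*} {G : SimpleGraph V} (hconn : G.Connected) {S : Set V}
    {u v : V} (hu : u ∈ S) (hv : v ∉ S) : ∃ x ∈ S, ∃ y, y ∉ S ∧ G.Adj x y := by
  obtain ⟨p⟩ := hconn.preconnected u v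
  obtain ⟨d, _, hd1, hd2⟩ := p.exists_boundary_dart S hu hv
  exact ⟨d.fst, hd1, d.snd, hd2, d.adj⟩
end Cograph
section Seinsche
universe u

lemma join_split_of_connected :
    ∀ (n : ℕ) {V : Type u} [Fintype V] (G : SimpleGraph V),
      Fintype.card V ≤ n → InducedFree (SimpleGraph.pathGraph 4) G → G.Connected →
      2 ≤ Fintype.card V →
      ∃ s : Set V, s.Nonempty ∧ sᶜ.Nonempty ∧ ∀ x ∈ s, ∀ y ∈ sᶜ, G.Adj x y := by
  intro n
  induction n with
  | zero => intro V _ G hcard _ _ h2; omega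
  | succ n ih =>
    intro V _ G hcard hfree hconn h2
    classical
    haveI : Nonempty V := Fintype.card_pos_iff.mp (by omega)
    obtain ⟨v⟩ := ‹Nonempty V›
    by_cases hcomp : ∀ w, w ≠ v → G.Adj v w
    · refine ⟨{v}, ⟨v, rfl⟩, ?_, ?_⟩
      · obtain ⟨w, hw⟩ := Fintype.exists_ne_of_one_lt_card (by omega) v
        exact ⟨w, hw⟩
      · rintro x rfl y hy
        exact hcomp y hy
    · push_neg at hcomp
      obtain ⟨u, hu, hnadj⟩ := hcomp
      set T : Set V := {v}ᶜ with hT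
      have huT : u ∈ T := hu
      have hP4H : InducedFree (SimpleGraph.pathGraph 4) (G.induce T) :=
        inducedFree_of_embedding (SimpleGraph.Embedding.induce T) hfree
      by_cases hHconn : (G.induce T).Connected
      · -- H connected: use IH
        by_cases hc3 : 3 ≤ Fintype.card V
        swap
        · -- card V = 2 : contradiction with hnadj
          exfalso
          obtain ⟨x, hx, y, hy, hadj⟩ := exists_cross_adj hconn (Set.mem_singleton v)
            (by exact fun h => hu (h : u ∈ ({v} : Set V)))
          rw [Set.mem_singleton_iff] at hx
          have hadj' : G.Adj v y := hx ▸ hadj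
          have hyv : y ≠ v := fun h => hy (h ▸ rfl)
          have : y = u := by
            by_contra hne
            have : ({v, u, y} : Finset V).card ≤ Fintype.card V := Finset.card_le_univ _
            rw [Finset.card_insert_of_notMem (by simp [Ne.symm hu, Ne.symm hyv]),
              Finset.card_insert_of_notMem (by
                simp only [Finset.mem_singleton]; exact fun h => hne h.symm),
              Finset.card_singleton] at this
            omega
          exact hnadj (this ▸ hadj')
        · haveI : Fintype ↥T := Set.Finite.fintype (Set.toFinite _)
          have hcardT : Fintype.card ↥T ≤ n := by
            have : Fintype.card ↥T < Fintype.card V := by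
              have := Fintype.card_subtype_lt (p := fun x => x ∈ T) (x := v)
                (by simp [hT])
              convert this using 2
            omega
          have hcardT2 : 2 ≤ Fintype.card ↥T := by
            obtain ⟨w1, hw1⟩ := Fintype.exists_ne_of_one_lt_card (by omega) v
            obtain ⟨w2, hw2, hw2'⟩ : ∃ w2, w2 ≠ v ∧ w2 ≠ w1 := by
              by_contra hcon
              push_neg at hcon
              have : ({v, w1} : Finset V).card ≤ Fintype.card V := Finset.card_le_univ _
              have hsub : (Finset.univ : Finset V) ⊆ {v, w1} := by
                intro z _
                simp only [Finset.mem_insert, Finset.mem_singleton]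
                rcases eq_or_ne z v with h | h
                · exact Or.inl h
                · exact Or.inr (hcon z h)
              have := Finset.card_le_card hsub
              simp only [Finset.card_univ] at this
              have : Fintype.card V ≤ 2 := le_trans this (Finset.card_insert_le _ _ |>.trans (by simp))
              omega
            have : Function.Injective (fun i : Fin 2 => if i = 0 then (⟨w1, hw1⟩ : ↥T) else ⟨w2, hw2⟩) := by
              intro i j hij
              fin_cases i <;> fin_cases j <;> simp_all <;>
                exact absurd (congrArg Subtype.val hij) (by simp [hw2', Ne.symm hw2'])
            calc 2 = Fintype.card (Fin 2) := by simp
              _ ≤ Fintype.card ↥T := Fintype.card_le_of_injective _ this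
          obtain ⟨X, hXne, hXcne, hXcross⟩ := ih (G.induce T) hcardT hP4H hHconn hcardT2
          set Xv : Set V := Subtype.val '' X with hXv
          set Yv : Set V := Subtype.val '' Xᶜ with hYv
          have hXvT : ∀ x ∈ Xv, x ≠ v := by
            rintro x ⟨⟨x', hx'⟩, _, rfl⟩ h; exact hx' (h ▸ rfl)
          have hYvT : ∀ x ∈ Yv, x ≠ v := by
            rintro x ⟨⟨x', hx'⟩, _, rfl⟩ h; exact hx' (h ▸ rfl)
          have hcrossG : ∀ x ∈ Xv, ∀ y ∈ Yv, G.Adj x y := by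
            rintro x ⟨x', hx', rfl⟩ y ⟨y', hy', rfl⟩
            exact hXcross x' hx' y' hy'
          have hsplit : ∀ x : V, x ≠ v → x ∈ Xv ∨ x ∈ Yv := by
            intro x hx
            by_cases h : (⟨x, hx⟩ : ↥T) ∈ X
            · exact Or.inl ⟨⟨x, hx⟩, h, rfl⟩
            · exact Or.inr ⟨⟨x, hx⟩, h, rfl⟩
          have hXvYv : ∀ x, x ∈ Xv → x ∈ Yv → False := by
            rintro x ⟨x', hx', rfl⟩ ⟨y', hy', hyx⟩
            have : y' = x' := Subtype.ext hyx
            exact hy' (this ▸ hx')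
          by_cases hvX : ∀ x ∈ Xv, G.Adj v x
          · refine ⟨Xv, ?_, ?_, ?_⟩
            · obtain ⟨x', hx'⟩ := hXne; exact ⟨x', x', hx', rfl⟩
            · exact ⟨v, fun hv => hXvT v hv rfl⟩
            · intro x hx y hy
              rcases eq_or_ne y v with rfl | hyv
              · exact (hvX x hx).symm
              · rcases hsplit y hyv with h | h
                · exact absurd h hy
                · exact hcrossG x hx y h
          · by_cases hvY : ∀ y ∈ Yv, G.Adj v y
            · refine ⟨Yv, ?_, ?_, ?_⟩
              · obtain ⟨y', hy'⟩ := hXcne; exact ⟨y', y', hy', rfl⟩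
              · exact ⟨v, fun hv => hYvT v hv rfl⟩
              · intro x hx y hy
                rcases eq_or_ne y v with rfl | hyv
                · exact (hvY x hx).symm
                · rcases hsplit y hyv with h | h
                  · exact (hcrossG y h x hx).symm
                  · exact absurd h hy
            · push_neg at hvX hvY
              obtain ⟨x0, hx0X, hx0⟩ := hvX
              obtain ⟨y0, hy0Y, hy0⟩ := hvY
              refine ⟨G.neighborSet v, ?_, ⟨v, by simp⟩, ?_⟩
              · obtain ⟨x, hx, y, hy, hadj⟩ := exists_cross_adj hconn (Set.mem_singleton v)
                  (fun h => hu (h : u ∈ ({v} : Set V)))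
                rw [Set.mem_singleton_iff] at hx
                subst hx
                exact ⟨y, hadj⟩
              · intro w hw z hz
                have hwv : G.Adj v w := hw
                rcases eq_or_ne z v with rfl | hzv
                · exact hwv.symm
                · have hznadj : ¬ G.Adj v z := hz
                  have hwne : w ≠ v := fun h => G.irrefl (h ▸ hwv)
                  have hwzne : w ≠ z := fun h => hznadj (h ▸ hwv)
                  rcases hsplit w hwne with hwX | hwY
                  · rcases hsplit z hzv with hzX | hzY
                    · -- both in Xv : use y0
                      by_contra hwz
                      have hvy0 : ¬ G.Adj v y0 := hy0
                      have hvz : ¬ G.Adj v z := hznadj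
                      exact hfree (p4_embedding v w y0 z hwv (hcrossG w hwX y0 hy0Y)
                        (hcrossG z hzX y0 hy0Y).symm hvy0 hvz hwz hwzne)
                    · exact hcrossG w hwX z hzY
                  · rcases hsplit z hzv with hzX | hzY
                    · exact (hcrossG z hzX w hwY).symm
                    · by_contra hwz
                      exact hfree (p4_embedding v w x0 z hwv (hcrossG x0 hx0X w hwY).symm
                        (hcrossG x0 hx0X z hzY) hx0 hznadj hwz hwzne)
      · -- H not connected: produce a P4
        exfalso
        -- a, b with v ~ b ~ a, v ≁ a
        obtain ⟨x, hx, y, hy, hadj⟩ := exists_cross_adj hconn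
          (S := {x | x = v ∨ G.Adj v x}) (Or.inl rfl) (by
            intro h
            rcases h with h | h
            · exact hu h
            · exact hnadj h)
        have hyv : y ≠ v := fun h => hy (Or.inl h)
        have hvy : ¬ G.Adj v y := fun h => hy (Or.inr h)
        have hxv : G.Adj v x := by
          rcases hx with h | h
          · exfalso; rw [h] at hadj; exact hvy hadj
          · exact h
        set b := x
        set a := y
        have haT : a ∈ T := hyv
        have hbT : b ∈ T := fun h => G.irrefl ((Set.eq_of_mem_singleton h) ▸ hxv)
        -- some vertex not reachable from a in H
        have : ¬ (G.induce T).Preconnected := by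
          intro hp
          haveI : Nonempty ↥T := ⟨⟨a, haT⟩⟩
          exact hHconn ⟨hp⟩
        rw [SimpleGraph.Preconnected] at this
        push_neg at this
        obtain ⟨p, q, hpq⟩ := this
        have : ∃ w : ↥T, ¬ (G.induce T).Reachable ⟨a, haT⟩ w := by
          by_contra hcon
          push_neg at hcon
          exact hpq ((hcon p).symm.trans (hcon q))
        obtain ⟨w, hw⟩ := this
        -- boundary dart from S2
        set S2 : Set V := {z | z = v ∨ ∃ hz : z ∈ T, (G.induce T).Reachable ⟨a, haT⟩ ⟨z, hz⟩}
          with hS2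
        have hvS2 : v ∈ S2 := Or.inl rfl
        have hwS2 : (w : V) ∉ S2 := by
          rintro (h | ⟨hz, hr⟩)
          · exact w.2 (by simp [hT, h])
          · exact hw (by convert hr)
        obtain ⟨x2, hx2, y2, hy2, hadj2⟩ := exists_cross_adj hconn hvS2 hwS2
        have hy2v : y2 ≠ v := fun h => hy2 (Or.inl h)
        have hy2T : y2 ∈ T := hy2v
        have hy2nr : ¬ (G.induce T).Reachable ⟨a, haT⟩ ⟨y2, hy2T⟩ :=
          fun h => hy2 (Or.inr ⟨hy2T, h⟩)
        have hx2v : x2 = v := by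
          rcases hx2 with h | ⟨hz, hr⟩
          · exact h
          · exfalso
            have : (G.induce T).Adj ⟨x2, hz⟩ ⟨y2, hy2T⟩ := hadj2
            exact hy2nr (hr.trans this.reachable)
        set c := y2
        -- P4 : a - b - v - c
        have hab : G.Adj a b := hadj.symm
        have hbv : G.Adj b v := hxv.symm
        have hvc : G.Adj v c := hx2v ▸ hadj2
        have hreach_ab : (G.induce T).Reachable ⟨a, haT⟩ ⟨b, hbT⟩ :=
          (SimpleGraph.Adj.reachable (by exact hab : (G.induce T).Adj ⟨a, haT⟩ ⟨b, hbT⟩))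
        have hac : ¬ G.Adj a c := by
          intro h
          exact hy2nr (SimpleGraph.Adj.reachable (by exact h : (G.induce T).Adj ⟨a, haT⟩ ⟨c, hy2T⟩))
        have hbc : ¬ G.Adj b c := by
          intro h
          exact hy2nr (hreach_ab.trans
            (SimpleGraph.Adj.reachable (by exact h : (G.induce T).Adj ⟨b, hbT⟩ ⟨c, hy2T⟩)))
        have hav : ¬ G.Adj a v := fun h => hvy h.symm
        have hbcne : b ≠ c := by
          rintro rfl
          exact hy2nr hreach_ab
        exact hfree (p4_embedding a b v c hab hbv hvc hav hac hbc hbcne)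
end Seinsche
section CographColor
universe u

lemma cliqueNum_pos {V : Type u} [Fintype V] [Nonempty V] (G : SimpleGraph V) :
    1 ≤ G.cliqueNum := by
  obtain ⟨v⟩ := ‹Nonempty V›
  have : G.IsClique (↑({v} : Finset V)) := by simp
  have := card_le_cliqueNum' this
  simpa using this

lemma cograph_colorable :
    ∀ (n : ℕ) {V : Type u} [Fintype V] (G : SimpleGraph V),
      Fintype.card V ≤ n → InducedFree (SimpleGraph.pathGraph 4) G →
      G.Colorable G.cliqueNum := by
  intro n
  induction n with
  | zero =>
    intro V _ G hcard _
    haveI : IsEmpty V := Fintype.card_eq_zero_iff.mp (by omega)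
    exact SimpleGraph.Colorable.of_isEmpty (G := G) _
  | succ n ih =>
    intro V _ G hcard hfree
    classical
    rcases Nat.lt_or_ge (Fintype.card V) 2 with hlt | h2
    · rcases Nat.eq_zero_or_pos (Fintype.card V) with h0 | h1
      · haveI : IsEmpty V := Fintype.card_eq_zero_iff.mp h0
        exact SimpleGraph.Colorable.of_isEmpty (G := G) _
      · haveI : Nonempty V := Fintype.card_pos_iff.mp h1
        have hsub : Subsingleton V := by
          rw [← Fintype.card_le_one_iff_subsingleton]; omega
        have : G.Colorable 1 := ⟨SimpleGraph.Coloring.mk (fun _ => 0)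
          (fun {a b} hab => absurd (Subsingleton.elim a b) hab.ne)⟩
        exact this.mono (cliqueNum_pos G)
    · -- get a split
      haveI : Nonempty V := Fintype.card_pos_iff.mp (by omega)
      have hsplit : ∃ s : Set V, s.Nonempty ∧ sᶜ.Nonempty ∧
          ((∀ x ∈ s, ∀ y ∈ sᶜ, ¬ G.Adj x y) ∨ (∀ x ∈ s, ∀ y ∈ sᶜ, G.Adj x y)) := by
        by_cases hconn : G.Connected
        · obtain ⟨s, h1, h2', h3⟩ := join_split_of_connected (n+1) G hcard hfree hconn h2
          exact ⟨s, h1, h2', Or.inr h3⟩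
        · obtain ⟨s, h1, h2', h3⟩ := exists_anticomplete_split hconn
          exact ⟨s, h1, h2', Or.inl h3⟩
      obtain ⟨s, hsne, hscne, hcross⟩ := hsplit
      obtain ⟨x0, hx0⟩ := hsne
      obtain ⟨y0, hy0⟩ := hscne
      have hcards : Fintype.card ↥s ≤ n := by
        have : Fintype.card ↥s < Fintype.card V :=
          Fintype.card_subtype_lt (p := fun x => x ∈ s) (x := y0) hy0
        omega
      have hcardsc : Fintype.card ↥sᶜ ≤ n := by
        have : Fintype.card ↥sᶜ < Fintype.card V :=
          Fintype.card_subtype_lt (p := fun x => x ∈ sᶜ) (x := x0) (by simp [hx0])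
        omega
      have hfree1 : InducedFree (SimpleGraph.pathGraph 4) (G.induce s) :=
        inducedFree_of_embedding (SimpleGraph.Embedding.induce s) hfree
      have hfree2 : InducedFree (SimpleGraph.pathGraph 4) (G.induce sᶜ) :=
        inducedFree_of_embedding (SimpleGraph.Embedding.induce sᶜ) hfree
      have hcol1 := ih (G.induce s) hcards hfree1
      have hcol2 := ih (G.induce sᶜ) hcardsc hfree2
      obtain ⟨C1, hC1⟩ := ((G.induce s).colorable_iff_exists_bdd_nat_coloring _).mp hcol1
      obtain ⟨C2, hC2⟩ := ((G.induce sᶜ).colorable_iff_exists_bdd_nat_coloring _).mp hcol2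
      set w1 := (G.induce s).cliqueNum
      set w2 := (G.induce sᶜ).cliqueNum
      have hw1le : w1 ≤ G.cliqueNum :=
        cliqueNum_le_of_embedding (SimpleGraph.Embedding.induce s)
      have hw2le : w2 ≤ G.cliqueNum :=
        cliqueNum_le_of_embedding (SimpleGraph.Embedding.induce sᶜ)
      rcases hcross with hanti | hjoin
      · -- disjoint union: color with max
        refine ((G.colorable_iff_exists_bdd_nat_coloring _).mpr ?_)
        have hvalid : ∀ v w : V, G.Adj v w →
            (if h : v ∈ s then C1 ⟨v, h⟩ else C2 ⟨v, by simpa using h⟩)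
              ≠ (if h : w ∈ s then C1 ⟨w, h⟩ else C2 ⟨w, by simpa using h⟩) := by
          intro v w hadj
          by_cases hv : v ∈ s <;> by_cases hw : w ∈ s
          · rw [dif_pos hv, dif_pos hw]
            exact C1.valid (by exact hadj : (G.induce s).Adj ⟨v, hv⟩ ⟨w, hw⟩)
          · exact absurd hadj (hanti v hv w (by simpa using hw))
          · exact absurd hadj.symm (hanti w hw v (by simpa using hv))
          · rw [dif_neg hv, dif_neg hw]
            exact C2.valid (by
              exact hadj : (G.induce sᶜ).Adj ⟨v, by simpa using hv⟩ ⟨w, by simpa using hw⟩)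
        have hbdd : ∀ v : V,
            (if h : v ∈ s then C1 ⟨v, h⟩ else C2 ⟨v, by simpa using h⟩) < G.cliqueNum := by
          intro v
          by_cases hv : v ∈ s
          · rw [dif_pos hv]; exact lt_of_lt_of_le (hC1 _) hw1le
          · rw [dif_neg hv]; exact lt_of_lt_of_le (hC2 _) hw2le
        exact ⟨SimpleGraph.Coloring.mk _ (fun {v w} h => hvalid v w h), hbdd⟩
      · -- join: color with sum
        have hsum : w1 + w2 ≤ G.cliqueNum := by
          obtain ⟨K1, hK1⟩ := (G.induce s).exists_isNClique_cliqueNum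
          obtain ⟨K2, hK2⟩ := (G.induce sᶜ).exists_isNClique_cliqueNum
          have hK1' := isNClique_vals hK1
          have hK2' := isNClique_vals hK2
          have hd : Disjoint K1.vals K2.vals := by
            rw [Finset.disjoint_left]
            intro a ha hb
            rw [Finset.mem_vals] at ha hb
            obtain ⟨h1, _⟩ := ha
            obtain ⟨h2, _⟩ := hb
            exact h2 h1
          have hcliq : G.IsClique (↑(K1.vals ∪ K2.vals)) := by
            intro a ha b hb hne
            rw [Finset.coe_union, Set.mem_union] at ha hb
            rcases ha with ha | ha <;> rcases hb with hb | hb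
            · exact hK1'.isClique ha hb hne
            · exact hjoin a (by rcases Finset.mem_vals.mp ha with ⟨h, _⟩; exact h) b
                (by rcases Finset.mem_vals.mp hb with ⟨h, _⟩; exact h)
            · exact (hjoin b (by rcases Finset.mem_vals.mp hb with ⟨h, _⟩; exact h) a
                (by rcases Finset.mem_vals.mp ha with ⟨h, _⟩; exact h)).symm
            · exact hK2'.isClique ha hb hne
          have := card_le_cliqueNum' hcliq
          rwa [Finset.card_union_of_disjoint hd, hK1'.card_eq, hK2'.card_eq] at this
        refine ((G.colorable_iff_exists_bdd_nat_coloring _).mpr ?_)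
        have hvalid : ∀ v w : V, G.Adj v w →
            (if h : v ∈ s then C1 ⟨v, h⟩ else w1 + C2 ⟨v, by simpa using h⟩)
              ≠ (if h : w ∈ s then C1 ⟨w, h⟩ else w1 + C2 ⟨w, by simpa using h⟩) := by
          intro v w hadj
          by_cases hv : v ∈ s <;> by_cases hw : w ∈ s
          · rw [dif_pos hv, dif_pos hw]
            exact C1.valid (by exact hadj : (G.induce s).Adj ⟨v, hv⟩ ⟨w, hw⟩)
          · rw [dif_pos hv, dif_neg hw]
            have := hC1 (⟨v, hv⟩ : ↥s)
            omega
          · rw [dif_neg hv, dif_pos hw]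
            have := hC1 (⟨w, hw⟩ : ↥s)
            omega
          · rw [dif_neg hv, dif_neg hw]
            have : C2 ⟨v, by simpa using hv⟩ ≠ C2 ⟨w, by simpa using hw⟩ :=
              C2.valid (by
                exact hadj : (G.induce sᶜ).Adj ⟨v, by simpa using hv⟩ ⟨w, by simpa using hw⟩)
            omega
        have hbdd : ∀ v : V,
            (if h : v ∈ s then C1 ⟨v, h⟩ else w1 + C2 ⟨v, by simpa using h⟩) < G.cliqueNum := by
          intro v
          by_cases hv : v ∈ s
          · rw [dif_pos hv]
            exact lt_of_lt_of_le (lt_of_lt_of_le (hC1 _) (Nat.le_add_right _ _)) hsum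
          · rw [dif_neg hv]
            have := hC2 (⟨v, by simpa using hv⟩ : ↥sᶜ)
            omega
        exact ⟨SimpleGraph.Coloring.mk _ (fun {v w} h => hvalid v w h), hbdd⟩
end CographColor
section Subst
universe u
open scoped Classical

/-- Data for the block-substitution argument. -/
structure BlockSetup {V : Type u} (G : SimpleGraph V) (blk : V → Set V)
    (D : Set V → Finset V) : Prop where
  bmem : ∀ v, v ∈ blk v
  bconst : ∀ u v, u ∈ blk v → blk u = blk v
  bhom : ∀ v, IsHomogeneousSet G (blk v)
  bsub : ∀ v, ↑(D (blk v)) ⊆ blk v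
  bclq : ∀ v, G.IsClique ↑(D (blk v))
  bcard : ∀ v, (D (blk v)).card = (G.induce (blk v)).cliqueNum
  bcol : ∀ v, (G.induce (blk v)).Colorable ((G.induce (blk v)).cliqueNum)

/-- The vertex set of the substituted graph. -/
def blkW {V : Type u} (blk : V → Set V) (D : Set V → Finset V) : Set V :=
  {x | x ∈ D (blk x)}

namespace BlockSetup

variable {V : Type u} [Fintype V] {G : SimpleGraph V} {blk : V → Set V} {D : Set V → Finset V}

lemma mem_W_of_mem_D (hS : BlockSetup G blk D) {x v : V} (hx : x ∈ D (blk v)) :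
    x ∈ blkW blk D := by
  have hxb : x ∈ blk v := hS.bsub v hx
  have : blk x = blk v := hS.bconst x v hxb
  simpa [blkW, this] using hx

lemma W_inter_blk (hS : BlockSetup G blk D) (v : V) :
    blkW blk D ∩ blk v = ↑(D (blk v)) := by
  ext x
  constructor
  · rintro ⟨hxW, hxb⟩
    have : blk x = blk v := hS.bconst x v hxb
    simpa [blkW, ← this] using hxW
  · intro hx
    exact ⟨hS.mem_W_of_mem_D hx, hS.bsub v hx⟩

lemma disjoint_blk (hS : BlockSetup G blk D) {u v : V} (h : blk u ≠ blk v) {x : V}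
    (hxu : x ∈ blk u) (hxv : x ∈ blk v) : False := by
  have h1 := hS.bconst x u hxu
  have h2 := hS.bconst x v hxv
  exact h (h1 ▸ h2)

lemma cross_adj (hS : BlockSetup G blk D) {u v : V} (hne : blk u ≠ blk v) (hadj : G.Adj u v) :
    ∀ u' ∈ blk u, ∀ v' ∈ blk v, G.Adj u' v' := by
  have hunv : u ∉ blk v := fun h => hne (hS.bconst u v h)
  have hcomp : ∀ v' ∈ blk v, G.Adj u v' :=
    hS.bhom v u hunv ⟨v, hS.bmem v, hadj⟩
  intro u' hu' v' hv'
  have hvnu : v' ∉ blk u := fun h => hS.disjoint_blk hne h hv'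
  exact (hS.bhom u v' hvnu ⟨u, hS.bmem u, (hcomp v' hv').symm⟩ u' hu').symm

lemma cross_nonadj (hS : BlockSetup G blk D) {u v : V} (hne : blk u ≠ blk v)
    (hnadj : ¬ G.Adj u v) : ∀ u' ∈ blk u, ∀ v' ∈ blk v, ¬ G.Adj u' v' := by
  intro u' hu' v' hv' hadj
  have hne' : blk u' ≠ blk v' := by
    rw [hS.bconst u' u hu', hS.bconst v' v hv']; exact hne
  have hu'' : u ∈ blk u' := by rw [hS.bconst u' u hu']; exact hS.bmem u
  have hv'' : v ∈ blk v' := by rw [hS.bconst v' v hv']; exact hS.bmem v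
  exact hnadj (hS.cross_adj hne' hadj u hu'' v hv'')

open Finset in
lemma trace_card_le (hS : BlockSetup G blk D) {K : Finset V} (hK : G.IsClique ↑K) (v : V) :
    (K.filter (· ∈ blk v)).card ≤ (G.induce (blk v)).cliqueNum := by
  classical
  apply card_le_cliqueNum_induce
  · intro x hx
    simp only [Finset.coe_filter, Set.mem_setOf_eq] at hx
    exact hx.2
  · refine hK.subset ?_
    intro x hx
    simp only [Finset.coe_filter, Set.mem_setOf_eq] at hx
    exact hx.1

open Finset in
lemma biUnion_facts (hS : BlockSetup G blk D) {K : Finset V} (hK : G.IsClique ↑K) :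
    G.IsClique ↑(K.biUnion (fun v => D (blk v))) ∧
    ↑(K.biUnion (fun v => D (blk v))) ⊆ blkW blk D ∧
    K.card ≤ (K.biUnion (fun v => D (blk v))).card := by
  classical
  refine ⟨?_, ?_, ?_⟩
  · intro x hx y hy hne
    obtain ⟨u, hu, hxu⟩ := Finset.mem_biUnion.mp (Finset.mem_coe.mp hx)
    obtain ⟨v, hv, hyv⟩ := Finset.mem_biUnion.mp (Finset.mem_coe.mp hy)
    by_cases hbe : blk u = blk v
    · exact hS.bclq u hxu (by rw [hbe]; exact hyv) hne
    · have huv : u ≠ v := fun h => hbe (h ▸ rfl)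
      exact hS.cross_adj hbe (hK hu hv huv) x (hS.bsub u hxu) y (hS.bsub v hyv)
  · intro x hx
    obtain ⟨v, _, hxv⟩ := Finset.mem_biUnion.mp (Finset.mem_coe.mp hx)
    exact hS.mem_W_of_mem_D hxv
  · -- counting
    have himg : K.biUnion (fun v => D (blk v)) = (K.image blk).biUnion D := by
      rw [Finset.image_biUnion]
    have hdisjD : ∀ B1 ∈ K.image blk, ∀ B2 ∈ K.image blk, B1 ≠ B2 → Disjoint (D B1) (D B2) := by
      intro B1 hB1 B2 hB2 hne
      obtain ⟨u, _, rfl⟩ := Finset.mem_image.mp hB1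
      obtain ⟨v, _, rfl⟩ := Finset.mem_image.mp hB2
      rw [Finset.disjoint_left]
      intro a ha hb
      exact hS.disjoint_blk hne (hS.bsub u ha) (hS.bsub v hb)
    have hKdecomp : K.card = ∑ B ∈ K.image blk, (K.filter (· ∈ B)).card := by
      have : K = (K.image blk).biUnion (fun B => K.filter (· ∈ B)) := by
        ext x
        simp only [Finset.mem_biUnion, Finset.mem_image, Finset.mem_filter]
        constructor
        · intro hx
          exact ⟨blk x, ⟨x, hx, rfl⟩, hx, hS.bmem x⟩
        · rintro ⟨B, _, hx, _⟩
          exact hx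
      conv_lhs => rw [this]
      apply Finset.card_biUnion
      intro B1 hB1 B2 hB2 hne
      obtain ⟨u, _, rfl⟩ := Finset.mem_image.mp hB1
      obtain ⟨v, _, rfl⟩ := Finset.mem_image.mp hB2
      rw [Function.onFun, Finset.disjoint_left]
      intro a ha hb
      exact hS.disjoint_blk hne (Finset.mem_filter.mp ha).2 (Finset.mem_filter.mp hb).2
    rw [himg, Finset.card_biUnion hdisjD, hKdecomp]
    apply Finset.sum_le_sum
    intro B hB
    obtain ⟨u, _, rfl⟩ := Finset.mem_image.mp hB
    rw [hS.bcard u]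
    exact hS.trace_card_le hK u

lemma cliqueNum_eq (hS : BlockSetup G blk D) :
    (G.induce (blkW blk D)).cliqueNum = G.cliqueNum := by
  classical
  apply le_antisymm
  · exact cliqueNum_le_of_embedding (SimpleGraph.Embedding.induce _)
  · obtain ⟨K, hK⟩ := G.exists_isNClique_cliqueNum
    obtain ⟨hclq, hsub, hcard⟩ := hS.biUnion_facts hK.isClique
    calc G.cliqueNum = K.card := hK.card_eq.symm
      _ ≤ (K.biUnion (fun v => D (blk v))).card := hcard
      _ ≤ _ := card_le_cliqueNum_induce hsub hclq

open Finset in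
lemma absorb (hS : BlockSetup G blk D) {K : Finset ↥(blkW blk D)}
    (hK : (G.induce (blkW blk D)).IsNClique ((G.induce (blkW blk D)).cliqueNum) K)
    {s : V} (hs : s ∈ K.vals) : ↑(D (blk s)) ⊆ (↑K.vals : Set V) := by
  classical
  intro d hd
  by_contra hdK
  have hdW : d ∈ blkW blk D := hS.mem_W_of_mem_D hd
  obtain ⟨hsW, hsK⟩ := Finset.mem_vals.mp hs
  have hdb : d ∈ blk s := hS.bsub s hd
  have hadjall : ∀ q ∈ K, q ≠ ⟨d, hdW⟩ → (G.induce (blkW blk D)).Adj q ⟨d, hdW⟩ := by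
    rintro ⟨q, hqW⟩ hqK hqne
    have hqd : q ≠ d := fun h => hqne (Subtype.ext h)
    by_cases hqb : q ∈ blk s
    · -- q ∈ W ∩ blk s = D (blk s)
      have : q ∈ D (blk s) := by
        have := hS.W_inter_blk s
        rw [Set.ext_iff] at this
        exact Finset.mem_coe.mp ((this q).mp ⟨hqW, hqb⟩)
      exact hS.bclq s this hd hqd
    · -- q outside blk s, q adjacent to s (both in clique K)
      have hqs : q ≠ s := fun h => hqb (h ▸ hS.bmem s)
      have hadj : (G.induce (blkW blk D)).Adj ⟨q, hqW⟩ ⟨s, hsW⟩ :=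
        hK.isClique hqK hsK (fun h => hqs (congrArg Subtype.val h))
      have : G.Adj q s := hadj
      exact hS.bhom s q hqb ⟨s, hS.bmem s, this⟩ d hdb
  have hclq2 : (G.induce (blkW blk D)).IsClique ↑(insert (⟨d, hdW⟩ : ↥(blkW blk D)) K) := by
    rw [Finset.coe_insert]
    apply SimpleGraph.IsClique.insert hK.isClique
    intro q hq hne
    exact (hadjall q hq (fun h => hne h.symm)).symm
  have hcard2 : (insert (⟨d, hdW⟩ : ↥(blkW blk D)) K).card = (G.induce (blkW blk D)).cliqueNum + 1 := by
    rw [Finset.card_insert_of_notMem, hK.card_eq]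
    intro hmem
    exact hdK (Finset.mem_vals.mpr ⟨hdW, hmem⟩)
  have := card_le_cliqueNum' (G := G.induce (blkW blk D)) hclq2
  omega

end BlockSetup
end Subst
section Subst2
universe u
open scoped Classical

namespace BlockSetup

variable {V : Type u} [Fintype V] {G : SimpleGraph V} {blk : V → Set V} {D : Set V → Finset V}

lemma exists_blockColoring (hS : BlockSetup G blk D) :
    ∃ f : Set V → V → ℕ, ∀ v : V,
      (∀ x ∈ blk v, f (blk v) x < (G.induce (blk v)).cliqueNum) ∧
      (∀ x y, x ∈ blk v → y ∈ blk v → G.Adj x y → f (blk v) x ≠ f (blk v) y) := by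
  have key : ∀ B : Set V, ∃ g : V → ℕ, (∃ v, B = blk v) →
      (∀ x ∈ B, g x < (G.induce B).cliqueNum) ∧
      (∀ x y, x ∈ B → y ∈ B → G.Adj x y → g x ≠ g y) := by
    intro B
    by_cases h : ∃ v : V, B = blk v
    · obtain ⟨v, rfl⟩ := h
      obtain ⟨C, hC⟩ :=
        ((G.induce (blk v)).colorable_iff_exists_bdd_nat_coloring _).mp (hS.bcol v)
      refine ⟨fun x => if hx : x ∈ blk v then C ⟨x, hx⟩ else 0, fun _ => ⟨?_, ?_⟩⟩
      · intro x hx; beta_reduce; rw [dif_pos hx]; exact hC _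
      · intro x y hx hy hadj
        beta_reduce
        rw [dif_pos hx, dif_pos hy]
        exact C.valid (by exact hadj : (G.induce (blk v)).Adj ⟨x, hx⟩ ⟨y, hy⟩)
    · exact ⟨fun _ => 0, fun hv => absurd hv h⟩
  choose f hf using key
  exact ⟨f, fun v => hf (blk v) ⟨v, rfl⟩⟩

lemma exists_blockEnum (hS : BlockSetup G blk D) [Nonempty V] :
    ∃ e : Set V → ℕ → V, ∀ v : V,
      (∀ i, i < (G.induce (blk v)).cliqueNum → e (blk v) i ∈ D (blk v)) ∧
      (∀ i j, i < (G.induce (blk v)).cliqueNum → j < (G.induce (blk v)).cliqueNum →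
        e (blk v) i = e (blk v) j → i = j) := by
  have key : ∀ B : Set V, ∃ g : ℕ → V, (∃ v, B = blk v) →
      (∀ i, i < (G.induce B).cliqueNum → g i ∈ D B) ∧
      (∀ i j, i < (G.induce B).cliqueNum → j < (G.induce B).cliqueNum →
        g i = g j → i = j) := by
    intro B
    by_cases h : ∃ v, B = blk v
    · obtain ⟨v, rfl⟩ := h
      have hcard := hS.bcard v
      refine ⟨fun i => if hi : i < (D (blk v)).card
        then (((D (blk v)).equivFin.symm ⟨i, hi⟩ : ↥(D (blk v))) : V) else v,
        fun _ => ⟨?_, ?_⟩⟩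
      · intro i hi
        beta_reduce
        rw [dif_pos (hcard ▸ hi)]
        exact ((D (blk v)).equivFin.symm _).2
      · intro i j hi hj hij
        beta_reduce at hij
        rw [dif_pos (hcard ▸ hi), dif_pos (hcard ▸ hj)] at hij
        have := (D (blk v)).equivFin.symm.injective (Subtype.ext hij)
        simpa using congrArg Fin.val this
    · exact ⟨fun _ => Classical.arbitrary V, fun hv => absurd hv h⟩
  choose e he using key
  exact ⟨e, fun v => he (blk v) ⟨v, rfl⟩⟩

lemma D_nonempty (hS : BlockSetup G blk D) (v : V) : (D (blk v)).Nonempty := by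
  rw [← Finset.card_pos, hS.bcard v]
  haveI : Nonempty ↥(blk v) := ⟨⟨v, hS.bmem v⟩⟩
  exact cliqueNum_pos _

lemma exists_pick (hS : BlockSetup G blk D) [Nonempty V] :
    ∃ p : Set V → V, ∀ v : V, p (blk v) ∈ D (blk v) := by
  have key : ∀ B : Set V, ∃ x : V, (∃ v, B = blk v) → x ∈ D B := by
    intro B
    by_cases h : ∃ v, B = blk v
    · obtain ⟨v, rfl⟩ := h
      obtain ⟨x, hx⟩ := hS.D_nonempty v
      exact ⟨x, fun _ => hx⟩
    · exact ⟨Classical.arbitrary V, fun hv => absurd hv h⟩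
  choose p hp using key
  exact ⟨p, fun v => hp (blk v) ⟨v, rfl⟩⟩

lemma chromaticNumber_eq (hS : BlockSetup G blk D) :
    (G.induce (blkW blk D)).chromaticNumber = G.chromaticNumber := by
  classical
  refine le_antisymm (SimpleGraph.chromaticNumber_mono_of_hom
    (SimpleGraph.Embedding.induce _).toHom) ?_
  by_cases hne : Nonempty V
  swap
  · haveI : IsEmpty V := not_nonempty_iff.mp hne
    rw [G.chromaticNumber_eq_zero_of_isEmpty]
    exact zero_le
  haveI := hne
  set W := blkW blk D with hW
  set n := ENat.toNat (G.induce W).chromaticNumber with hn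
  have hcolW : (G.induce W).Colorable n := colorable_chromaticNumber_of_fintype _
  obtain ⟨C, hCbdd⟩ := ((G.induce W).colorable_iff_exists_bdd_nat_coloring n).mp hcolW
  obtain ⟨f, hf⟩ := hS.exists_blockColoring
  obtain ⟨e, he⟩ := hS.exists_blockEnum
  have hin : ∀ u : V, e (blk u) (f (blk u) u) ∈ D (blk u) := fun u =>
    (he u).1 _ ((hf u).1 u (hS.bmem u))
  have hinW : ∀ u : V, e (blk u) (f (blk u) u) ∈ W := fun u => hS.mem_W_of_mem_D (hin u)
  have key : ∀ u v : V, G.Adj u v →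
      (G.induce W).Adj ⟨e (blk u) (f (blk u) u), hinW u⟩ ⟨e (blk v) (f (blk v) v), hinW v⟩ := by
    intro u v huv
    show G.Adj (e (blk u) (f (blk u) u)) (e (blk v) (f (blk v) v))
    by_cases hb : blk u = blk v
    · rw [← hb]
      have hvmem : v ∈ blk u := hb ▸ hS.bmem v
      have hfu : f (blk u) u < (G.induce (blk u)).cliqueNum := (hf u).1 u (hS.bmem u)
      have hfv : f (blk u) v < (G.induce (blk u)).cliqueNum := (hf u).1 v hvmem
      have hfne : f (blk u) u ≠ f (blk u) v := (hf u).2 u v (hS.bmem u) hvmem huv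
      have hene : e (blk u) (f (blk u) u) ≠ e (blk u) (f (blk u) v) := by
        intro hcon
        exact hfne ((he u).2 _ _ hfu hfv hcon)
      exact hS.bclq u ((he u).1 _ hfu) ((he u).1 _ hfv) hene
    · exact hS.cross_adj hb huv _ (hS.bsub u (hin u)) _ (hS.bsub v (hin v))
  have hvalid : ∀ u v : V, G.Adj u v →
      C ⟨e (blk u) (f (blk u) u), hinW u⟩ ≠ C ⟨e (blk v) (f (blk v) v), hinW v⟩ :=
    fun u v huv => C.valid (key u v huv)
  have hGcol : G.Colorable n := by
    refine ((G.colorable_iff_exists_bdd_nat_coloring n).mpr ?_)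
    exact ⟨SimpleGraph.Coloring.mk (fun u => C ⟨e (blk u) (f (blk u) u), hinW u⟩)
      (fun {u v} h => hvalid u v h), fun u => hCbdd _⟩
  have htop : (G.induce W).chromaticNumber ≠ ⊤ :=
    SimpleGraph.chromaticNumber_ne_top_iff_exists.mpr ⟨_, (G.induce W).colorable_of_fintype⟩
  calc G.chromaticNumber ≤ (n : ℕ∞) := hGcol.chromaticNumber_le
    _ = (G.induce W).chromaticNumber := by rw [hn]; exact ENat.coe_toNat htop

open Finset in
lemma trace_card_eq (hS : BlockSetup G blk D) {Q : Finset V} (hQ : G.IsNClique G.cliqueNum Q)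
    {u : V} (hu : u ∈ Q) : (Q.filter (· ∈ blk u)).card = (G.induce (blk u)).cliqueNum := by
  classical
  refine le_antisymm (hS.trace_card_le hQ.isClique u) ?_
  set Q2 := Q.filter (· ∉ blk u) ∪ D (blk u) with hQ2
  have hclq : G.IsClique ↑Q2 := by
    intro x hx y hy hne
    rw [Finset.mem_coe, hQ2, Finset.mem_union] at hx hy
    have hcross : ∀ a b : V, a ∈ Q.filter (· ∉ blk u) → b ∈ D (blk u) → G.Adj a b := by
      intro a b ha hb
      obtain ⟨haQ, hab⟩ := Finset.mem_filter.mp ha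
      have hane : a ≠ u := fun h => hab (h ▸ hS.bmem u)
      have : G.Adj a u := hQ.isClique haQ hu hane
      exact hS.bhom u a hab ⟨u, hS.bmem u, this⟩ b (hS.bsub u hb)
    rcases hx with hx | hx <;> rcases hy with hy | hy
    · exact hQ.isClique (Finset.mem_filter.mp hx).1 (Finset.mem_filter.mp hy).1 hne
    · exact hcross x y hx hy
    · exact (hcross y x hy hx).symm
    · exact hS.bclq u hx hy hne
  have hdisj : Disjoint (Q.filter (· ∉ blk u)) (D (blk u)) := by
    rw [Finset.disjoint_left]
    intro a ha hb
    exact (Finset.mem_filter.mp ha).2 (hS.bsub u hb)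
  have hcard2 : Q2.card = (Q.filter (· ∉ blk u)).card + (D (blk u)).card :=
    Finset.card_union_of_disjoint hdisj
  have hsplit : (Q.filter (· ∈ blk u)).card + (Q.filter (· ∉ blk u)).card = Q.card :=
    Finset.card_filter_add_card_filter_not _
  have hle : Q2.card ≤ G.cliqueNum := card_le_cliqueNum' hclq
  have hQcard : Q.card = G.cliqueNum := hQ.card_eq
  have hDcard := hS.bcard u
  omega

end BlockSetup
end Subst2
section Subst3
universe u
open scoped Classical

namespace BlockSetup

variable {V : Type u} [Fintype V] {G : SimpleGraph V} {blk : V → Set V} {D : Set V → Finset V}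

lemma goodStableSet_iff (hS : BlockSetup G blk D) [Nonempty V] :
    HasGoodStableSet G ↔ HasGoodStableSet (G.induce (blkW blk D)) := by
  classical
  set W := blkW blk D with hWdef
  obtain ⟨p, hp⟩ := hS.exists_pick
  have hpblk : ∀ v : V, p (blk v) ∈ blk v := fun v => hS.bsub v (hp v)
  constructor
  · rintro ⟨S, hSstable, hSgood⟩
    refine ⟨{w : ↥W | (S ∩ blk (w : V)).Nonempty ∧ (w : V) = p (blk (w : V))}, ?_, ?_⟩
    · rintro w1 ⟨hs1, hp1⟩ w2 ⟨hs2, hp2⟩ hne hadj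
      have hadjG : G.Adj (w1 : V) (w2 : V) := hadj
      by_cases hb : blk (w1 : V) = blk (w2 : V)
      · exact hne (Subtype.ext (by rw [hp1, hp2, hb]))
      · obtain ⟨s1, hs1S, hs1b⟩ := hs1
        obtain ⟨s2, hs2S, hs2b⟩ := hs2
        have hbs : blk s1 ≠ blk s2 := by
          rw [hS.bconst s1 _ hs1b, hS.bconst s2 _ hs2b]; exact hb
        have hs12 : s1 ≠ s2 := fun h => hbs (h ▸ rfl)
        have hnadj : ¬ G.Adj s1 s2 := hSstable hs1S hs2S hs12
        refine hS.cross_nonadj hbs hnadj (w1 : V) ?_ (w2 : V) ?_ hadjG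
        · rw [hS.bconst s1 _ hs1b]; exact hS.bmem _
        · rw [hS.bconst s2 _ hs2b]; exact hS.bmem _
    · intro K hK
      have hKG : G.IsNClique G.cliqueNum K.vals := by
        have := isNClique_vals (G := G) (K := K) hK
        rwa [hS.cliqueNum_eq] at this
      obtain ⟨s, hsS, hsK⟩ := hSgood K.vals hKG
      have habs := hS.absorb hK hsK
      have hdK : p (blk s) ∈ K.vals := Finset.mem_coe.mp (habs (hp s))
      obtain ⟨hdW, hdmem⟩ := Finset.mem_vals.mp hdK
      refine ⟨⟨p (blk s), hdW⟩, ⟨?_, ?_⟩, hdmem⟩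
      · have : blk (p (blk s)) = blk s := hS.bconst _ _ (hpblk s)
        rw [this]
        exact ⟨s, hsS, hS.bmem s⟩
      · have : blk (p (blk s)) = blk s := hS.bconst _ _ (hpblk s)
        rw [this]
  · rintro ⟨Sstar, hSstable, hSgood⟩
    obtain ⟨f, hf⟩ := hS.exists_blockColoring
    refine ⟨{x : V | (∃ w : ↥W, w ∈ Sstar ∧ (w : V) ∈ blk x) ∧
      f (blk x) x = f (blk x) (p (blk x))}, ?_, ?_⟩
    · rintro x ⟨⟨wx, hwxS, hwxb⟩, hfx⟩ y ⟨⟨wy, hwyS, hwyb⟩, hfy⟩ hne hadj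
      by_cases hb : blk x = blk y
      · have hymem : y ∈ blk x := hb ▸ hS.bmem y
        have := (hf x).2 x y (hS.bmem x) hymem hadj
        rw [hfx] at this
        rw [← hb] at hfy
        exact this hfy.symm
      · have hwne : (wx : V) ≠ (wy : V) := fun h => hS.disjoint_blk hb hwxb (h ▸ hwyb)
        have hadj' : G.Adj (wx : V) (wy : V) := by
          have hbw : blk (wx : V) ≠ blk (wy : V) := by
            rw [hS.bconst _ _ hwxb, hS.bconst _ _ hwyb]; exact hb
          have hxw : x ∈ blk (wx : V) := by rw [hS.bconst _ _ hwxb]; exact hS.bmem x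
          have hyw : y ∈ blk (wy : V) := by rw [hS.bconst _ _ hwyb]; exact hS.bmem y
          by_contra hcon
          exact (hS.cross_nonadj hbw hcon x hxw y hyw) hadj
        exact hSstable hwxS hwyS (fun h => hwne (congrArg Subtype.val h)) hadj'
    · intro Q hQ
      -- build the corresponding maximum clique of the induced graph
      obtain ⟨hclq, hsub, hcard⟩ := hS.biUnion_facts hQ.isClique
      set Q2 := Q.biUnion (fun v => D (blk v)) with hQ2def
      have hcard' : Q2.card = G.cliqueNum := by
        have hle := card_le_cliqueNum' hclq
        have := hQ.card_eq
        omega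
      have hK : (G.induce W).IsNClique ((G.induce W).cliqueNum) (Q2.toSub W hsub) := by
        rw [hS.cliqueNum_eq]
        exact isNClique_toSub hsub ⟨hclq, hcard'⟩
      obtain ⟨w, hwS, hwK⟩ := hSgood _ hK
      have hwQ2 : (w : V) ∈ Q2 := Finset.mem_toSub.mp (by
        have : w = (⟨(w : V), w.2⟩ : ↥W) := Subtype.ext rfl
        rwa [this] at hwK)
      obtain ⟨u, huQ, hwD⟩ := Finset.mem_biUnion.mp hwQ2
      -- the trace of Q on blk u is a maximum clique of the block
      have htrace := hS.trace_card_eq hQ huQ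
      set Qu := Q.filter (· ∈ blk u) with hQudef
      have hQuclq : G.IsClique ↑Qu := hQ.isClique.subset (by
        intro z hz
        exact Finset.mem_coe.mpr (Finset.mem_filter.mp (Finset.mem_coe.mp hz)).1)
      -- pigeonhole: some x in Qu has the color of p (blk u)
      have hinj : Set.InjOn (f (blk u)) ↑Qu := by
        intro x hx y hy hxy
        by_contra hne
        have hxb := (Finset.mem_filter.mp (Finset.mem_coe.mp hx)).2
        have hyb := (Finset.mem_filter.mp (Finset.mem_coe.mp hy)).2
        exact (hf u).2 x y hxb hyb
          (hQuclq hx hy hne) hxy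
      have himg : Qu.image (f (blk u)) = Finset.range ((G.induce (blk u)).cliqueNum) := by
        apply Finset.eq_of_subset_of_card_le
        · intro c hc
          obtain ⟨x, hx, rfl⟩ := Finset.mem_image.mp hc
          rw [Finset.mem_range]
          exact (hf u).1 x (Finset.mem_filter.mp hx).2
        · rw [Finset.card_range, Finset.card_image_of_injOn hinj, htrace]
      have hpcol : f (blk u) (p (blk u)) ∈ Qu.image (f (blk u)) := by
        rw [himg, Finset.mem_range]
        exact (hf u).1 _ (hpblk u)
      obtain ⟨x, hxQu, hxcol⟩ := Finset.mem_image.mp hpcol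
      obtain ⟨hxQ, hxb⟩ := Finset.mem_filter.mp hxQu
      have hbx : blk x = blk u := hS.bconst x u hxb
      refine ⟨x, ⟨⟨w, hwS, ?_⟩, ?_⟩, hxQ⟩
      · rw [hbx]
        exact hS.bsub u hwD
      · rw [hbx]
        exact hxcol

end BlockSetup
end Subst3
section Blocks
universe u
open scoped Classical

variable {V : Type u}

/-- The block of a vertex: its part `A i` for `i ≤ 4`, a singleton inside `A 5`,
and the vertex set of its component of `G[A 6]` for vertices of `A 6`. -/
noncomputable def blkOf (G : SimpleGraph V) (A : Fin 7 → Set V) (v : V) : Set V :=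
  if v ∈ A 0 then A 0 else if v ∈ A 1 then A 1 else if v ∈ A 2 then A 2
  else if v ∈ A 3 then A 3 else if v ∈ A 4 then A 4 else if v ∈ A 5 then {v}
  else if h : v ∈ A 6 then
    Subtype.val '' ((G.induce (A 6)).connectedComponentMk ⟨v, h⟩).supp
  else ∅

namespace IsHPartition

variable {G : SimpleGraph V} {A : Fin 7 → Set V} (hA : IsHPartition G A)

lemma mem_part (hA : IsHPartition G A) (v : V) : ∃ i, v ∈ A i := by
  have := hA.covers
  rw [Set.eq_univ_iff_forall] at this
  simpa using this v

lemma not_mem (hA : IsHPartition G A) {v : V} {i j : Fin 7} (hne : i ≠ j)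
    (h : v ∈ A i) : v ∉ A j :=
  fun hj => Set.disjoint_left.mp (hA.disjoint i j hne) h hj

lemma blk0 (hA : IsHPartition G A) {v : V} (h : v ∈ A 0) : blkOf G A v = A 0 := by
  rw [blkOf, if_pos h]

lemma blk1 (hA : IsHPartition G A) {v : V} (h : v ∈ A 1) : blkOf G A v = A 1 := by
  rw [blkOf, if_neg (hA.not_mem (by decide) h), if_pos h]

lemma blk2 (hA : IsHPartition G A) {v : V} (h : v ∈ A 2) : blkOf G A v = A 2 := by
  rw [blkOf, if_neg (hA.not_mem (by decide) h), if_neg (hA.not_mem (by decide) h), if_pos h]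

lemma blk3 (hA : IsHPartition G A) {v : V} (h : v ∈ A 3) : blkOf G A v = A 3 := by
  rw [blkOf, if_neg (hA.not_mem (by decide) h), if_neg (hA.not_mem (by decide) h),
    if_neg (hA.not_mem (by decide) h), if_pos h]

lemma blk4 (hA : IsHPartition G A) {v : V} (h : v ∈ A 4) : blkOf G A v = A 4 := by
  rw [blkOf, if_neg (hA.not_mem (by decide) h), if_neg (hA.not_mem (by decide) h),
    if_neg (hA.not_mem (by decide) h), if_neg (hA.not_mem (by decide) h), if_pos h]

lemma blk5 (hA : IsHPartition G A) {v : V} (h : v ∈ A 5) : blkOf G A v = {v} := by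
  rw [blkOf, if_neg (hA.not_mem (by decide) h), if_neg (hA.not_mem (by decide) h),
    if_neg (hA.not_mem (by decide) h), if_neg (hA.not_mem (by decide) h),
    if_neg (hA.not_mem (by decide) h), if_pos h]

lemma blk6 (hA : IsHPartition G A) {v : V} (h : v ∈ A 6) :
    blkOf G A v = Subtype.val '' ((G.induce (A 6)).connectedComponentMk ⟨v, h⟩).supp := by
  rw [blkOf, if_neg (hA.not_mem (by decide) h), if_neg (hA.not_mem (by decide) h),
    if_neg (hA.not_mem (by decide) h), if_neg (hA.not_mem (by decide) h),
    if_neg (hA.not_mem (by decide) h), if_neg (hA.not_mem (by decide) h), dif_pos h]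

lemma blk6_subset (hA : IsHPartition G A) {v : V} (h : v ∈ A 6) : blkOf G A v ⊆ A 6 := by
  rw [hA.blk6 h]
  rintro x ⟨x', _, rfl⟩
  exact x'.2

lemma blk_subset (hA : IsHPartition G A) {v : V} {i : Fin 7} (h : v ∈ A i) :
    blkOf G A v ⊆ A i := by
  fin_cases i
  · rw [hA.blk0 h]; exact subset_rfl
  · rw [hA.blk1 h]; exact subset_rfl
  · rw [hA.blk2 h]; exact subset_rfl
  · rw [hA.blk3 h]; exact subset_rfl
  · rw [hA.blk4 h]; exact subset_rfl
  · rw [hA.blk5 h]; intro x hx; rw [Set.mem_singleton_iff] at hx; exact hx ▸ h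
  · exact hA.blk6_subset h

lemma blk_mem (hA : IsHPartition G A) (v : V) : v ∈ blkOf G A v := by
  obtain ⟨i, hi⟩ := hA.mem_part v
  fin_cases i
  · rw [hA.blk0 hi]; exact hi
  · rw [hA.blk1 hi]; exact hi
  · rw [hA.blk2 hi]; exact hi
  · rw [hA.blk3 hi]; exact hi
  · rw [hA.blk4 hi]; exact hi
  · rw [hA.blk5 hi]; rfl
  · rw [hA.blk6 hi]; exact ⟨⟨v, hi⟩, rfl, rfl⟩

lemma blk_const (hA : IsHPartition G A) (u v : V) (h : u ∈ blkOf G A v) :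
    blkOf G A u = blkOf G A v := by
  obtain ⟨i, hi⟩ := hA.mem_part v
  fin_cases i
  · rw [hA.blk0 hi] at h ⊢; exact hA.blk0 h
  · rw [hA.blk1 hi] at h ⊢; exact hA.blk1 h
  · rw [hA.blk2 hi] at h ⊢; exact hA.blk2 h
  · rw [hA.blk3 hi] at h ⊢; exact hA.blk3 h
  · rw [hA.blk4 hi] at h ⊢; exact hA.blk4 h
  · rw [hA.blk5 hi] at h
    rw [Set.mem_singleton_iff] at h
    subst h; rfl
  · rw [hA.blk6 hi] at h
    obtain ⟨u', hu', rfl⟩ := h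
    rw [hA.blk6 u'.2, hA.blk6 hi]
    congr 1
    rw [SimpleGraph.ConnectedComponent.mem_supp_iff] at hu'
    rw [← hu']

end IsHPartition
end Blocks
section Blocks2
universe u
open scoped Classical

variable {V : Type u}

lemma CompleteTo.symm' {G : SimpleGraph V} {X Y : Set V} (h : CompleteTo G X Y) :
    CompleteTo G Y X := fun y hy x hx => (h x hx y hy).symm

lemma AnticompleteTo.symm' {G : SimpleGraph V} {X Y : Set V} (h : AnticompleteTo G X Y) :
    AnticompleteTo G Y X := fun y hy x hx hadj => h x hx y hy hadj.symm

namespace IsHPartition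

variable {G : SimpleGraph V} {A : Fin 7 → Set V}

lemma pairRel (hA : IsHPartition G A) (i j : Fin 7) (hne : i ≠ j)
    (hlow : i.val ≤ 4 ∨ j.val ≤ 4) :
    CompleteTo G (A i) (A j) ∨ AnticompleteTo G (A i) (A j) := by
  fin_cases i <;> fin_cases j <;>
    first
      | exact absurd rfl hne
      | exact absurd hlow (by decide)
      | exact Or.inl hA.c12 | exact Or.inl hA.c15 | exact Or.inl hA.c16
      | exact Or.inl hA.c32 | exact Or.inl hA.c34 | exact Or.inl hA.c36
      | exact Or.inl hA.c45 | exact Or.inl hA.c46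
      | exact Or.inl hA.c12.symm' | exact Or.inl hA.c15.symm' | exact Or.inl hA.c16.symm'
      | exact Or.inl hA.c32.symm' | exact Or.inl hA.c34.symm' | exact Or.inl hA.c36.symm'
      | exact Or.inl hA.c45.symm' | exact Or.inl hA.c46.symm'
      | exact Or.inr hA.a13 | exact Or.inr hA.a14 | exact Or.inr hA.a17
      | exact Or.inr hA.a35 | exact Or.inr hA.a37 | exact Or.inr hA.a42
      | exact Or.inr hA.a47 | exact Or.inr hA.a25 | exact Or.inr hA.a26
      | exact Or.inr hA.a27 | exact Or.inr hA.a56 | exact Or.inr hA.a57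
      | exact Or.inr hA.a13.symm' | exact Or.inr hA.a14.symm' | exact Or.inr hA.a17.symm'
      | exact Or.inr hA.a35.symm' | exact Or.inr hA.a37.symm' | exact Or.inr hA.a42.symm'
      | exact Or.inr hA.a47.symm' | exact Or.inr hA.a25.symm' | exact Or.inr hA.a26.symm'
      | exact Or.inr hA.a27.symm' | exact Or.inr hA.a56.symm' | exact Or.inr hA.a57.symm'

lemma hom_low (hA : IsHPartition G A) (i : Fin 7) (hi : i.val ≤ 4) :
    IsHomogeneousSet G (A i) := by
  intro u hu hex y hy
  obtain ⟨x, hx, hadj⟩ := hex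
  obtain ⟨j, hj⟩ := hA.mem_part u
  have hne : j ≠ i := fun h => hu (h ▸ hj)
  rcases hA.pairRel j i hne (Or.inr hi) with hc | ha
  · exact hc u hj y hy
  · exact absurd hadj (ha u hj x hx)

lemma blk_hom (hA : IsHPartition G A) (v : V) : IsHomogeneousSet G (blkOf G A v) := by
  obtain ⟨i, hi⟩ := hA.mem_part v
  fin_cases i
  · rw [hA.blk0 hi]; exact hA.hom_low 0 (by decide)
  · rw [hA.blk1 hi]; exact hA.hom_low 1 (by decide)
  · rw [hA.blk2 hi]; exact hA.hom_low 2 (by decide)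
  · rw [hA.blk3 hi]; exact hA.hom_low 3 (by decide)
  · rw [hA.blk4 hi]; exact hA.hom_low 4 (by decide)
  · rw [hA.blk5 hi]
    intro u hu hex y hy
    obtain ⟨x, hx, hadj⟩ := hex
    rw [Set.mem_singleton_iff] at hx hy
    rw [hy, ← hx]
    exact hadj
  · rw [hA.blk6 hi]
    exact hA.hom _

lemma blk_p4free (hA : IsHPartition G A) (v : V) :
    InducedFree (SimpleGraph.pathGraph 4) (G.induce (blkOf G A v)) := by
  obtain ⟨i, hi⟩ := hA.mem_part v
  fin_cases i
  · rw [hA.blk0 hi]; exact hA.p4free 0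
  · rw [hA.blk1 hi]; exact hA.p4free 1
  · rw [hA.blk2 hi]; exact hA.p4free 2
  · rw [hA.blk3 hi]; exact hA.p4free 3
  · rw [hA.blk4 hi]; exact hA.p4free 4
  · rw [hA.blk5 hi]
    rintro ⟨f⟩
    have h01 : f 0 = f 1 := by
      apply Subtype.ext
      have h0 := (f 0).2
      have h1 := (f 1).2
      rw [Set.mem_singleton_iff] at h0 h1
      rw [h0, h1]
    have := f.injective h01
    simp at this
  · exact inducedFree_of_embedding (induceSubEmb G (hA.blk6_subset hi)) (hA.p4free 6)

end IsHPartition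

/-- Selection of a maximum clique from each induced subgraph. -/
noncomputable def Dsel [Fintype V] (G : SimpleGraph V) : Set V → Finset V :=
  fun B => Finset.vals ((G.induce B).exists_isNClique_cliqueNum).choose

lemma Dsel_spec [Fintype V] (G : SimpleGraph V) (B : Set V) :
    G.IsNClique ((G.induce B).cliqueNum) (Dsel G B) ∧ ↑(Dsel G B) ⊆ B := by
  have h := ((G.induce B).exists_isNClique_cliqueNum).choose_spec
  refine ⟨isNClique_vals h, ?_⟩
  intro x hx
  obtain ⟨hxB, _⟩ := Finset.mem_vals.mp (Finset.mem_coe.mp hx)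
  exact hxB

lemma IsHPartition.toBlockSetup [Fintype V] {G : SimpleGraph V} {A : Fin 7 → Set V}
    (hA : IsHPartition G A) : BlockSetup G (blkOf G A) (Dsel G) where
  bmem := hA.blk_mem
  bconst := hA.blk_const
  bhom := hA.blk_hom
  bsub := fun v => (Dsel_spec G (blkOf G A v)).2
  bclq := fun v => (Dsel_spec G (blkOf G A v)).1.isClique
  bcard := fun v => (Dsel_spec G (blkOf G A v)).1.card_eq
  bcol := fun v => cograph_colorable (Fintype.card ↥(blkOf G A v)) _ le_rfl (hA.blk_p4free v)

end Blocks2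
section Star
universe u
open scoped Classical

variable {V : Type u}

/-- Embedding of a doubly-induced subgraph into an induced subgraph of the base graph. -/
def induceInduceEmb (G : SimpleGraph V) (s : Set V) (t : Set ↥s) (u : Set V)
    (h : ∀ x : ↥s, x ∈ t → (x : V) ∈ u) : (G.induce s).induce t ↪g G.induce u where
  toFun x := ⟨x.1.1, h x.1 x.2⟩
  inj' := by
    rintro ⟨⟨a, ha⟩, ha'⟩ ⟨⟨b, hb⟩, hb'⟩ hab
    have : a = b := congrArg Subtype.val hab
    subst this
    rfl
  map_rel_iff' := Iff.rfl

/-- The vertex set of the substituted graph for an `H`-partition. -/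
noncomputable def Wset [Fintype V] (G : SimpleGraph V) (A : Fin 7 → Set V) : Set V :=
  blkW (blkOf G A) (Dsel G)

/-- The parts of the induced partition on `Wset`. -/
noncomputable def Apart [Fintype V] (G : SimpleGraph V) (A : Fin 7 → Set V) (i : Fin 7) :
    Set ↥(Wset G A) := {w | (w : V) ∈ A i}

namespace IsHPartition

variable [Fintype V] {G : SimpleGraph V} {A : Fin 7 → Set V}

lemma wA5 (hA : IsHPartition G A) {v : V} (h : v ∈ A 5) : v ∈ Wset G A := by
  obtain ⟨x, hx⟩ := hA.toBlockSetup.D_nonempty v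
  have hxv : x = v := by
    have := hA.toBlockSetup.bsub v hx
    rw [hA.blk5 h] at this
    simpa using this
  show v ∈ Dsel G (blkOf G A v)
  exact hxv ▸ hx

lemma apart_nonempty (hA : IsHPartition G A) (i : Fin 7) : (Apart G A i).Nonempty := by
  obtain ⟨v, hv⟩ := hA.nonempty i
  obtain ⟨d, hd⟩ := hA.toBlockSetup.D_nonempty v
  have hdb : d ∈ blkOf G A v := hA.toBlockSetup.bsub v hd
  have hdW : d ∈ Wset G A := hA.toBlockSetup.mem_W_of_mem_D hd
  exact ⟨⟨d, hdW⟩, hA.blk_subset hv hdb⟩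

lemma blk_eq_of_adj6 (hA : IsHPartition G A) {a b : V} (ha : a ∈ A 6) (hb : b ∈ A 6)
    (hadj : G.Adj a b) : blkOf G A a = blkOf G A b := by
  rw [hA.blk6 ha, hA.blk6 hb]
  have : (G.induce (A 6)).connectedComponentMk ⟨a, ha⟩
      = (G.induce (A 6)).connectedComponentMk ⟨b, hb⟩ :=
    SimpleGraph.ConnectedComponent.connectedComponentMk_eq_of_adj
      (by exact hadj : (G.induce (A 6)).Adj ⟨a, ha⟩ ⟨b, hb⟩)
  rw [this]

lemma reach_blk6 (hA : IsHPartition G A) {a b : ↥(Apart G A 6)}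
    (h : ((G.induce (Wset G A)).induce (Apart G A 6)).Reachable a b) :
    blkOf G A ((a : ↥(Wset G A)) : V) = blkOf G A ((b : ↥(Wset G A)) : V) := by
  obtain ⟨p⟩ := h
  induction p with
  | nil => rfl
  | cons hadj q ih =>
    rename_i u x w
    have h1 : G.Adj ((u : ↥(Wset G A)) : V) ((x : ↥(Wset G A)) : V) := hadj
    exact (hA.blk_eq_of_adj6 u.2 x.2 h1).trans ih

lemma comp_supp_eq (hA : IsHPartition G A) (w0 : ↥(Apart G A 6)) :
    Subtype.val '' (((G.induce (Wset G A)).induce (Apart G A 6)).connectedComponentMk w0).supp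
      = {w : ↥(Wset G A) | (w : V) ∈ Dsel G (blkOf G A ((w0 : ↥(Wset G A)) : V))} := by
  set v0 : V := ((w0 : ↥(Wset G A)) : V) with hv0
  ext w
  constructor
  · rintro ⟨w', hw', rfl⟩
    rw [SimpleGraph.ConnectedComponent.mem_supp_iff] at hw'
    have hreach := SimpleGraph.ConnectedComponent.exact hw'
    have hblk := hA.reach_blk6 hreach
    have hmem : ((w' : ↥(Wset G A)) : V) ∈ blkW (blkOf G A) (Dsel G) ∩ blkOf G A v0 :=
      ⟨(w' : ↥(Wset G A)).2, by rw [← hblk]; exact hA.blk_mem _⟩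
    rw [hA.toBlockSetup.W_inter_blk] at hmem
    exact hmem
  · intro hw
    have hwD : (w : V) ∈ Dsel G (blkOf G A v0) := hw
    have hwblk : (w : V) ∈ blkOf G A v0 := hA.toBlockSetup.bsub v0 hwD
    have hwA6 : (w : V) ∈ A 6 := hA.blk6_subset w0.2 hwblk
    refine ⟨⟨w, hwA6⟩, ?_, rfl⟩
    rw [SimpleGraph.ConnectedComponent.mem_supp_iff]
    rcases eq_or_ne (w : V) v0 with heq | hne
    · have : (⟨w, hwA6⟩ : ↥(Apart G A 6)) = w0 :=
        Subtype.ext (Subtype.ext heq)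
      rw [this]
    · have hv0D : v0 ∈ Dsel G (blkOf G A v0) := by
        have := (w0 : ↥(Wset G A)).2
        exact this
      have hadj : G.Adj (w : V) v0 := hA.toBlockSetup.bclq v0 hwD hv0D hne
      apply SimpleGraph.ConnectedComponent.connectedComponentMk_eq_of_adj
      exact (by exact hadj :
        ((G.induce (Wset G A)).induce (Apart G A 6)).Adj ⟨w, hwA6⟩ w0)

lemma comp_clique (hA : IsHPartition G A)
    (C : ((G.induce (Wset G A)).induce (Apart G A 6)).ConnectedComponent) :
    (G.induce (Wset G A)).IsClique (Subtype.val '' C.supp) := by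
  obtain ⟨w0, rfl⟩ := C.exists_rep
  have hq : (Quot.mk _ w0 : ((G.induce (Wset G A)).induce (Apart G A 6)).ConnectedComponent)
      = ((G.induce (Wset G A)).induce (Apart G A 6)).connectedComponentMk w0 := rfl
  rw [hq, hA.comp_supp_eq w0]
  intro x hx y hy hne
  have hxD : (x : V) ∈ Dsel G (blkOf G A _) := hx
  have hyD : (y : V) ∈ Dsel G (blkOf G A _) := hy
  have hvne : (x : V) ≠ (y : V) := fun h => hne (Subtype.ext h)
  exact hA.toBlockSetup.bclq _ hxD hyD hvne

lemma comp_hom (hA : IsHPartition G A)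
    (C : ((G.induce (Wset G A)).induce (Apart G A 6)).ConnectedComponent) :
    IsHomogeneousSet (G.induce (Wset G A)) (Subtype.val '' C.supp) := by
  obtain ⟨w0, rfl⟩ := C.exists_rep
  have hq : (Quot.mk _ w0 : ((G.induce (Wset G A)).induce (Apart G A 6)).ConnectedComponent)
      = ((G.induce (Wset G A)).induce (Apart G A 6)).connectedComponentMk w0 := rfl
  rw [hq, hA.comp_supp_eq w0]
  set v0 : V := ((w0 : ↥(Wset G A)) : V) with hv0
  intro x hx hex y hy
  obtain ⟨z, hz, hadj⟩ := hex
  have hzD : (z : V) ∈ Dsel G (blkOf G A v0) := hz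
  have hyD : (y : V) ∈ Dsel G (blkOf G A v0) := hy
  have hxnb : (x : V) ∉ blkOf G A v0 := by
    intro hmem
    apply hx
    have : (x : V) ∈ blkW (blkOf G A) (Dsel G) ∩ blkOf G A v0 := ⟨x.2, hmem⟩
    rw [hA.toBlockSetup.W_inter_blk] at this
    exact this
  have hadjG : G.Adj (x : V) (z : V) := hadj
  have hblkz : blkOf G A v0 = blkOf G A (z : V) :=
    (hA.toBlockSetup.bconst (z:V) v0 (hA.toBlockSetup.bsub v0 hzD)).symm
  have : ∀ t ∈ blkOf G A (z : V), G.Adj (x : V) t := by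
    apply hA.toBlockSetup.bhom (z : V) (x : V) (hblkz ▸ hxnb)
    exact ⟨(z : V), hA.blk_mem _, hadjG⟩
  exact (by exact this (y : V) (hblkz ▸ hA.toBlockSetup.bsub v0 hyD) :
    (G.induce (Wset G A)).Adj x y)

lemma apart_clique (hA : IsHPartition G A) (i : Fin 7) (hi : i.val < 5) :
    (G.induce (Wset G A)).IsClique (Apart G A i) := by
  intro x hx y hy hne
  have hvne : (x : V) ≠ (y : V) := fun h => hne (Subtype.ext h)
  have hxA : (x : V) ∈ A i := hx
  have hyA : (y : V) ∈ A i := hy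
  have hblkx : blkOf G A (x : V) = A i := by
    fin_cases i
    · exact hA.blk0 hxA
    · exact hA.blk1 hxA
    · exact hA.blk2 hxA
    · exact hA.blk3 hxA
    · exact hA.blk4 hxA
    · exact absurd hi (by decide)
    · exact absurd hi (by decide)
  have hblky : blkOf G A (y : V) = A i := by
    fin_cases i
    · exact hA.blk0 hyA
    · exact hA.blk1 hyA
    · exact hA.blk2 hyA
    · exact hA.blk3 hyA
    · exact hA.blk4 hyA
    · exact absurd hi (by decide)
    · exact absurd hi (by decide)
  have hxD : (x : V) ∈ Dsel G (blkOf G A (x : V)) := x.2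
  have hyD : (y : V) ∈ Dsel G (blkOf G A (x : V)) := by
    have : (y : V) ∈ Dsel G (blkOf G A (y : V)) := y.2
    rwa [hblky, ← hblkx] at this
  exact hA.toBlockSetup.bclq (x : V) hxD hyD hvne

end IsHPartition
end Star
section Star2
universe u
open scoped Classical

variable {V : Type u} [Fintype V] {G : SimpleGraph V} {A : Fin 7 → Set V}

namespace IsHPartition

lemma star_connected (hA : IsHPartition G A) (hconn : G.Connected) :
    (G.induce (Wset G A)).Connected := by
  obtain ⟨v1, hv1⟩ := hA.nonempty 0
  obtain ⟨d1, hd1⟩ := hA.toBlockSetup.D_nonempty v1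
  rw [hA.blk0 hv1] at hd1
  have hd1A : d1 ∈ A 0 := (Dsel_spec G (A 0)).2 hd1
  have hd1W : d1 ∈ Wset G A := by
    show d1 ∈ Dsel G (blkOf G A d1)
    rwa [hA.blk0 hd1A]
  obtain ⟨v2, hv2⟩ := hA.nonempty 1
  obtain ⟨d2, hd2⟩ := hA.toBlockSetup.D_nonempty v2
  rw [hA.blk1 hv2] at hd2
  have hd2A : d2 ∈ A 1 := (Dsel_spec G (A 1)).2 hd2
  obtain ⟨v5, hv5⟩ := hA.nonempty 4
  obtain ⟨d5, hd5⟩ := hA.toBlockSetup.D_nonempty v5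
  rw [hA.blk4 hv5] at hd5
  have hd5A : d5 ∈ A 4 := (Dsel_spec G (A 4)).2 hd5
  have hd2W : d2 ∈ Wset G A := by
    show d2 ∈ Dsel G (blkOf G A d2); rwa [hA.blk1 hd2A]
  have hd5W : d5 ∈ Wset G A := by
    show d5 ∈ Dsel G (blkOf G A d5); rwa [hA.blk4 hd5A]
  set b1 : ↥(Wset G A) := ⟨d1, hd1W⟩ with hb1
  have key : ∀ w : ↥(Wset G A), (G.induce (Wset G A)).Reachable b1 w := by
    intro w
    obtain ⟨i, hi⟩ := hA.mem_part (w : V)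
    fin_cases i
    · -- A 0
      have hwD : (w : V) ∈ Dsel G (A 0) := by
        have h2 : (w : V) ∈ Dsel G (blkOf G A (w : V)) := w.2
        rwa [show blkOf G A (w : V) = A 0 from hA.blk0 hi] at h2
      rcases eq_or_ne d1 (w : V) with heq | hne
      · exact (show b1 = w from Subtype.ext heq) ▸ SimpleGraph.Reachable.refl _
      · exact (show (G.induce (Wset G A)).Adj b1 w from
          (Dsel_spec G (A 0)).1.isClique hd1 hwD hne).reachable
    · exact (show (G.induce (Wset G A)).Adj b1 w from hA.c12 d1 hd1A _ hi).reachable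
    · refine SimpleGraph.Reachable.trans
        ((show (G.induce (Wset G A)).Adj b1 ⟨d2, hd2W⟩ from
          hA.c12 d1 hd1A d2 hd2A).reachable) ?_
      exact (show (G.induce (Wset G A)).Adj ⟨d2, hd2W⟩ w from
        (hA.c32 _ hi d2 hd2A).symm).reachable
    · refine SimpleGraph.Reachable.trans
        ((show (G.induce (Wset G A)).Adj b1 ⟨d5, hd5W⟩ from
          hA.c15 d1 hd1A d5 hd5A).reachable) ?_
      exact (show (G.induce (Wset G A)).Adj ⟨d5, hd5W⟩ w from
        (hA.c45 _ hi d5 hd5A).symm).reachable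
    · exact (show (G.induce (Wset G A)).Adj b1 w from hA.c15 d1 hd1A _ hi).reachable
    · exact (show (G.induce (Wset G A)).Adj b1 w from hA.c16 d1 hd1A _ hi).reachable
    · -- A 6 : go through a neighbour in A 5
      have hv1nb : v1 ∉ blkOf G A (w : V) := fun h =>
        hA.not_mem (show (0 : Fin 7) ≠ 6 by decide) hv1 (hA.blk6_subset hi h)
      obtain ⟨x, hx, y, hy, hadj⟩ := exists_cross_adj hconn (hA.blk_mem (w : V)) hv1nb
      have hx6 : x ∈ A 6 := hA.blk6_subset hi hx
      obtain ⟨j, hj⟩ := hA.mem_part y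
      have hy5 : y ∈ A 5 := by
        fin_cases j
        · exact absurd hadj.symm (hA.a17 y hj x hx6)
        · exact absurd hadj.symm (hA.a27 y hj x hx6)
        · exact absurd hadj.symm (hA.a37 y hj x hx6)
        · exact absurd hadj.symm (hA.a47 y hj x hx6)
        · exact absurd hadj.symm (hA.a57 y hj x hx6)
        · exact hj
        · exfalso
          have hblk : blkOf G A y = blkOf G A x := hA.blk_eq_of_adj6 hj hx6 hadj.symm
          apply hy
          have : blkOf G A x = blkOf G A (w : V) := hA.blk_const x _ hx
          rw [← this, ← hblk]
          exact hA.blk_mem y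
      have hyW : y ∈ Wset G A := hA.wA5 hy5
      have hyw : G.Adj y (w : V) := by
        have := hA.toBlockSetup.bhom (w : V) y hy ⟨x, hx, hadj.symm⟩
        exact this (w : V) (hA.blk_mem _)
      refine SimpleGraph.Reachable.trans
        ((show (G.induce (Wset G A)).Adj b1 ⟨y, hyW⟩ from
          hA.c16 d1 hd1A y hy5).reachable) ?_
      exact (show (G.induce (Wset G A)).Adj ⟨y, hyW⟩ w from hyw).reachable
  haveI : Nonempty ↥(Wset G A) := ⟨b1⟩
  exact ⟨fun a b => (key a).symm.trans (key b)⟩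

lemma star_inClassHStar (hA : IsHPartition G A) (hconn : G.Connected) (hfree : P5GemFree G) :
    InClassHStar (G.induce (Wset G A)) := by
  refine ⟨hA.star_connected hconn,
    ⟨inducedFree_of_embedding (SimpleGraph.Embedding.induce _) hfree.1,
     inducedFree_of_embedding (SimpleGraph.Embedding.induce _) hfree.2⟩,
    Apart G A, ⟨?_, fun i hi => hA.apart_clique i hi, hA.comp_clique⟩⟩
  refine ⟨hA.apart_nonempty, ?_, ?_, ?_, ?_, ?_, ?_, ?_, ?_, ?_, ?_, ?_, ?_, ?_, ?_, ?_, ?_,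
    ?_, ?_, ?_, ?_, ?_, ?_, ?_, hA.comp_hom⟩
  · rw [Set.eq_univ_iff_forall]
    intro w
    rw [Set.mem_iUnion]
    exact hA.mem_part (w : V)
  · intro i j hij
    rw [Set.disjoint_left]
    intro w hwi hwj
    exact hA.not_mem hij hwi hwj
  · exact fun i => inducedFree_of_embedding
      (induceInduceEmb G (Wset G A) (Apart G A i) (A i) (fun x hx => hx)) (hA.p4free i)
  · exact fun x hx y hy => hA.c12 _ hx _ hy
  · exact fun x hx y hy => hA.c15 _ hx _ hy
  · exact fun x hx y hy => hA.c16 _ hx _ hy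
  · exact fun x hx y hy hadj => hA.a13 _ hx _ hy hadj
  · exact fun x hx y hy hadj => hA.a14 _ hx _ hy hadj
  · exact fun x hx y hy hadj => hA.a17 _ hx _ hy hadj
  · exact fun x hx y hy => hA.c32 _ hx _ hy
  · exact fun x hx y hy => hA.c34 _ hx _ hy
  · exact fun x hx y hy => hA.c36 _ hx _ hy
  · exact fun x hx y hy hadj => hA.a35 _ hx _ hy hadj
  · exact fun x hx y hy hadj => hA.a37 _ hx _ hy hadj
  · exact fun x hx y hy => hA.c45 _ hx _ hy
  · exact fun x hx y hy => hA.c46 _ hx _ hy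
  · exact fun x hx y hy hadj => hA.a42 _ hx _ hy hadj
  · exact fun x hx y hy hadj => hA.a47 _ hx _ hy hadj
  · exact fun x hx y hy hadj => hA.a25 _ hx _ hy hadj
  · exact fun x hx y hy hadj => hA.a26 _ hx _ hy hadj
  · exact fun x hx y hy hadj => hA.a27 _ hx _ hy hadj
  · exact fun x hx y hy hadj => hA.a56 _ hx _ hy hadj
  · exact fun x hx y hy hadj => hA.a57 _ hx _ hy hadj

end IsHPartition
end Star2
section Transport
universe u v'
open scoped Classical

variable {V1 : Type u} {V2 : Type v'} {G1 : SimpleGraph V1} {G2 : SimpleGraph V2}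

lemma connected_of_iso (φ : G1 ≃g G2) (h : G1.Connected) : G2.Connected := by
  haveI : Nonempty V2 := Nonempty.map φ h.nonempty
  refine ⟨fun a b => ?_⟩
  have := (h.preconnected (φ.symm a) (φ.symm b)).map φ.toHom
  simpa using this

lemma hasGoodStableSet_of_iso [Fintype V1] [Fintype V2] (φ : G1 ≃g G2)
    (h : HasGoodStableSet G1) : HasGoodStableSet G2 := by
  obtain ⟨S, hst, hgood⟩ := h
  refine ⟨(φ : V1 → V2) '' S, ?_, ?_⟩
  · rintro _ ⟨a, ha, rfl⟩ _ ⟨b, hb, rfl⟩ hne hadj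
    have hab : a ≠ b := fun h => hne (h ▸ rfl)
    exact hst ha hb hab (φ.map_rel_iff.mp hadj)
  · intro K hK
    have hK1 : G1.IsNClique G1.cliqueNum (K.map φ.symm.toEmbedding.toEmbedding) := by
      have := isNClique_map_emb φ.symm.toEmbedding hK
      rwa [← cliqueNum_eq_of_iso φ] at this
    obtain ⟨x, hxS, hxK⟩ := hgood _ hK1
    obtain ⟨y, hyK, hyx⟩ := Finset.mem_map.mp hxK
    refine ⟨φ x, ⟨x, hxS, rfl⟩, ?_⟩
    have : φ x = y := by
      rw [← hyx]
      simp
    rwa [this]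

/-- An isomorphism restricts to an isomorphism of induced subgraphs. -/
def isoInduceImage (φ : G1 ≃g G2) (s : Set V1) :
    G1.induce s ≃g G2.induce ((φ : V1 → V2) '' s) where
  toFun x := ⟨φ x.1, ⟨x.1, x.2, rfl⟩⟩
  invFun y := ⟨φ.symm y.1, by
    obtain ⟨a, ha, hay⟩ := y.2
    rw [← hay]
    simpa using ha⟩
  left_inv x := by
    apply Subtype.ext
    simp
  right_inv y := by
    apply Subtype.ext
    simp
  map_rel_iff' := by
    intro a b
    exact φ.map_rel_iff

lemma isoInduceImage_supp (φ : G1 ≃g G2) (s : Set V1)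
    (C : (G1.induce s).ConnectedComponent) :
    Subtype.val '' (C.map (isoInduceImage φ s).toHom).supp
      = (φ : V1 → V2) '' (Subtype.val '' C.supp) := by
  ext y
  constructor
  · rintro ⟨q, hq, rfl⟩
    rw [SimpleGraph.ConnectedComponent.mem_supp_iff] at hq
    set p := (isoInduceImage φ s).symm q with hp
    have hqp : q = (isoInduceImage φ s) p := by rw [hp]; simp
    have hmk : ((G2.induce ((φ : V1 → V2) '' s)).connectedComponentMk ((isoInduceImage φ s) p))
        = ((G1.induce s).connectedComponentMk p).map (isoInduceImage φ s).toHom := rfl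
    rw [hqp, hmk] at hq
    have hinj : Function.Injective
        (SimpleGraph.ConnectedComponent.map (isoInduceImage φ s).toHom) := by
      intro a b hab
      have h1 := congrArg (SimpleGraph.ConnectedComponent.map
        ((isoInduceImage φ s).symm.toHom)) hab
      simpa using h1
    have hpc : (G1.induce s).connectedComponentMk p = C := hinj hq
    refine ⟨p.1, ⟨p, hpc, rfl⟩, ?_⟩
    rw [hqp]
    rfl
  · rintro ⟨_, ⟨p, hp, rfl⟩, rfl⟩
    rw [SimpleGraph.ConnectedComponent.mem_supp_iff] at hp
    refine ⟨(isoInduceImage φ s) p, ?_, rfl⟩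
    rw [SimpleGraph.ConnectedComponent.mem_supp_iff, ← hp]
    rfl

lemma isHomogeneousSet_image (φ : G1 ≃g G2) {X : Set V1} (h : IsHomogeneousSet G1 X) :
    IsHomogeneousSet G2 ((φ : V1 → V2) '' X) := by
  intro v hv hex y hy
  obtain ⟨x0, hx0, hadj⟩ := hex
  obtain ⟨x1, hx1, rfl⟩ := hx0
  obtain ⟨y1, hy1, rfl⟩ := hy
  have hvs : φ.symm v ∉ X := by
    intro hmem
    exact hv ⟨φ.symm v, hmem, by simp⟩
  have hadj1 : G1.Adj (φ.symm v) x1 := by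
    have : G2.Adj v (φ x1) := hadj
    rw [← φ.apply_symm_apply v] at this
    exact φ.map_rel_iff.mp this
  have := h (φ.symm v) hvs ⟨x1, hx1, hadj1⟩ y1 hy1
  have h2 : G2.Adj (φ (φ.symm v)) (φ y1) := φ.map_rel_iff.mpr this
  rwa [φ.apply_symm_apply] at h2

lemma isClique_image (φ : G1 ≃g G2) {X : Set V1} (h : G1.IsClique X) :
    G2.IsClique ((φ : V1 → V2) '' X) := by
  rintro _ ⟨a, ha, rfl⟩ _ ⟨b, hb, rfl⟩ hne
  exact φ.map_rel_iff.mpr (h ha hb (fun hh => hne (hh ▸ rfl)))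

lemma inClassHStar_of_iso (φ : G1 ≃g G2) (h : InClassHStar G1) : InClassHStar G2 := by
  obtain ⟨hconn, hfree, A, hpart, hclq, hcomp⟩ := h
  refine ⟨connected_of_iso φ hconn,
    ⟨inducedFree_of_embedding φ.symm.toEmbedding hfree.1,
     inducedFree_of_embedding φ.symm.toEmbedding hfree.2⟩,
    fun i => (φ : V1 → V2) '' A i, ⟨?_, ?_, ?_⟩⟩
  · constructor
    · exact fun i => (hpart.nonempty i).image _
    · rw [Set.eq_univ_iff_forall]
      intro y
      rw [Set.mem_iUnion]
      obtain ⟨i, hi⟩ := hpart.mem_part (φ.symm y)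
      exact ⟨i, ⟨φ.symm y, hi, by simp⟩⟩
    · intro i j hij
      rw [Set.disjoint_left]
      rintro _ ⟨a, ha, rfl⟩ ⟨b, hb, hba⟩
      have : b = a := φ.injective hba
      exact hpart.not_mem hij ha (this ▸ hb)
    · exact fun i => inducedFree_of_embedding (isoInduceImage φ (A i)).symm.toEmbedding
        (hpart.p4free i)
    · rintro _ ⟨a, ha, rfl⟩ _ ⟨b, hb, rfl⟩; exact φ.map_rel_iff.mpr (hpart.c12 a ha b hb)
    · rintro _ ⟨a, ha, rfl⟩ _ ⟨b, hb, rfl⟩; exact φ.map_rel_iff.mpr (hpart.c15 a ha b hb)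
    · rintro _ ⟨a, ha, rfl⟩ _ ⟨b, hb, rfl⟩; exact φ.map_rel_iff.mpr (hpart.c16 a ha b hb)
    · rintro _ ⟨a, ha, rfl⟩ _ ⟨b, hb, rfl⟩ hadj
      exact hpart.a13 a ha b hb (φ.map_rel_iff.mp hadj)
    · rintro _ ⟨a, ha, rfl⟩ _ ⟨b, hb, rfl⟩ hadj
      exact hpart.a14 a ha b hb (φ.map_rel_iff.mp hadj)
    · rintro _ ⟨a, ha, rfl⟩ _ ⟨b, hb, rfl⟩ hadj
      exact hpart.a17 a ha b hb (φ.map_rel_iff.mp hadj)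
    · rintro _ ⟨a, ha, rfl⟩ _ ⟨b, hb, rfl⟩; exact φ.map_rel_iff.mpr (hpart.c32 a ha b hb)
    · rintro _ ⟨a, ha, rfl⟩ _ ⟨b, hb, rfl⟩; exact φ.map_rel_iff.mpr (hpart.c34 a ha b hb)
    · rintro _ ⟨a, ha, rfl⟩ _ ⟨b, hb, rfl⟩; exact φ.map_rel_iff.mpr (hpart.c36 a ha b hb)
    · rintro _ ⟨a, ha, rfl⟩ _ ⟨b, hb, rfl⟩ hadj
      exact hpart.a35 a ha b hb (φ.map_rel_iff.mp hadj)
    · rintro _ ⟨a, ha, rfl⟩ _ ⟨b, hb, rfl⟩ hadj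
      exact hpart.a37 a ha b hb (φ.map_rel_iff.mp hadj)
    · rintro _ ⟨a, ha, rfl⟩ _ ⟨b, hb, rfl⟩; exact φ.map_rel_iff.mpr (hpart.c45 a ha b hb)
    · rintro _ ⟨a, ha, rfl⟩ _ ⟨b, hb, rfl⟩; exact φ.map_rel_iff.mpr (hpart.c46 a ha b hb)
    · rintro _ ⟨a, ha, rfl⟩ _ ⟨b, hb, rfl⟩ hadj
      exact hpart.a42 a ha b hb (φ.map_rel_iff.mp hadj)
    · rintro _ ⟨a, ha, rfl⟩ _ ⟨b, hb, rfl⟩ hadj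
      exact hpart.a47 a ha b hb (φ.map_rel_iff.mp hadj)
    · rintro _ ⟨a, ha, rfl⟩ _ ⟨b, hb, rfl⟩ hadj
      exact hpart.a25 a ha b hb (φ.map_rel_iff.mp hadj)
    · rintro _ ⟨a, ha, rfl⟩ _ ⟨b, hb, rfl⟩ hadj
      exact hpart.a26 a ha b hb (φ.map_rel_iff.mp hadj)
    · rintro _ ⟨a, ha, rfl⟩ _ ⟨b, hb, rfl⟩ hadj
      exact hpart.a27 a ha b hb (φ.map_rel_iff.mp hadj)
    · rintro _ ⟨a, ha, rfl⟩ _ ⟨b, hb, rfl⟩ hadj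
      exact hpart.a56 a ha b hb (φ.map_rel_iff.mp hadj)
    · rintro _ ⟨a, ha, rfl⟩ _ ⟨b, hb, rfl⟩ hadj
      exact hpart.a57 a ha b hb (φ.map_rel_iff.mp hadj)
    · -- homogeneous components
      intro C
      set ψ := isoInduceImage φ (A 6)
      set C1 := (SimpleGraph.Iso.connectedComponentEquiv ψ).symm C with hC1
      have hC : C = C1.map ψ.toHom := by
        rw [hC1]
        exact (Equiv.apply_symm_apply (SimpleGraph.Iso.connectedComponentEquiv ψ) C).symm
      rw [hC, isoInduceImage_supp]
      exact isHomogeneousSet_image φ (hpart.hom C1)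
  · intro i hi
    exact isClique_image φ (hclq i hi)
  · intro C
    set ψ := isoInduceImage φ (A 6)
    set C1 := (SimpleGraph.Iso.connectedComponentEquiv ψ).symm C with hC1
    have hC : C = C1.map ψ.toHom := by
      rw [hC1]
      exact (Equiv.apply_symm_apply (SimpleGraph.Iso.connectedComponentEquiv ψ) C).symm
    rw [hC, isoInduceImage_supp]
    exact isClique_image φ (hcomp C1)

end Transport
open scoped Classical in
/-- For every graph `G` in the class `H` there is a graph `G*` in the class `H*` with the same
clique number and chromatic number, such that `G` has a good stable set iff `G*` does. -/
theorem classH_reduces_to_classHStar {V : Type*} [Fintype V] (G : SimpleGraph V)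
    (hG : InClassH G) :
    ∃ (n : ℕ) (G' : SimpleGraph (Fin n)), InClassHStar G' ∧
      G.cliqueNum = G'.cliqueNum ∧ G.chromaticNumber = G'.chromaticNumber ∧
      (HasGoodStableSet G ↔ HasGoodStableSet G') := by
  classical
  obtain ⟨hconn, hfree, A, hA⟩ := hG
  haveI : Nonempty V := hconn.nonempty
  have hsetup := hA.toBlockSetup
  have hclique : (G.induce (Wset G A)).cliqueNum = G.cliqueNum := hsetup.cliqueNum_eq
  have hchrom : (G.induce (Wset G A)).chromaticNumber = G.chromaticNumber :=
    hsetup.chromaticNumber_eq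
  have hgood : HasGoodStableSet G ↔ HasGoodStableSet (G.induce (Wset G A)) :=
    hsetup.goodStableSet_iff
  have hstar : InClassHStar (G.induce (Wset G A)) := hA.star_inClassHStar hconn hfree
  set n := Fintype.card ↥(Wset G A) with hn
  set e : Fin n ≃ ↥(Wset G A) := (Fintype.equivFin ↥(Wset G A)).symm with he
  set φ : ((G.induce (Wset G A)).comap e.toEmbedding) ≃g (G.induce (Wset G A)) :=
    SimpleGraph.Iso.comap e (G.induce (Wset G A)) with hφ
  refine ⟨n, (G.induce (Wset G A)).comap e.toEmbedding, ?_, ?_, ?_, ?_⟩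
  · exact inClassHStar_of_iso φ.symm hstar
  · rw [← hclique]; exact cliqueNum_eq_of_iso φ.symm
  · rw [← hchrom]; exact chromaticNumber_eq_of_iso φ.symm
  · exact hgood.trans ⟨hasGoodStableSet_of_iso φ.symm, hasGoodStableSet_of_iso φ⟩
end

section
/- Let G be a clique expansion of the 5-cycle C5 (i.e., V(G) is partitioned into five non-empty cliques Q_1, …, Q_5 such that for each i mod 5, Q_i is complete to Q_{i-1} ∪ Q_{i+1} and anticomplete to Q_{i-2} ∪ Q_{i+2}), and assume that every proper induced subgraph G' of G satisfies χ(G') ≤ ⌈5ω(G')/4⌉. Then χ(G) ≤ ⌈5ω(G)/4⌉. -/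
open SimpleGraph

/-- `G` is a clique expansion of `H` via `f`: the fibers of `f` are non-empty cliques, and for
vertices in distinct fibers, adjacency in `G` is governed by adjacency in `H`. -/
def IsCliqueExpansion {V W : Type*} (G : SimpleGraph V) (H : SimpleGraph W) (f : V → W) : Prop :=
  Function.Surjective f ∧ (∀ w : W, G.IsClique {v | f v = w}) ∧
    ∀ u v : V, f u ≠ f v → (G.Adj u v ↔ H.Adj (f u) (f v))

/- ## Auxiliary arithmetic lemmas -/

lemma aux_arith_helper (c0 c1 c2 c3 c4 k : ℕ)
    (h1 : c1+c3 ≤ c0+c2) (h2 : c2+c4 ≤ c0+c2) (h3 : c3+c0 ≤ c0+c2) (h4 : c4+c1 ≤ c0+c2)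
    (hk1 : c0+c1+c2+c3+c4 ≤ 2*k) (hk2 : c0+c2 ≤ k) :
    ∃ w0 w1 w2 w3 w4 : ℕ,
      w4+w0 ≤ c0 ∧ w0+w1 ≤ c1 ∧ w1+w2 ≤ c2 ∧ w2+w3 ≤ c3 ∧ w3+w4 ≤ c4 ∧
      c0+c1+c2+c3+c4 ≤ w0+w1+w2+w3+w4 + k := by
  set n := c0+c1+c2+c3+c4 with hn
  by_cases hB : n ≤ 2*(c0+c2)
  · refine ⟨min c1 (c0 - c4), min (c1 - min c1 (c0 - c4)) (c2 - c3), c3, 0, c4,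
      ?_, ?_, ?_, ?_, ?_, ?_⟩ <;> omega
  · refine ⟨(n - 2*(c4+c2) + 1)/2, (n - 2*(c0+c3))/2, (n - 2*(c1+c4) + 1)/2,
      (n - 2*(c0+c2))/2, (n - 2*(c1+c3))/2, ?_, ?_, ?_, ?_, ?_, ?_⟩ <;> omega

lemma aux_arith_main (c0 c1 c2 c3 c4 k : ℕ)
    (h02 : c0+c2 ≤ k) (h13 : c1+c3 ≤ k) (h24 : c2+c4 ≤ k) (h30 : c3+c0 ≤ k) (h41 : c4+c1 ≤ k)
    (hnk : c0+c1+c2+c3+c4 ≤ 2*k) :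
    ∃ w0 w1 w2 w3 w4 : ℕ,
      w4+w0 ≤ c0 ∧ w0+w1 ≤ c1 ∧ w1+w2 ≤ c2 ∧ w2+w3 ≤ c3 ∧ w3+w4 ≤ c4 ∧
      c0+c1+c2+c3+c4 ≤ w0+w1+w2+w3+w4 + k := by
  by_cases H0 : c1+c3 ≤ c0+c2 ∧ c2+c4 ≤ c0+c2 ∧ c3+c0 ≤ c0+c2 ∧ c4+c1 ≤ c0+c2
  · exact aux_arith_helper c0 c1 c2 c3 c4 k H0.1 H0.2.1 H0.2.2.1 H0.2.2.2 hnk h02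
  by_cases H1 : c2+c4 ≤ c1+c3 ∧ c3+c0 ≤ c1+c3 ∧ c4+c1 ≤ c1+c3 ∧ c0+c2 ≤ c1+c3
  · obtain ⟨w0,w1,w2,w3,w4,p0,p1,p2,p3,p4,ps⟩ :=
      aux_arith_helper c1 c2 c3 c4 c0 k H1.1 H1.2.1 H1.2.2.1 H1.2.2.2 (by omega) h13
    exact ⟨w4,w0,w1,w2,w3,p4,p0,p1,p2,p3, by omega⟩
  by_cases H2 : c3+c0 ≤ c2+c4 ∧ c4+c1 ≤ c2+c4 ∧ c0+c2 ≤ c2+c4 ∧ c1+c3 ≤ c2+c4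
  · obtain ⟨w0,w1,w2,w3,w4,p0,p1,p2,p3,p4,ps⟩ :=
      aux_arith_helper c2 c3 c4 c0 c1 k H2.1 H2.2.1 H2.2.2.1 H2.2.2.2 (by omega) h24
    exact ⟨w3,w4,w0,w1,w2,p3,p4,p0,p1,p2, by omega⟩
  by_cases H3 : c4+c1 ≤ c3+c0 ∧ c0+c2 ≤ c3+c0 ∧ c1+c3 ≤ c3+c0 ∧ c2+c4 ≤ c3+c0
  · obtain ⟨w0,w1,w2,w3,w4,p0,p1,p2,p3,p4,ps⟩ :=
      aux_arith_helper c3 c4 c0 c1 c2 k H3.1 H3.2.1 H3.2.2.1 H3.2.2.2 (by omega) h30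
    exact ⟨w2,w3,w4,w0,w1,p2,p3,p4,p0,p1, by omega⟩
  · obtain ⟨w0,w1,w2,w3,w4,p0,p1,p2,p3,p4,ps⟩ :=
      aux_arith_helper c4 c0 c1 c2 c3 k (by omega) (by omega) (by omega) (by omega) (by omega) h41
    exact ⟨w1,w2,w3,w4,w0,p1,p2,p3,p4,p0, by omega⟩

/- ## Modular arc disjointness -/

lemma aux_mod_ne {k x y : ℕ} (h1 : x < y) (h2 : y < x + k) : x % k ≠ y % k := by
  intro h
  have hd : k ∣ y - x := (Nat.modEq_iff_dvd' h1.le).mp h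
  rcases hd with ⟨c, hc⟩
  rcases c with _ | c
  · simp at hc; omega
  · have h3 : k ≤ y - x := by
      rw [hc]
      exact Nat.le_mul_of_pos_right _ (Nat.succ_pos c)
    omega

lemma aux_arcsep {k p q la lb m m' : ℕ} (h1 : p + la ≤ q) (h2 : q + lb ≤ p + k)
    (hm : m < la) (hm' : m' < lb) : (p + m) % k ≠ (q + m') % k :=
  aux_mod_ne (by omega) (by omega)

lemma aux_arcsep_wrap {k p q la lb m m' : ℕ} (h1 : p + la ≤ q + k) (h2 : q + lb ≤ p)
    (hm : m < la) (hm' : m' < lb) : (p + m) % k ≠ (q + m') % k := by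
  have h3 : (q + m') % k = (q + m' + k) % k := (Nat.add_mod_right _ _).symm
  rw [h3]
  exact aux_mod_ne (by omega) (by omega)

lemma aux_samearc {k p la m m' : ℕ} (hla : la ≤ k) (hm : m < la) (hm' : m' < la)
    (hne : m ≠ m') : (p + m) % k ≠ (p + m') % k := by
  rcases Nat.lt_or_ge m m' with h | h
  · exact aux_mod_ne (by omega) (by omega)
  · exact (aux_mod_ne (by omega) (by omega)).symm

/- ## Ranking within a finset -/

lemma aux_rank_lt {V : Type*} [DecidableEq V] (g : V → ℕ) (s : Finset V) {u : V} (hu : u ∈ s) :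
    (s.filter (fun x => g x < g u)).card < s.card :=
  Finset.card_lt_card (Finset.filter_ssubset.mpr ⟨u, hu, by omega⟩)

lemma aux_rank_mono {V : Type*} [DecidableEq V] (g : V → ℕ) (s : Finset V) {u v : V}
    (hu : u ∈ s) (huv : g u < g v) :
    (s.filter (fun x => g x < g u)).card < (s.filter (fun x => g x < g v)).card := by
  have hsub : s.filter (fun x => g x < g u) ⊆ s.filter (fun x => g x < g v) := by
    intro x hx
    rw [Finset.mem_filter] at hx ⊢
    exact ⟨hx.1, lt_trans hx.2 huv⟩
  refine Finset.card_lt_card ((Finset.ssubset_iff_of_subset hsub).mpr ⟨u, ?_, ?_⟩)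
  · exact Finset.mem_filter.mpr ⟨hu, huv⟩
  · simp [Finset.mem_filter]

/-- If `G` is a clique expansion of the 5-cycle `C5` and every proper induced subgraph `G'` of
`G` satisfies `χ(G') ≤ ⌈5·ω(G')/4⌉`, then `χ(G) ≤ ⌈5·ω(G)/4⌉`. -/
theorem cliqueExpansion_C5_bound {V : Type*} [Fintype V] (G : SimpleGraph V)
    (f : V → Fin 5) (hexp : IsCliqueExpansion G (SimpleGraph.cycleGraph 5) f)
    (hind : ∀ s : Set V, s ≠ Set.univ →
      (G.induce s).chromaticNumber ≤ ((5 * (G.induce s).cliqueNum ⌈/⌉ 4 : ℕ) : ℕ∞)) :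
    G.chromaticNumber ≤ ((5 * G.cliqueNum ⌈/⌉ 4 : ℕ) : ℕ∞) := by
  classical
  obtain ⟨hsurj, hcl, hGadj⟩ := hexp
  set fib : Fin 5 → Finset V := fun i => Finset.univ.filter (fun v => f v = i) with hfib
  set a : Fin 5 → ℕ := fun i => (fib i).card with ha
  have hmemfib : ∀ (x : V) (i : Fin 5), x ∈ fib i ↔ f x = i := by
    intro x i; rw [hfib]; simp
  set K := G.cliqueNum with hKdef
  -- clique bounds for adjacent fibers
  have hpair : ∀ i j : Fin 5, i ≠ j → (SimpleGraph.cycleGraph 5).Adj i j →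
      a i + a j ≤ K := by
    intro i j hij hcycadj
    have hdisj : Disjoint (fib i) (fib j) := by
      rw [Finset.disjoint_left]
      intro x hx1 hx2
      rw [hmemfib] at hx1 hx2
      exact hij (hx1.symm.trans hx2)
    have hclq : G.IsClique ((fib i ∪ fib j : Finset V) : Set V) := by
      intro x hx y hy hxy
      have hx' : f x = i ∨ f x = j := by
        rcases Finset.mem_union.mp hx with h | h
        · exact Or.inl ((hmemfib _ _).mp h)
        · exact Or.inr ((hmemfib _ _).mp h)
      have hy' : f y = i ∨ f y = j := by
        rcases Finset.mem_union.mp hy with h | h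
        · exact Or.inl ((hmemfib _ _).mp h)
        · exact Or.inr ((hmemfib _ _).mp h)
      by_cases hfx : f x = f y
      · exact hcl (f x) rfl hfx.symm hxy
      · apply (hGadj x y hfx).mpr
        rcases hx' with h1 | h1 <;> rcases hy' with h2 | h2
        · exact absurd (h1.trans h2.symm) hfx
        · rw [h1, h2]; exact hcycadj
        · rw [h1, h2]; exact hcycadj.symm
        · exact absurd (h1.trans h2.symm) hfx
    have hcard : a i + a j = (fib i ∪ fib j).card :=
      (Finset.card_union_of_disjoint hdisj).symm
    rw [ha]
    simp only []
    rw [show (fib i).card + (fib j).card = (fib i ∪ fib j).card from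
      (Finset.card_union_of_disjoint hdisj).symm]
    exact SimpleGraph.IsClique.card_le_cliqueNum (tc := hclq)
  have h01 : a 0 + a 1 ≤ K := hpair 0 1 (by decide) (SimpleGraph.cycleGraph_adj'.mpr (by decide))
  have h12 : a 1 + a 2 ≤ K := hpair 1 2 (by decide) (SimpleGraph.cycleGraph_adj'.mpr (by decide))
  have h23 : a 2 + a 3 ≤ K := hpair 2 3 (by decide) (SimpleGraph.cycleGraph_adj'.mpr (by decide))
  have h34 : a 3 + a 4 ≤ K := hpair 3 4 (by decide) (SimpleGraph.cycleGraph_adj'.mpr (by decide))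
  have h40 : a 4 + a 0 ≤ K := hpair 4 0 (by decide) (SimpleGraph.cycleGraph_adj'.mpr (by decide))
  have hapos : ∀ i, 1 ≤ a i := by
    intro i
    obtain ⟨v, hv⟩ := hsurj i
    have hvmem : v ∈ fib i := (hmemfib v i).mpr hv
    have := Finset.card_pos.mpr ⟨v, hvmem⟩
    rw [ha]
    exact this
  set k := 5 * K ⌈/⌉ 4 with hkdef
  have hkeq : k = (5 * K + 4 - 1) / 4 := Nat.ceilDiv_eq_add_pred_div _ _
  have hKk : K ≤ k := by omega
  have hk0 : 0 < k := by
    have := hapos 0; have := hapos 1; omega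
  obtain ⟨w0, w1, w2, w3, w4, p0, p1, p2, p3, p4, ps⟩ :=
    aux_arith_main (a 0) (a 2) (a 4) (a 1) (a 3) k (by omega) (by omega) (by omega)
      (by omega) (by omega) (by omega)
  set T1 := a 0 - w0 with hT1
  set T2 := T1 + a 2 - w1 with hT2
  set T3 := T2 + a 4 - w2 with hT3
  set T4 := T3 + a 1 - w3 with hT4
  set st : Fin 5 → ℕ := ![0, T3, T1, T4, T2] with hst
  have e0 : st 0 = 0 := rfl
  have e1 : st 1 = T3 := rfl
  have e2 : st 2 = T1 := rfl
  have e3 : st 3 = T4 := rfl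
  have e4 : st 4 = T2 := rfl
  set gg : V → ℕ := fun v => ((Fintype.equivFin V) v).val with hgg
  have hgginj : Function.Injective gg := by
    intro x y h
    exact (Fintype.equivFin V).injective (Fin.val_injective h)
  set idx : V → ℕ := fun v => ((fib (f v)).filter (fun x => gg x < gg v)).card with hidx
  have hidxlt : ∀ v, idx v < a (f v) := by
    intro v
    rw [hidx, ha]
    exact aux_rank_lt gg _ ((hmemfib v (f v)).mpr rfl)
  have hidxne : ∀ u v : V, f u = f v → u ≠ v → idx u ≠ idx v := by
    intro u v hff hne
    have hu : u ∈ fib (f v) := (hmemfib u (f v)).mpr hff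
    have hv : v ∈ fib (f v) := (hmemfib v (f v)).mpr rfl
    rcases Nat.lt_trichotomy (gg u) (gg v) with h | h | h
    · have := aux_rank_mono gg (fib (f v)) hu h
      rw [hidx]
      simp only [hff]
      omega
    · exact absurd (hgginj h) hne
    · have := aux_rank_mono gg (fib (f v)) hv h
      rw [hidx]
      simp only [hff]
      omega
  have h5 : ∀ x : Fin 5, x = 0 ∨ x = 1 ∨ x = 2 ∨ x = 3 ∨ x = 4 := by decide
  have hak : ∀ i : Fin 5, a i ≤ k := by
    intro i; rcases h5 i with h|h|h|h|h <;> rw [h] <;> omega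
  have key : ∀ u v : V, G.Adj u v → (st (f u) + idx u) % k ≠ (st (f v) + idx v) % k := by
    intro u v huv
    have hneuv : u ≠ v := G.ne_of_adj huv
    have hmu := hidxlt u
    have hmv := hidxlt v
    by_cases hff : f u = f v
    · rw [hff] at hmu ⊢
      exact aux_samearc (hak (f v)) hmu hmv (hidxne u v hff hneuv)
    · have hC := SimpleGraph.cycleGraph_adj'.mp ((hGadj u v hff).mp huv)
      rcases h5 (f u) with hfu|hfu|hfu|hfu|hfu <;> rcases h5 (f v) with hfv|hfv|hfv|hfv|hfv <;>
        rw [hfu, hfv] at hC <;> rw [hfu] at hmu <;> rw [hfv] at hmv <;>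
        rw [hfu, hfv] <;>
        simp only [e0, e1, e2, e3, e4] <;>
        first
          | exact absurd hC (by decide)
          | exact aux_arcsep (by omega) (by omega) hmu hmv
          | exact (aux_arcsep (by omega) (by omega) hmv hmu).symm
          | exact aux_arcsep_wrap (by omega) (by omega) hmu hmv
          | exact (aux_arcsep_wrap (by omega) (by omega) hmv hmu).symm
  have coloring : G.Coloring (Fin k) :=
    SimpleGraph.Coloring.mk
      (fun v => ⟨(st (f v) + idx v) % k, Nat.mod_lt _ hk0⟩)
      (by
        intro u v huv h
        exact key u v huv (congrArg Fin.val h))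
  have hcolorable : G.Colorable k := ⟨coloring⟩
  exact hcolorable.chromaticNumber_le
end

section
/- Let G10 be the graph with nine vertices u_1, …, u_9 and edges u_iu_{i+1} and u_iu_{i+3} for each i modulo 9. Let G be a clique expansion of G10, and assume that every proper induced subgraph G' of G satisfies χ(G') ≤ ⌈5ω(G')/4⌉. Then χ(G) ≤ ⌈5ω(G)/4⌉. -/
set_option maxRecDepth 40000

open SimpleGraph

/-- The graph `G_10`: nine vertices `u_0, …, u_8` with edges `u_i u_{i+1}` and `u_i u_{i+3}`
for each `i` modulo 9. -/
def G10 : SimpleGraph (Fin 9) :=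
  SimpleGraph.fromRel (fun i j => j = i + 1 ∨ j = i + 3)

lemma g10_adj (a b : Fin 9) : G10.Adj a b ↔ a ≠ b ∧ (b = a+1 ∨ b = a+3 ∨ a = b+1 ∨ a = b+3) := by
  simp only [G10, SimpleGraph.fromRel_adj]; tauto

instance : DecidableRel G10.Adj := fun a b => decidable_of_iff' _ (g10_adj a b)

lemma window (P : Fin 9 → Bool) (h1 : ∀ j, P j ∨ P (j+1) ∨ P (j+2))
    (h2 : ∀ j, ¬(P j ∧ P (j+3))) : False := by
  revert h1 h2; revert P; decide

lemma claimD : ∀ (j : Fin 9) (C : Finset (Fin 9)),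
    (∀ a ∈ C, ∀ b ∈ C, a ≠ b → G10.Adj a b) →
    (C ⊆ {j, j+1} ∨ C ⊆ {j+1, j+2} ∨ C ⊆ {j+2, j+3}) ∨
    (∃ t ∈ ({j+4, j+6, j+8} : Finset (Fin 9)), ∀ c ∈ C, c = t ∨ G10.Adj t c) := by
  decide

lemma tri_clique : ∀ r : Fin 9, ∀ x ∈ ({r, r+3, r+6} : Finset (Fin 9)),
    ∀ y ∈ ({r, r+3, r+6} : Finset (Fin 9)), x ≠ y → G10.Adj x y := by decide

lemma edge_clique : ∀ m : Fin 9, ∀ x ∈ ({m, m+1} : Finset (Fin 9)),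
    ∀ y ∈ ({m, m+1} : Finset (Fin 9)), x ≠ y → G10.Adj x y := by decide

lemma tri_ne : ∀ r : Fin 9, r ≠ r+3 ∧ r ≠ r+6 ∧ r+3 ≠ r+6 := by decide

lemma edge_ne : ∀ m : Fin 9, m ≠ m+1 := by decide

lemma finid : ∀ j : Fin 9, j+1+3 = j+4 ∧ j+1+6 = j+7 ∧ j+6+1 = j+7 ∧ j+3+1 = j+4
    ∧ j+1+1 = j+2 ∧ j+2+1 = j+3 := by decide

lemma s_ne : ∀ j : Fin 9, j+4 ≠ j+6 ∧ j+4 ≠ j+8 ∧ j+6 ≠ j+8 := by decide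

lemma s_nadj : ∀ j : Fin 9, ¬ G10.Adj (j+4) (j+6) ∧ ¬ G10.Adj (j+4) (j+8)
    ∧ ¬ G10.Adj (j+6) (j+8) := by decide

lemma cliqueNum_le' {α : Type*} (G : SimpleGraph α) (n : ℕ)
    (h : ∀ t : Finset α, G.IsClique (t : Set α) → t.card ≤ n) : G.cliqueNum ≤ n := by
  have hne : {n | ∃ s : Finset α, G.IsNClique n s}.Nonempty :=
    ⟨0, ∅, SimpleGraph.isNClique_empty.mpr rfl⟩
  apply csSup_le hne
  rintro m ⟨s, hs⟩
  exact hs.card_eq ▸ h s hs.isClique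

/-- If `G` is a clique expansion of `G_10` and every proper induced subgraph `G'` of `G`
satisfies `χ(G') ≤ ⌈5·ω(G')/4⌉`, then `χ(G) ≤ ⌈5·ω(G)/4⌉`. -/
theorem cliqueExpansion_G10_bound {V : Type*} [Fintype V] (G : SimpleGraph V)
    (f : V → Fin 9) (hexp : IsCliqueExpansion G G10 f)
    (hind : ∀ s : Set V, s ≠ Set.univ →
      (G.induce s).chromaticNumber ≤ ((5 * (G.induce s).cliqueNum ⌈/⌉ 4 : ℕ) : ℕ∞)) :
    G.chromaticNumber ≤ ((5 * G.cliqueNum ⌈/⌉ 4 : ℕ) : ℕ∞) := by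
  classical
  obtain ⟨hsurj, hfib, hadj⟩ := hexp
  set ω := G.cliqueNum with hw
  set a : Fin 9 → ℕ := fun w => (Finset.univ.filter fun v => f v = w).card with ha
  have ha_pos : ∀ w, 1 ≤ a w := by
    intro w
    obtain ⟨v, hv⟩ := hsurj w
    exact Finset.card_pos.mpr ⟨v, by simp [hv]⟩
  -- preimage of a G10-clique is a G-clique
  have hpre : ∀ C : Finset (Fin 9), (∀ x ∈ C, ∀ y ∈ C, x ≠ y → G10.Adj x y) →
      G.IsClique ((Finset.univ.filter fun v => f v ∈ C : Finset V) : Set V) := by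
    intro C hC u hu v hv huv
    simp only [Finset.coe_filter, Set.mem_setOf_eq] at hu hv
    by_cases hf : f u = f v
    · exact hfib (f v) (by simp [hf]) (by simp) huv
    · exact (hadj u v hf).mpr (hC _ hu.2 _ hv.2 hf)
  have hcard : ∀ C : Finset (Fin 9),
      (Finset.univ.filter fun v => f v ∈ C).card = ∑ w ∈ C, a w := by
    intro C
    rw [Finset.card_eq_sum_card_fiberwise (f := f) (s := Finset.univ.filter fun v => f v ∈ C) (t := C)
        (fun x hx => (Finset.mem_filter.mp hx).2)]
    refine Finset.sum_congr rfl fun w hwC => ?_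
    congr 1
    ext v
    simp only [Finset.mem_filter, Finset.mem_univ, true_and, and_iff_right_iff_imp]
    rintro rfl
    exact hwC
  have hCsum : ∀ C : Finset (Fin 9), (∀ x ∈ C, ∀ y ∈ C, x ≠ y → G10.Adj x y) →
      ∑ w ∈ C, a w ≤ ω := by
    intro C hC
    rw [← hcard C]
    exact SimpleGraph.IsClique.card_le_cliqueNum (tc := hpre C hC)
  have htri : ∀ r : Fin 9, a r + a (r+3) + a (r+6) ≤ ω := by
    intro r
    have h := hCsum {r, r+3, r+6} (tri_clique r)
    obtain ⟨h1, h2, h3⟩ := tri_ne r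
    rwa [Finset.sum_insert (by simp [h1, h2]), Finset.sum_insert (by simp [h3]),
      Finset.sum_singleton, ← add_assoc] at h
  have hedge : ∀ m : Fin 9, a m + a (m+1) ≤ ω := by
    intro m
    have h := hCsum {m, m+1} (edge_clique m)
    rwa [Finset.sum_insert (by simp [edge_ne m]), Finset.sum_singleton] at h
  -- find a window of three consecutive non-maximum edges
  have hwin : ∃ j : Fin 9, a j + a (j+1) < ω ∧ a (j+1) + a (j+2) < ω ∧
      a (j+2) + a (j+3) < ω := by
    by_contra hno
    push_neg at hno
    refine window (fun j => decide (a j + a (j+1) = ω)) ?_ ?_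
    · intro j
      simp only [decide_eq_true_eq]
      rw [(finid j).2.2.2.2.1, (finid j).2.2.2.2.2]
      have e0 := hedge j
      have e1 := hedge (j+1); rw [(finid j).2.2.2.2.1] at e1
      have e2 := hedge (j+2); rw [(finid j).2.2.2.2.2] at e2
      by_contra hc
      push_neg at hc
      have h5 := hno j (lt_of_le_of_ne e0 hc.1) (lt_of_le_of_ne e1 hc.2.1)
      exact absurd (lt_of_le_of_ne e2 hc.2.2) (not_lt.mpr h5)
    · intro j hj
      simp only [decide_eq_true_eq] at hj
      obtain ⟨h3, h6⟩ := hj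
      have t1 := htri j
      have t2 := htri (j+1)
      rw [(finid j).1, (finid j).2.1] at t2
      have e3 : a (j+3) + a (j+4) = ω := by rwa [(finid j).2.2.2.1] at h6
      have e6 := hedge (j+6)
      rw [(finid j).2.2.1] at e6
      have p6 := ha_pos (j+6)
      have p7 := ha_pos (j+7)
      omega
  obtain ⟨j, hj0, hj1, hj2⟩ := hwin
  obtain ⟨x4, hx4⟩ := hsurj (j+4)
  obtain ⟨x6, hx6⟩ := hsurj (j+6)
  obtain ⟨x8, hx8⟩ := hsurj (j+8)
  obtain ⟨f46, f48, f68⟩ := s_ne j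
  obtain ⟨n46, n48, n68⟩ := s_nadj j
  -- the three chosen vertices are pairwise distinct and non-adjacent
  have hnadj : ¬ G.Adj x4 x6 ∧ ¬ G.Adj x4 x8 ∧ ¬ G.Adj x6 x8 := by
    refine ⟨fun h => n46 ?_, fun h => n48 ?_, fun h => n68 ?_⟩
    · rw [← hx4, ← hx6]; exact (hadj x4 x6 (by rw [hx4, hx6]; exact f46)).mp h
    · rw [← hx4, ← hx8]; exact (hadj x4 x8 (by rw [hx4, hx8]; exact f48)).mp h
    · rw [← hx6, ← hx8]; exact (hadj x6 x8 (by rw [hx6, hx8]; exact f68)).mp h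
  set s : Set V := {v | v ≠ x4 ∧ v ≠ x6 ∧ v ≠ x8} with hs
  have hs_ne : s ≠ Set.univ := by
    intro h
    have : x4 ∈ s := h ▸ Set.mem_univ x4
    exact this.1 rfl
  -- bound the clique number of the induced subgraph
  have hω' : (G.induce s).cliqueNum + 1 ≤ ω := by
    have hω2 : 2 ≤ ω := le_trans (by have := ha_pos j; have := ha_pos (j+1); omega) (hedge j)
    have key : ∀ t : Finset ↥s, (G.induce s).IsClique (t : Set ↥s) → t.card ≤ ω - 1 := by
      intro t ht
      set K : Finset V := t.image Subtype.val with hK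
      have hKcard : K.card = t.card := Finset.card_image_of_injective t Subtype.val_injective
      have hKs : ∀ v ∈ K, v ∈ s := by
        intro v hv
        obtain ⟨u, _, rfl⟩ := Finset.mem_image.mp hv
        exact u.2
      have hKcl : G.IsClique (K : Set V) := by
        intro u hu v hv huv
        simp only [hK, Finset.coe_image] at hu hv
        obtain ⟨u', hu', rfl⟩ := hu
        obtain ⟨v', hv', rfl⟩ := hv
        exact ht hu' hv' (fun h => huv (congrArg Subtype.val h))
      set C : Finset (Fin 9) := K.image f with hC
      have hCcl : ∀ x ∈ C, ∀ y ∈ C, x ≠ y → G10.Adj x y := by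
        intro x hx y hy hxy
        obtain ⟨u, hu, rfl⟩ := Finset.mem_image.mp hx
        obtain ⟨v, hv, rfl⟩ := Finset.mem_image.mp hy
        exact (hadj u v hxy).mp (hKcl hu hv (fun h => hxy (congrArg f h)))
      rcases claimD j C hCcl with (hsub | hsub | hsub) | ⟨t', ht', hadjall⟩
      · -- C ⊆ {j, j+1}
        have : K ⊆ Finset.univ.filter fun v => f v ∈ ({j, j+1} : Finset (Fin 9)) := by
          intro v hv
          simp only [Finset.mem_filter, Finset.mem_univ, true_and]
          exact hsub (Finset.mem_image_of_mem f hv)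
        have h2 := Finset.card_le_card this
        rw [hcard, Finset.sum_insert (by simp [edge_ne j]), Finset.sum_singleton] at h2
        omega
      · have : K ⊆ Finset.univ.filter fun v => f v ∈ ({j+1, j+2} : Finset (Fin 9)) := by
          intro v hv
          simp only [Finset.mem_filter, Finset.mem_univ, true_and]
          exact hsub (Finset.mem_image_of_mem f hv)
        have h2 := Finset.card_le_card this
        rw [hcard, Finset.sum_insert (by simp [edge_ne (j+1)]), Finset.sum_singleton] at h2
        omega
      · have : K ⊆ Finset.univ.filter fun v => f v ∈ ({j+2, j+3} : Finset (Fin 9)) := by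
          intro v hv
          simp only [Finset.mem_filter, Finset.mem_univ, true_and]
          exact hsub (Finset.mem_image_of_mem f hv)
        have h2 := Finset.card_le_card this
        rw [hcard, Finset.sum_insert (by simp [edge_ne (j+2)]), Finset.sum_singleton] at h2
        omega
      · -- extend K by a vertex of S
        have : ∃ x : V, f x = t' ∧ ¬ x ∈ s := by
          simp only [Finset.mem_insert, Finset.mem_singleton] at ht'
          rcases ht' with rfl | rfl | rfl
          · exact ⟨x4, hx4, fun h => h.1 rfl⟩
          · exact ⟨x6, hx6, fun h => h.2.1 rfl⟩
          · exact ⟨x8, hx8, fun h => h.2.2 rfl⟩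
        obtain ⟨x, hxf, hxs⟩ := this
        have hxK : x ∉ K := fun h => hxs (hKs x h)
        have hins : G.IsClique ((insert x K : Finset V) : Set V) := by
          rw [Finset.coe_insert]
          apply hKcl.insert
          intro b hb hbx
          rcases hadjall (f b) (Finset.mem_image_of_mem f hb) with hbt | hbt
          · refine hfib t' ?_ ?_ hbx
            · simp only [Set.mem_setOf_eq]; exact hxf
            · simp only [Set.mem_setOf_eq]; exact hbt
          · have hfx : f x ≠ f b := by
              rw [hxf]; exact hbt.ne
            exact (hadj x b hfx).mpr (by rwa [hxf])
        have h2 : (insert x K).card ≤ ω :=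
          SimpleGraph.IsClique.card_le_cliqueNum (tc := hins)
        rw [Finset.card_insert_of_notMem hxK] at h2
        omega
    have := cliqueNum_le' (G.induce s) (ω - 1) key
    omega
  -- color the induced subgraph, then add one color for the removed stable set
  set N := 5 * (G.induce s).cliqueNum ⌈/⌉ 4 with hN
  have hcol : (G.induce s).Colorable N :=
    (SimpleGraph.chromaticNumber_le_iff_colorable).mp (hind s hs_ne)
  obtain ⟨c⟩ := hcol
  have hGcol : G.Colorable (N + 1) := by
    refine ⟨SimpleGraph.Coloring.mk
      (fun v => if h : v ∈ s then (c ⟨v, h⟩).castSucc else Fin.last N) ?_⟩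
    intro u v huv
    by_cases hu : u ∈ s <;> by_cases hv : v ∈ s
    · simp only [dif_pos hu, dif_pos hv]
      have : (G.induce s).Adj ⟨u, hu⟩ ⟨v, hv⟩ := huv
      have h2 := c.valid this
      simpa [Fin.castSucc_inj] using h2
    · simp only [dif_pos hu, dif_neg hv]
      exact (Fin.castSucc_lt_last _).ne
    · simp only [dif_neg hu, dif_pos hv]
      exact (Fin.castSucc_lt_last _).ne'
    · exfalso
      simp only [hs, Set.mem_setOf_eq, not_and_or, not_not] at hu hv
      obtain ⟨h46, h48, h68⟩ := hnadj
      rcases hu with rfl | rfl | rfl <;> rcases hv with rfl | rfl | rfl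
      · exact G.irrefl huv
      · exact h46 huv
      · exact h48 huv
      · exact h46 huv.symm
      · exact G.irrefl huv
      · exact h68 huv
      · exact h48 huv.symm
      · exact h68 huv.symm
      · exact G.irrefl huv
  have hfinal : N + 1 ≤ 5 * ω ⌈/⌉ 4 := by
    rw [hN]
    rw [Nat.ceilDiv_eq_add_pred_div, Nat.ceilDiv_eq_add_pred_div]
    omega
  calc G.chromaticNumber ≤ ((N + 1 : ℕ) : ℕ∞) :=
        SimpleGraph.chromaticNumber_le_iff_colorable.mpr hGcol
    _ ≤ ((5 * ω ⌈/⌉ 4 : ℕ) : ℕ∞) := by exact_mod_cast hfinal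
end

section
/- Let G be a graph in the class H*, and assume that every proper induced subgraph G' of G satisfies χ(G') ≤ ⌈5ω(G')/4⌉. Then χ(G) ≤ ⌈5ω(G)/4⌉. -/
open SimpleGraph

set_option linter.unusedSectionVars false
set_option maxHeartbeats 1600000

namespace HStarProofAux

variable {V : Type*} [Fintype V] {G : SimpleGraph V}

lemma ceil_arith {w : ℕ} (h : 4 ≤ w) : 5 * (w - 4) ⌈/⌉ 4 + 5 = 5 * w ⌈/⌉ 4 := by
  rw [Nat.ceilDiv_eq_add_pred_div, Nat.ceilDiv_eq_add_pred_div]; omega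

lemma ceil_mono {a b : ℕ} (h : a ≤ b) : 5 * a ⌈/⌉ 4 ≤ 5 * b ⌈/⌉ 4 := by
  rw [Nat.ceilDiv_eq_add_pred_div, Nat.ceilDiv_eq_add_pred_div]; omega

lemma ceil_ge (w : ℕ) : 5 * w ≤ 4 * (5 * w ⌈/⌉ 4) := by
  rw [Nat.ceilDiv_eq_add_pred_div]; omega

lemma isClique_ncard_le_cliqueNum {s : Set V} (h : G.IsClique s) :
    s.ncard ≤ G.cliqueNum := by
  classical
  have h' : G.IsClique (s.toFinset : Set V) := by simpa using h
  have := IsClique.card_le_cliqueNum (G := G) (t := s.toFinset) (tc := h')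
  simpa [Set.ncard_eq_toFinset_card'] using this

omit [Fintype V] in
lemma cliqueUnion {X Y : Set V} (hX : G.IsClique X) (hY : G.IsClique Y)
    (hXY : ∀ x ∈ X, ∀ y ∈ Y, G.Adj x y) : G.IsClique (X ∪ Y) := by
  intro a ha b hb hab
  rcases ha with ha | ha <;> rcases hb with hb | hb
  · exact hX ha hb hab
  · exact hXY a ha b hb
  · exact (hXY b hb a ha).symm
  · exact hY ha hb hab

lemma exists_clique_induce (X : Set V) :
    ∃ s : Set V, s ⊆ X ∧ G.IsClique s ∧ s.ncard = (G.induce X).cliqueNum := by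
  classical
  haveI : Fintype X := Fintype.ofFinite X
  obtain ⟨s, hs⟩ := (G.induce X).exists_isNClique_cliqueNum
  refine ⟨Subtype.val '' (s : Set X), ?_, ?_, ?_⟩
  · rintro x ⟨a, _, rfl⟩; exact a.2
  · rintro x ⟨a, ha, rfl⟩ y ⟨b, hb, rfl⟩ hxy
    have hab : a ≠ b := fun e => hxy (by rw [e])
    exact hs.isClique ha hb hab
  · rw [Set.ncard_image_of_injective _ Subtype.val_injective, Set.ncard_coe_finset, hs.card_eq]

lemma ncard_le_cliqueNum_induce {X s : Set V} (hs : s ⊆ X) (h : G.IsClique s) :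
    s.ncard ≤ (G.induce X).cliqueNum := by
  classical
  haveI : Fintype X := Fintype.ofFinite X
  set s' : Set X := Subtype.val ⁻¹' s with hs'
  have hc : (G.induce X).IsClique s' := by
    intro a ha b hb hab
    exact h ha hb (fun e => hab (Subtype.val_injective e))
  have himg : Subtype.val '' s' = s := by
    apply Set.eq_of_subset_of_subset
    · rintro x ⟨a, ha, rfl⟩; exact ha
    · intro x hx; exact ⟨⟨x, hs hx⟩, hx, rfl⟩
  have := isClique_ncard_le_cliqueNum (G := G.induce X) hc
  rwa [← himg, Set.ncard_image_of_injective _ Subtype.val_injective]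

lemma cliqueNum_induce_le (X : Set V) : (G.induce X).cliqueNum ≤ G.cliqueNum := by
  obtain ⟨s, _, hc, hcard⟩ := exists_clique_induce (G := G) X
  rw [← hcard]; exact isClique_ncard_le_cliqueNum hc

lemma pick {X : Set V} {n : ℕ} (h : n ≤ X.ncard) :
    ∃ f : Fin n → V, Function.Injective f ∧ ∀ i, f i ∈ X := by
  classical
  obtain ⟨Y, hYX, hY⟩ := Set.exists_subset_card_eq h
  haveI : Fintype Y := Fintype.ofFinite Y
  have hcard : Fintype.card Y = n := by
    rwa [Set.ncard_eq_toFinset_card', Set.toFinset_card] at hY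
  obtain ⟨e⟩ := Fintype.truncEquivFinOfCardEq hcard
  exact ⟨fun i => (e.symm i : V), fun i j hij => by
    simpa using e.symm.injective (Subtype.val_injective hij), fun i => hYX (e.symm i).2⟩

omit [Fintype V] in
lemma ncard_range {n : ℕ} {f : Fin n → V} (hf : Function.Injective f) :
    (Set.range f).ncard = n := by
  rw [← Set.image_univ, Set.ncard_image_of_injective _ hf]
  simp [Set.ncard_univ]

lemma ncard_diff_le {X T R : Set V} (hRX : R ⊆ X) (hRT : R ⊆ T) {n : ℕ}
    (hR : R.ncard = n) : (X \ T).ncard + n ≤ X.ncard := by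
  have h1 : X \ T ⊆ X \ R := Set.diff_subset_diff_right hRT
  have h2 : (X \ T).ncard ≤ (X \ R).ncard := Set.ncard_le_ncard h1 (X \ R).toFinite
  have h3 : (X \ R).ncard = X.ncard - R.ncard := Set.ncard_diff hRX
  have h4 : R.ncard ≤ X.ncard := Set.ncard_le_ncard hRX X.toFinite
  omega

/-- extension of a colouring by 5 stable sets -/
lemma extend5 (S : Fin 5 → Set V)
    (hS : ∀ j, ∀ x ∈ S j, ∀ y ∈ S j, ¬ G.Adj x y)
    {m : ℕ} (hcol : (G.induce (⋃ j, S j)ᶜ).Colorable m) : G.Colorable (m + 5) := by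
  classical
  obtain ⟨c⟩ := hcol
  have hmem : ∀ v : V, ¬ (∃ j, v ∈ S j) → v ∈ (⋃ j, S j)ᶜ := by
    intro v hv
    simp only [Set.mem_compl_iff, Set.mem_iUnion]
    exact hv
  let f : V → Sum (Fin 5) (Fin m) := fun v =>
    if h : ∃ j, v ∈ S j then Sum.inl h.choose else Sum.inr (c ⟨v, hmem v h⟩)
  have hvalid : ∀ {x y : V}, G.Adj x y → f x ≠ f y := by
    intro x y hxy hfeq
    by_cases hx : ∃ j, x ∈ S j <;> by_cases hy : ∃ j, y ∈ S j
    · simp only [f, dif_pos hx, dif_pos hy, Sum.inl.injEq] at hfeq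
      have h1 := hx.choose_spec
      have h2 := hy.choose_spec
      rw [hfeq] at h1
      exact hS _ x h1 y h2 hxy
    · simp [f, dif_pos hx, dif_neg hy] at hfeq
    · simp [f, dif_neg hx, dif_pos hy] at hfeq
    · simp only [f, dif_neg hx, dif_neg hy, Sum.inr.injEq] at hfeq
      have hadj : (G.induce (⋃ j, S j)ᶜ).Adj ⟨x, hmem x hx⟩ ⟨y, hmem y hy⟩ := hxy
      exact c.valid hadj hfeq
  have C : G.Coloring (Sum (Fin 5) (Fin m)) := SimpleGraph.Coloring.mk f hvalid
  have := C.colorable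
  simpa [add_comm] using this

/-- greedy extension over a low-degree vertex -/
lemma extend_vertex {v : V} {n : ℕ} (hdeg : (G.neighborSet v).ncard < n)
    (hcol : (G.induce {v}ᶜ).Colorable n) : G.Colorable n := by
  classical
  obtain ⟨c⟩ := hcol
  have hne : ∀ {w : V}, G.Adj v w → w ∈ ({v}ᶜ : Set V) := by
    intro w hw
    simp only [Set.mem_compl_iff, Set.mem_singleton_iff]
    rintro rfl; exact G.irrefl hw
  let NB : Finset V := (G.neighborSet v).toFinset
  have hNB : ∀ {w : V}, w ∈ NB → G.Adj v w := by
    intro w hw; rwa [Set.mem_toFinset] at hw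
  let used : Finset (Fin n) := NB.attach.image (fun w => c ⟨w.1, hne (hNB w.2)⟩)
  have hused : used.card < n := by
    calc used.card ≤ NB.attach.card := Finset.card_image_le
    _ = (G.neighborSet v).ncard := by
        rw [Finset.card_attach, Set.ncard_eq_toFinset_card']
    _ < n := hdeg
  have hfresh : ∃ col : Fin n, col ∉ used := by
    by_contra h
    push_neg at h
    have hsub : (Finset.univ : Finset (Fin n)) ⊆ used := fun x _ => h x
    have := Finset.card_le_card hsub
    simp at this
    omega
  obtain ⟨fresh, hfreshspec⟩ := hfresh
  let f : V → Fin n := fun w => if h : w = v then fresh else c ⟨w, by simpa using h⟩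
  have hvalid : ∀ {x y : V}, G.Adj x y → f x ≠ f y := by
    intro x y hxy hfeq
    by_cases hx : x = v <;> by_cases hy : y = v
    · rw [hx, hy] at hxy; exact G.irrefl hxy
    · simp only [f, dif_pos hx, dif_neg hy] at hfeq
      apply hfreshspec
      rw [hfeq]
      refine Finset.mem_image.mpr ⟨⟨y, ?_⟩, Finset.mem_attach _ _, rfl⟩
      rw [Set.mem_toFinset]
      exact hx ▸ hxy
    · simp only [f, dif_neg hx, dif_pos hy] at hfeq
      apply hfreshspec
      rw [← hfeq]
      refine Finset.mem_image.mpr ⟨⟨x, ?_⟩, Finset.mem_attach _ _, rfl⟩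
      rw [Set.mem_toFinset]
      exact hy ▸ hxy.symm
    · simp only [f, dif_neg hx, dif_neg hy] at hfeq
      have hadj : (G.induce ({v}ᶜ : Set V)).Adj ⟨x, by simpa using hx⟩ ⟨y, by simpa using hy⟩ := hxy
      exact c.valid hadj hfeq
  exact ⟨SimpleGraph.Coloring.mk f hvalid⟩

/-- a dominated vertex can reuse the colour of its dominator -/
lemma extend_dominated {u v : V} (hne : u ≠ v) (huv : ¬ G.Adj u v)
    (hdom : ∀ w, G.Adj u w → G.Adj v w) {n : ℕ}
    (hcol : (G.induce {u}ᶜ).Colorable n) : G.Colorable n := by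
  classical
  obtain ⟨c⟩ := hcol
  have hvmem : v ∈ ({u}ᶜ : Set V) := by simpa using hne.symm
  let f : V → Fin n := fun w => if h : w = u then c ⟨v, hvmem⟩ else c ⟨w, by simpa using h⟩
  have hvalid : ∀ {x y : V}, G.Adj x y → f x ≠ f y := by
    intro x y hxy hfeq
    by_cases hx : x = u <;> by_cases hy : y = u
    · rw [hx, hy] at hxy; exact G.irrefl hxy
    · have hvy : G.Adj v y := hdom y (hx ▸ hxy)
      simp only [f, dif_pos hx, dif_neg hy] at hfeq
      have hadj : (G.induce ({u}ᶜ : Set V)).Adj ⟨v, hvmem⟩ ⟨y, by simpa using hy⟩ := hvy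
      exact c.valid hadj hfeq
    · have hvx : G.Adj v x := hdom x (hy ▸ hxy.symm)
      simp only [f, dif_neg hx, dif_pos hy] at hfeq
      have hadj : (G.induce ({u}ᶜ : Set V)).Adj ⟨v, hvmem⟩ ⟨x, by simpa using hx⟩ := hvx
      exact c.valid hadj hfeq.symm
    · simp only [f, dif_neg hx, dif_neg hy] at hfeq
      have hadj : (G.induce ({u}ᶜ : Set V)).Adj ⟨x, by simpa using hx⟩ ⟨y, by simpa using hy⟩ := hxy
      exact c.valid hadj hfeq
  exact ⟨SimpleGraph.Coloring.mk f hvalid⟩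

/-- picks of up to 5 vertices from each component of the graph induced on X. -/
lemma comp_picks (X : Set V) :
    ∃ P : Fin 5 → Set V,
      (∀ j, P j ⊆ X) ∧
      (∀ j, ∀ x ∈ P j, ∀ y ∈ P j, ¬ G.Adj x y) ∧
      (∀ (C : (G.induce X).ConnectedComponent) (T : Set V), (⋃ j, P j) ⊆ T →
        ((Subtype.val '' C.supp) \ T).ncard + 5 ≤ (Subtype.val '' C.supp).ncard ∨
        (Subtype.val '' C.supp) \ T = ∅) := by
  classical
  let U : (G.induce X).ConnectedComponent → Set V := fun C => Subtype.val '' C.supp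
  let n : (G.induce X).ConnectedComponent → ℕ := fun C => min 5 (U C).ncard
  have hn : ∀ C, n C ≤ (U C).ncard := fun C => min_le_right _ _
  have hpick : ∀ C, ∃ f : Fin (n C) → V, Function.Injective f ∧ ∀ i, f i ∈ U C :=
    fun C => pick (hn C)
  choose f hfinj hfmem using hpick
  refine ⟨fun j => {x | ∃ C, ∃ h : (j : ℕ) < n C, x = f C ⟨j, h⟩}, ?_, ?_, ?_⟩
  · rintro j x ⟨C, h, rfl⟩
    obtain ⟨a, _, ha⟩ := hfmem C ⟨j, h⟩
    exact ha ▸ a.2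
  · rintro j x ⟨C, hC, rfl⟩ y ⟨D, hD, rfl⟩ hadj
    by_cases hCD : C = D
    · subst hCD
      exact G.irrefl hadj
    · obtain ⟨a, haSupp, ha⟩ := hfmem C ⟨j, hC⟩
      obtain ⟨b, hbSupp, hb⟩ := hfmem D ⟨j, hD⟩
      have hGi : (G.induce X).Adj a b := by
        have : G.Adj (a : V) (b : V) := by rw [ha, hb]; exact hadj
        exact this
      apply hCD
      rw [SimpleGraph.ConnectedComponent.mem_supp_iff] at haSupp hbSupp
      rw [← haSupp, ← hbSupp]
      exact SimpleGraph.ConnectedComponent.sound hGi.reachable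
  · intro C T hT
    have hrange : Set.range (f C) ⊆ T := by
      rintro x ⟨i, rfl⟩
      apply hT
      have hi5 : (i : ℕ) < 5 := lt_of_lt_of_le i.isLt (min_le_left _ _)
      refine Set.mem_iUnion.mpr ⟨⟨i, hi5⟩, C, i.isLt, ?_⟩
      congr 1
    have hrangeU : Set.range (f C) ⊆ U C := by
      rintro x ⟨i, rfl⟩; exact hfmem C i
    by_cases hU5 : 5 ≤ (U C).ncard
    · left
      have hn5 : n C = 5 := min_eq_left hU5
      exact ncard_diff_le hrangeU hrange (by rw [ncard_range (hfinj C), hn5])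
    · right
      push_neg at hU5
      have hnC : n C = (U C).ncard := min_eq_right (by omega)
      have hcardr : (Set.range (f C)).ncard = (U C).ncard := by
        rw [ncard_range (hfinj C), hnC]
      have hEq : Set.range (f C) = U C :=
        Set.eq_of_subset_of_ncard_le hrangeU (by rw [hcardr]) (U C).toFinite
      rw [Set.diff_eq_empty]
      intro x hx
      have hxU : x ∈ Set.range (f C) := by rw [hEq]; exact hx
      exact hrange hxU

end HStarProofAux

namespace HStarProofAux

variable {V : Type*} [Fintype V] {G : SimpleGraph V} {A : Fin 7 → Set V}

omit [Fintype V] in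
lemma block_exists (hP : IsHPartition G A) (v : V) : ∃ i, v ∈ A i := by
  have hv : v ∈ ⋃ i, A i := hP.covers ▸ Set.mem_univ v
  exact Set.mem_iUnion.mp hv

omit [Fintype V] in
lemma block_ne (hP : IsHPartition G A) {i j : Fin 7} (hij : i ≠ j) {x y : V}
    (hx : x ∈ A i) (hy : y ∈ A j) : x ≠ y :=
  fun e => Set.disjoint_left.mp (hP.disjoint i j hij) hx (e ▸ hy)

omit [Fintype V] in
lemma stable2P (hP : IsHPartition G A) {Q : Set V} (hQ6 : Q ⊆ A 6)
    (hQ : ∀ x ∈ Q, ∀ y ∈ Q, ¬ G.Adj x y)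
    {i1 i2 : Fin 7} (h1 : i1.val < 5) (h2 : i2.val < 5)
    {x y : V} (hx : x ∈ A i1) (hy : y ∈ A i2) (hxy : ¬ G.Adj x y) :
    ∀ a ∈ insert x (insert y Q), ∀ b ∈ insert x (insert y Q), ¬ G.Adj a b := by
  have hanti : ∀ (i : Fin 7), i.val < 5 → ∀ z ∈ A i, ∀ w ∈ Q, ¬ G.Adj z w := by
    intro i hi
    fin_cases i
    · exact fun z hz w hw => hP.a17 z hz w (hQ6 hw)
    · exact fun z hz w hw => hP.a27 z hz w (hQ6 hw)
    · exact fun z hz w hw => hP.a37 z hz w (hQ6 hw)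
    · exact fun z hz w hw => hP.a47 z hz w (hQ6 hw)
    · exact fun z hz w hw => hP.a57 z hz w (hQ6 hw)
    · simp at hi
    · simp at hi
  intro a ha b hb hadj
  simp only [Set.mem_insert_iff] at ha hb
  rcases ha with rfl | rfl | ha <;> rcases hb with rfl | rfl | hb
  · exact G.irrefl hadj
  · exact hxy hadj
  · exact hanti i1 h1 a hx b hb hadj
  · exact hxy hadj.symm
  · exact G.irrefl hadj
  · exact hanti i2 h2 a hy b hb hadj
  · exact hanti i1 h1 b hx a ha hadj.symm
  · exact hanti i2 h2 b hy a ha hadj.symm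
  · exact hQ a ha b hb hadj

omit [Fintype V] in
/-- packaging five stable sets from pairs plus component picks -/
lemma build_design (hP : IsHPartition G A)
    (P : Fin 5 → Set V) (hP6 : ∀ j, P j ⊆ A 6)
    (hPstab : ∀ j, ∀ x ∈ P j, ∀ y ∈ P j, ¬ G.Adj x y)
    (xs ys : Fin 5 → V) (bx bys : Fin 5 → Fin 7)
    (hbx : ∀ j, (bx j).val < 5) (hby : ∀ j, (bys j).val < 5)
    (hxmem : ∀ j, xs j ∈ A (bx j)) (hymem : ∀ j, ys j ∈ A (bys j))
    (hxy : ∀ j, ¬ G.Adj (xs j) (ys j)) :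
    ∃ S : Fin 5 → Set V,
      (∀ j, ∀ a ∈ S j, ∀ b ∈ S j, ¬ G.Adj a b) ∧
      (∀ j, xs j ∈ ⋃ j', S j') ∧
      (∀ j, ys j ∈ ⋃ j', S j') ∧
      ((⋃ j, P j) ⊆ ⋃ j', S j') := by
  refine ⟨fun j => insert (xs j) (insert (ys j) (P j)), ?_, ?_, ?_, ?_⟩
  · intro j
    exact stable2P hP (hP6 j) (hPstab j) (hbx j) (hby j) (hxmem j) (hymem j) (hxy j)
  · intro j
    exact Set.mem_iUnion.mpr ⟨j, Set.mem_insert _ _⟩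
  · intro j
    exact Set.mem_iUnion.mpr ⟨j, Set.mem_insert_iff.mpr (Or.inr (Set.mem_insert _ _))⟩
  · intro x hx
    obtain ⟨j, hj⟩ := Set.mem_iUnion.mp hx
    exact Set.mem_iUnion.mpr
      ⟨j, Set.mem_insert_iff.mpr (Or.inr (Set.mem_insert_iff.mpr (Or.inr hj)))⟩

lemma core (hP : IsHPartition G A)
    (hcl : ∀ i : Fin 7, i.val < 5 → G.IsClique (A i))
    (hclC : ∀ C : (G.induce (A 6)).ConnectedComponent, G.IsClique (Subtype.val '' C.supp))
    (T : Set V) (κ : ℕ)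
    (hκ : ∀ s : Set V, s ⊆ A 5 → G.IsClique s → s.ncard ≤ κ)
    (h12 : (A 0 \ T).ncard + (A 1 \ T).ncard + 4 ≤ G.cliqueNum)
    (h23 : (A 1 \ T).ncard + (A 2 \ T).ncard + 4 ≤ G.cliqueNum)
    (h34 : (A 2 \ T).ncard + (A 3 \ T).ncard + 4 ≤ (A 2).ncard + (A 3).ncard)
    (h45 : (A 3 \ T).ncard + (A 4 \ T).ncard + 4 ≤ G.cliqueNum)
    (h51 : (A 4 \ T).ncard + (A 0 \ T).ncard + 4 ≤ G.cliqueNum)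
    (h16 : (A 0 \ T).ncard + κ + 4 ≤ G.cliqueNum)
    (h34big : 6 ≤ (A 2).ncard + (A 3).ncard)
    (hA7 : ∀ C : (G.induce (A 6)).ConnectedComponent,
      ((Subtype.val '' C.supp) \ T).ncard + 5 ≤ (Subtype.val '' C.supp).ncard ∨
      (Subtype.val '' C.supp) \ T = ∅)
    {K : Set V} (hK : G.IsClique K) (hKT : ∀ x ∈ K, x ∉ T) :
    K.ncard + 4 ≤ G.cliqueNum := by
  classical
  have h23κ : ∀ s : Set V, s ⊆ A 5 → G.IsClique s →
      (A 2).ncard + (A 3).ncard + s.ncard ≤ G.cliqueNum := by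
    intro s hs hsc
    have hc23 : G.IsClique (A 2 ∪ A 3) :=
      cliqueUnion (hcl 2 (by decide)) (hcl 3 (by decide)) hP.c34
    have hcall : G.IsClique ((A 2 ∪ A 3) ∪ s) := by
      apply cliqueUnion hc23 hsc
      rintro x (hx | hx) y hy
      · exact hP.c36 x hx y (hs hy)
      · exact hP.c46 x hx y (hs hy)
    have hd23 : Disjoint (A 2) (A 3) := hP.disjoint 2 3 (by decide)
    have hd25 : Disjoint (A 2 ∪ A 3) s := by
      apply Set.disjoint_union_left.mpr
      constructor
      · exact Set.disjoint_of_subset_right hs (hP.disjoint 2 5 (by decide))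
      · exact Set.disjoint_of_subset_right hs (hP.disjoint 3 5 (by decide))
    have hcard := isClique_ncard_le_cliqueNum hcall
    rwa [Set.ncard_union_eq hd25 (A 2 ∪ A 3).toFinite s.toFinite,
         Set.ncard_union_eq hd23 (A 2).toFinite (A 3).toFinite] at hcard
  by_cases hK7 : (K ∩ A 6).Nonempty
  · obtain ⟨v, hvK, hv6⟩ := hK7
    set v' : (A 6 : Set V) := ⟨v, hv6⟩ with hv'
    set C := (G.induce (A 6)).connectedComponentMk v' with hC
    set U : Set V := Subtype.val '' C.supp with hU
    have hvU : v ∈ U := ⟨v', by rw [SimpleGraph.ConnectedComponent.mem_supp_iff], rfl⟩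
    have hU6 : U ⊆ A 6 := by rintro x ⟨a, _, rfl⟩; exact a.2
    have hKsub : ∀ x ∈ K, x ∈ U ∨ x ∈ K ∩ A 5 := by
      intro x hx
      by_cases hxv : x = v
      · exact Or.inl (hxv ▸ hvU)
      have hadj : G.Adj x v := hK hx hvK hxv
      obtain ⟨i, hxi⟩ := block_exists hP x
      fin_cases i
      · exact absurd hadj (hP.a17 x hxi v hv6)
      · exact absurd hadj (hP.a27 x hxi v hv6)
      · exact absurd hadj (hP.a37 x hxi v hv6)
      · exact absurd hadj (hP.a47 x hxi v hv6)
      · exact absurd hadj (hP.a57 x hxi v hv6)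
      · exact Or.inr ⟨hx, hxi⟩
      · left
        have hadj' : (G.induce (A 6)).Adj ⟨x, hxi⟩ v' := hadj
        refine ⟨⟨x, hxi⟩, ?_, rfl⟩
        rw [SimpleGraph.ConnectedComponent.mem_supp_iff, hC]
        exact SimpleGraph.ConnectedComponent.sound hadj'.reachable
    have hcross : ∀ w ∈ K ∩ A 5, ∀ u ∈ U, G.Adj w u := by
      intro w hw u hu
      have hwU : w ∉ U := fun hwU =>
        Set.disjoint_left.mp (hP.disjoint 5 6 (by decide)) hw.2 (hU6 hwU)
      have hwv : w ≠ v := block_ne hP (show (5 : Fin 7) ≠ 6 by decide) hw.2 hv6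
      exact hP.hom C w hwU ⟨v, hvU, hK hw.1 hvK hwv⟩ u hu
    have hUK5 : U.ncard + (K ∩ A 5).ncard ≤ G.cliqueNum := by
      have hcall : G.IsClique (U ∪ K ∩ A 5) := by
        apply cliqueUnion (hclC C) (hK.subset Set.inter_subset_left)
        intro x hx y hy
        exact (hcross y hy x hx).symm
      have hdisj : Disjoint U (K ∩ A 5) := by
        apply Set.disjoint_of_subset hU6 Set.inter_subset_right
        exact hP.disjoint 6 5 (by decide)
      have := isClique_ncard_le_cliqueNum hcall
      rwa [Set.ncard_union_eq hdisj U.toFinite (K ∩ A 5).toFinite] at this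
    have hK5ub : (A 2).ncard + (A 3).ncard + (K ∩ A 5).ncard ≤ G.cliqueNum :=
      h23κ _ Set.inter_subset_right (hK.subset Set.inter_subset_left)
    have hKbound : K.ncard ≤ (U \ T).ncard + (K ∩ A 5).ncard := by
      have hsub : K ⊆ (U \ T) ∪ (K ∩ A 5) := by
        intro x hx
        rcases hKsub x hx with h | h
        · exact Or.inl ⟨h, hKT x hx⟩
        · exact Or.inr h
      calc K.ncard ≤ ((U \ T) ∪ (K ∩ A 5)).ncard :=
            Set.ncard_le_ncard hsub (Set.toFinite _)
      _ ≤ (U \ T).ncard + (K ∩ A 5).ncard := Set.ncard_union_le _ _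
    have hA7C := hA7 C
    rw [← hU] at hA7C
    rcases hA7C with hl | hr
    · omega
    · rw [hr] at hKbound
      simp only [Set.ncard_empty] at hKbound
      omega
  · have hKnot6 : ∀ x ∈ K, x ∉ A 6 := by
      intro x hx hx6
      exact hK7 ⟨x, hx, hx6⟩
    have pairbound : ∀ (i j : Fin 7), K ⊆ A i ∪ A j →
        K.ncard ≤ (A i \ T).ncard + (A j \ T).ncard := by
      intro i j hsub
      have hsub' : K ⊆ (A i \ T) ∪ (A j \ T) := by
        intro x hx
        rcases hsub hx with h | h
        · exact Or.inl ⟨h, hKT x hx⟩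
        · exact Or.inr ⟨h, hKT x hx⟩
      calc K.ncard ≤ ((A i \ T) ∪ (A j \ T)).ncard :=
            Set.ncard_le_ncard hsub' (Set.toFinite _)
      _ ≤ _ := Set.ncard_union_le _ _
    by_cases hK2 : (K ∩ A 1).Nonempty
    · obtain ⟨v, hvK, hv1⟩ := hK2
      have hKsub : K ⊆ A 0 ∪ A 1 ∪ A 2 := by
        intro x hx
        by_cases hxv : x = v
        · exact Or.inl (Or.inr (hxv ▸ hv1))
        have hadj : G.Adj x v := hK hx hvK hxv
        obtain ⟨i, hxi⟩ := block_exists hP x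
        fin_cases i
        · exact Or.inl (Or.inl hxi)
        · exact Or.inl (Or.inr hxi)
        · exact Or.inr hxi
        · exact absurd hadj (hP.a42 x hxi v hv1)
        · exact absurd hadj (fun h => hP.a25 v hv1 x hxi h.symm)
        · exact absurd hadj (fun h => hP.a26 v hv1 x hxi h.symm)
        · exact absurd hadj (fun h => hP.a27 v hv1 x hxi h.symm)
      by_cases hK0 : (K ∩ A 0).Nonempty
      · obtain ⟨w, hwK, hw0⟩ := hK0
        have hKsub' : K ⊆ A 0 ∪ A 1 := by
          intro x hx
          rcases hKsub hx with (h | h) | h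
          · exact Or.inl h
          · exact Or.inr h
          · exfalso
            have hxw : x ≠ w := block_ne hP (show (2 : Fin 7) ≠ 0 by decide) h hw0
            exact hP.a13 w hw0 x h (hK hwK hx (Ne.symm hxw))
        have := pairbound 0 1 hKsub'
        omega
      · have hKsub' : K ⊆ A 1 ∪ A 2 := by
          intro x hx
          rcases hKsub hx with (h | h) | h
          · exact absurd ⟨x, hx, h⟩ hK0
          · exact Or.inl h
          · exact Or.inr h
        have := pairbound 1 2 hKsub'
        omega
    · by_cases hK5 : (K ∩ A 4).Nonempty
      · obtain ⟨v, hvK, hv4⟩ := hK5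
        have hKsub : K ⊆ A 0 ∪ A 3 ∪ A 4 := by
          intro x hx
          by_cases hxv : x = v
          · exact Or.inr (hxv ▸ hv4)
          have hadj : G.Adj x v := hK hx hvK hxv
          obtain ⟨i, hxi⟩ := block_exists hP x
          fin_cases i
          · exact Or.inl (Or.inl hxi)
          · exact absurd ⟨x, hx, hxi⟩ hK2
          · exact absurd hadj (hP.a35 x hxi v hv4)
          · exact Or.inl (Or.inr hxi)
          · exact Or.inr hxi
          · exact absurd hadj (fun h => hP.a56 v hv4 x hxi h.symm)
          · exact absurd hadj (fun h => hP.a57 v hv4 x hxi h.symm)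
        by_cases hK0 : (K ∩ A 0).Nonempty
        · obtain ⟨w, hwK, hw0⟩ := hK0
          have hKsub' : K ⊆ A 4 ∪ A 0 := by
            intro x hx
            rcases hKsub hx with (h | h) | h
            · exact Or.inr h
            · exfalso
              have hxw : x ≠ w := block_ne hP (show (3 : Fin 7) ≠ 0 by decide) h hw0
              exact hP.a14 w hw0 x h (hK hwK hx (Ne.symm hxw))
            · exact Or.inl h
          have := pairbound 4 0 hKsub'
          omega
        · have hKsub' : K ⊆ A 3 ∪ A 4 := by
            intro x hx
            rcases hKsub hx with (h | h) | h
            · exact absurd ⟨x, hx, h⟩ hK0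
            · exact Or.inl h
            · exact Or.inr h
          have := pairbound 3 4 hKsub'
          omega
      · have hKsub : K ⊆ A 0 ∪ A 2 ∪ A 3 ∪ A 5 := by
          intro x hx
          obtain ⟨i, hxi⟩ := block_exists hP x
          fin_cases i
          · exact Or.inl (Or.inl (Or.inl hxi))
          · exact absurd ⟨x, hx, hxi⟩ hK2
          · exact Or.inl (Or.inl (Or.inr hxi))
          · exact Or.inl (Or.inr hxi)
          · exact absurd ⟨x, hx, hxi⟩ hK5
          · exact Or.inr hxi
          · exact absurd hxi (hKnot6 x hx)
        by_cases hK0 : (K ∩ A 0).Nonempty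
        · obtain ⟨w, hwK, hw0⟩ := hK0
          have hKsub' : K ⊆ (A 0 \ T) ∪ (K ∩ A 5) := by
            intro x hx
            rcases hKsub hx with ((h | h) | h) | h
            · exact Or.inl ⟨h, hKT x hx⟩
            · exfalso
              have hxw : x ≠ w := block_ne hP (show (2 : Fin 7) ≠ 0 by decide) h hw0
              exact hP.a13 w hw0 x h (hK hwK hx (Ne.symm hxw))
            · exfalso
              have hxw : x ≠ w := block_ne hP (show (3 : Fin 7) ≠ 0 by decide) h hw0
              exact hP.a14 w hw0 x h (hK hwK hx (Ne.symm hxw))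
            · exact Or.inr ⟨hx, h⟩
          have hb : K.ncard ≤ (A 0 \ T).ncard + (K ∩ A 5).ncard := by
            calc K.ncard ≤ ((A 0 \ T) ∪ (K ∩ A 5)).ncard :=
                  Set.ncard_le_ncard hKsub' (Set.toFinite _)
            _ ≤ _ := Set.ncard_union_le _ _
          have hk5 : (K ∩ A 5).ncard ≤ κ :=
            hκ _ Set.inter_subset_right (hK.subset Set.inter_subset_left)
          omega
        · have hKsub' : K ⊆ (A 2 \ T) ∪ (A 3 \ T) ∪ (K ∩ A 5) := by
            intro x hx
            rcases hKsub hx with ((h | h) | h) | h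
            · exact absurd ⟨x, hx, h⟩ hK0
            · exact Or.inl (Or.inl ⟨h, hKT x hx⟩)
            · exact Or.inl (Or.inr ⟨h, hKT x hx⟩)
            · exact Or.inr ⟨hx, h⟩
          have hb : K.ncard ≤ (A 2 \ T).ncard + (A 3 \ T).ncard + (K ∩ A 5).ncard := by
            calc K.ncard ≤ ((A 2 \ T) ∪ (A 3 \ T) ∪ (K ∩ A 5)).ncard :=
                  Set.ncard_le_ncard hKsub' (Set.toFinite _)
            _ ≤ ((A 2 \ T) ∪ (A 3 \ T)).ncard + (K ∩ A 5).ncard := Set.ncard_union_le _ _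
            _ ≤ _ := by
                have := Set.ncard_union_le (A 2 \ T) (A 3 \ T)
                omega
          have hk5 : (A 2).ncard + (A 3).ncard + (K ∩ A 5).ncard ≤ G.cliqueNum :=
            h23κ _ Set.inter_subset_right (hK.subset Set.inter_subset_left)
          omega

lemma final_step (hP : IsHPartition G A)
    (hcl : ∀ i : Fin 7, i.val < 5 → G.IsClique (A i))
    (hclC : ∀ C : (G.induce (A 6)).ConnectedComponent, G.IsClique (Subtype.val '' C.supp))
    (hind : ∀ s : Set V, s ≠ Set.univ →
      (G.induce s).chromaticNumber ≤ ((5 * (G.induce s).cliqueNum ⌈/⌉ 4 : ℕ) : ℕ∞))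
    (κ : ℕ) (hκ : ∀ s : Set V, s ⊆ A 5 → G.IsClique s → s.ncard ≤ κ)
    (S : Fin 5 → Set V)
    (hstab : ∀ j, ∀ x ∈ S j, ∀ y ∈ S j, ¬ G.Adj x y)
    (hne : (⋃ j, S j).Nonempty)
    (hω4 : 4 ≤ G.cliqueNum)
    (h12 : (A 0 \ (⋃ j, S j)).ncard + (A 1 \ (⋃ j, S j)).ncard + 4 ≤ G.cliqueNum)
    (h23 : (A 1 \ (⋃ j, S j)).ncard + (A 2 \ (⋃ j, S j)).ncard + 4 ≤ G.cliqueNum)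
    (h34 : (A 2 \ (⋃ j, S j)).ncard + (A 3 \ (⋃ j, S j)).ncard + 4 ≤ (A 2).ncard + (A 3).ncard)
    (h45 : (A 3 \ (⋃ j, S j)).ncard + (A 4 \ (⋃ j, S j)).ncard + 4 ≤ G.cliqueNum)
    (h51 : (A 4 \ (⋃ j, S j)).ncard + (A 0 \ (⋃ j, S j)).ncard + 4 ≤ G.cliqueNum)
    (h16 : (A 0 \ (⋃ j, S j)).ncard + κ + 4 ≤ G.cliqueNum)
    (h34big : 6 ≤ (A 2).ncard + (A 3).ncard)
    (hA7 : ∀ C : (G.induce (A 6)).ConnectedComponent,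
      ((Subtype.val '' C.supp) \ (⋃ j, S j)).ncard + 5 ≤ (Subtype.val '' C.supp).ncard ∨
      (Subtype.val '' C.supp) \ (⋃ j, S j) = ∅) :
    G.Colorable (5 * G.cliqueNum ⌈/⌉ 4) := by
  classical
  have hWne : ((⋃ j, S j)ᶜ : Set V) ≠ Set.univ := by
    obtain ⟨x, hx⟩ := hne
    intro h
    have hx' : x ∈ ((⋃ j, S j)ᶜ : Set V) := h ▸ Set.mem_univ x
    exact hx' hx
  have hcliq : (G.induce ((⋃ j, S j)ᶜ)).cliqueNum + 4 ≤ G.cliqueNum := by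
    obtain ⟨s, hsW, hsc, hscard⟩ := exists_clique_induce (G := G) ((⋃ j, S j)ᶜ)
    rw [← hscard]
    exact core hP hcl hclC (⋃ j, S j) κ hκ h12 h23 h34 h45 h51 h16 h34big hA7 hsc
      (fun x hx => hsW hx)
  have hχW := hind _ hWne
  rw [SimpleGraph.chromaticNumber_le_iff_colorable] at hχW
  have hcol : (G.induce ((⋃ j, S j)ᶜ)).Colorable (5 * (G.cliqueNum - 4) ⌈/⌉ 4) :=
    hχW.mono (ceil_mono (by omega))
  have hGcol := extend5 S hstab hcol
  rwa [ceil_arith hω4] at hGcol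

end HStarProofAux

open HStarProofAux in
/-- If `G` is in the class `H*` and every proper induced subgraph `G'` of `G` satisfies
`χ(G') ≤ ⌈5·ω(G')/4⌉`, then `χ(G) ≤ ⌈5·ω(G)/4⌉`. -/
theorem classHStar_bound {V : Type*} [Fintype V] (G : SimpleGraph V)
    (hG : InClassHStar G)
    (hind : ∀ s : Set V, s ≠ Set.univ →
      (G.induce s).chromaticNumber ≤ ((5 * (G.induce s).cliqueNum ⌈/⌉ 4 : ℕ) : ℕ∞)) :
    G.chromaticNumber ≤ ((5 * G.cliqueNum ⌈/⌉ 4 : ℕ) : ℕ∞) := by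
  classical
  obtain ⟨-, -, A, hP, hcl5, hclC⟩ := hG
  by_contra hχ
  have hsubcol : ∀ s : Set V, s ≠ Set.univ → (G.induce s).Colorable (5 * G.cliqueNum ⌈/⌉ 4) := by
    intro s hs
    have h1 := hind s hs
    rw [SimpleGraph.chromaticNumber_le_iff_colorable] at h1
    exact h1.mono (ceil_mono (HStarProofAux.cliqueNum_induce_le s))
  have hχ' : ∀ hcol : G.Colorable (5 * G.cliqueNum ⌈/⌉ 4), False :=
    fun hcol => hχ hcol.chromaticNumber_le
  -- minimum degree bound
  have hdeg : ∀ v : V, 5 * G.cliqueNum ⌈/⌉ 4 ≤ (G.neighborSet v).ncard := by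
    intro v
    by_contra h
    push_neg at h
    have hvne : ({v}ᶜ : Set V) ≠ Set.univ := by
      intro he
      have hv : v ∈ ({v}ᶜ : Set V) := he ▸ Set.mem_univ v
      simp at hv
    exact hχ' (extend_vertex h (hsubcol _ hvne))
  -- clique bounds on pairs of blocks
  have epair : ∀ (i j : Fin 7), i ≠ j → i.val < 5 → j.val < 5 → CompleteTo G (A i) (A j) →
      (A i).ncard + (A j).ncard ≤ G.cliqueNum := by
    intro i j hij hi hj hcomp
    have hcall : G.IsClique (A i ∪ A j) := cliqueUnion (hcl5 i hi) (hcl5 j hj) hcomp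
    have := isClique_ncard_le_cliqueNum hcall
    rwa [Set.ncard_union_eq (hP.disjoint i j hij) (A i).toFinite (A j).toFinite] at this
  have e01 := epair 0 1 (by decide) (by decide) (by decide) hP.c12
  have e21 := epair 2 1 (by decide) (by decide) (by decide) hP.c32
  have e34 := epair 3 4 (by decide) (by decide) (by decide) hP.c45
  have e04 := epair 0 4 (by decide) (by decide) (by decide) hP.c15
  -- the clique number of A6 (Lean index 5)
  have hκs : ∀ s : Set V, s ⊆ A 5 → G.IsClique s → s.ncard ≤ (G.induce (A 5)).cliqueNum :=
    fun s hs hc => ncard_le_cliqueNum_induce hs hc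
  obtain ⟨K6, hK6sub, hK6cl, hK6card⟩ := exists_clique_induce (G := G) (A 5)
  have hκ1 : 1 ≤ (G.induce (A 5)).cliqueNum := by
    obtain ⟨x, hx⟩ := hP.nonempty 5
    have hone := hκs {x} (by simpa using hx)
      (by intro a ha b hb hne; simp only [Set.mem_singleton_iff] at ha hb; rw [ha, hb] at hne; simp at hne)
    simpa using hone
  have e0κ : (A 0).ncard + (G.induce (A 5)).cliqueNum ≤ G.cliqueNum := by
    have hcall : G.IsClique (A 0 ∪ K6) := cliqueUnion (hcl5 0 (by decide)) hK6cl
      (fun x hx y hy => hP.c16 x hx y (hK6sub hy))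
    have hd : Disjoint (A 0) K6 :=
      Set.disjoint_of_subset_right hK6sub (hP.disjoint 0 5 (by decide))
    have hle := isClique_ncard_le_cliqueNum hcall
    rwa [Set.ncard_union_eq hd (A 0).toFinite K6.toFinite, hK6card] at hle
  have e23κ : (A 2).ncard + (A 3).ncard + (G.induce (A 5)).cliqueNum ≤ G.cliqueNum := by
    have hc23 : G.IsClique (A 2 ∪ A 3) :=
      cliqueUnion (hcl5 2 (by decide)) (hcl5 3 (by decide)) hP.c34
    have hcall : G.IsClique ((A 2 ∪ A 3) ∪ K6) := by
      apply cliqueUnion hc23 hK6cl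
      rintro x (hx | hx) y hy
      · exact hP.c36 x hx y (hK6sub hy)
      · exact hP.c46 x hx y (hK6sub hy)
    have hd23 : Disjoint (A 2) (A 3) := hP.disjoint 2 3 (by decide)
    have hd : Disjoint (A 2 ∪ A 3) K6 := by
      apply Set.disjoint_union_left.mpr
      exact ⟨Set.disjoint_of_subset_right hK6sub (hP.disjoint 2 5 (by decide)),
        Set.disjoint_of_subset_right hK6sub (hP.disjoint 3 5 (by decide))⟩
    have hle := isClique_ncard_le_cliqueNum hcall
    rwa [Set.ncard_union_eq hd (A 2 ∪ A 3).toFinite K6.toFinite,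
      Set.ncard_union_eq hd23 (A 2).toFinite (A 3).toFinite, hK6card] at hle
  -- degree consequences
  have hdA2 : 5 * G.cliqueNum ⌈/⌉ 4 + 1 ≤ (A 0).ncard + (A 1).ncard + (A 2).ncard := by
    obtain ⟨v, hv⟩ := hP.nonempty 1
    have hsub : G.neighborSet v ⊆ (A 0) ∪ (A 2) ∪ ((A 1) \ {v}) := by
      intro w hw
      rw [SimpleGraph.mem_neighborSet] at hw
      obtain ⟨i, hwi⟩ := block_exists hP w
      fin_cases i
      · exact Or.inl (Or.inl hwi)
      · exact Or.inr ⟨hwi, by simpa using (G.ne_of_adj hw).symm⟩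
      · exact Or.inl (Or.inr hwi)
      · exact absurd hw.symm (hP.a42 w hwi v hv)
      · exact absurd hw (hP.a25 v hv w hwi)
      · exact absurd hw (hP.a26 v hv w hwi)
      · exact absurd hw (hP.a27 v hv w hwi)
    have hb1 : (G.neighborSet v).ncard ≤ ((A 0) ∪ (A 2) ∪ ((A 1) \ {v})).ncard :=
      Set.ncard_le_ncard hsub (Set.toFinite _)
    have hb2 : ((A 0) ∪ (A 2) ∪ ((A 1) \ {v})).ncard ≤
        ((A 0) ∪ (A 2)).ncard + ((A 1) \ {v}).ncard := Set.ncard_union_le _ _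
    have hb3 : ((A 0) ∪ (A 2)).ncard ≤ (A 0).ncard + (A 2).ncard := Set.ncard_union_le _ _
    have hb4 : ((A 1) \ {v}).ncard + 1 = (A 1).ncard :=
      Set.ncard_diff_singleton_add_one hv (A 1).toFinite
    have := hdeg v
    omega
  have hdA5 : 5 * G.cliqueNum ⌈/⌉ 4 + 1 ≤ (A 0).ncard + (A 3).ncard + (A 4).ncard := by
    obtain ⟨v, hv⟩ := hP.nonempty 4
    have hsub : G.neighborSet v ⊆ (A 0) ∪ (A 3) ∪ ((A 4) \ {v}) := by
      intro w hw
      rw [SimpleGraph.mem_neighborSet] at hw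
      obtain ⟨i, hwi⟩ := block_exists hP w
      fin_cases i
      · exact Or.inl (Or.inl hwi)
      · exact absurd hw.symm (hP.a25 w hwi v hv)
      · exact absurd hw.symm (hP.a35 w hwi v hv)
      · exact Or.inl (Or.inr hwi)
      · exact Or.inr ⟨hwi, by simpa using (G.ne_of_adj hw).symm⟩
      · exact absurd hw (hP.a56 v hv w hwi)
      · exact absurd hw (hP.a57 v hv w hwi)
    have hb1 : (G.neighborSet v).ncard ≤ ((A 0) ∪ (A 3) ∪ ((A 4) \ {v})).ncard :=
      Set.ncard_le_ncard hsub (Set.toFinite _)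
    have hb2 : ((A 0) ∪ (A 3) ∪ ((A 4) \ {v})).ncard ≤
        ((A 0) ∪ (A 3)).ncard + ((A 4) \ {v}).ncard := Set.ncard_union_le _ _
    have hb3 : ((A 0) ∪ (A 3)).ncard ≤ (A 0).ncard + (A 3).ncard := Set.ncard_union_le _ _
    have hb4 : ((A 4) \ {v}).ncard + 1 = (A 4).ncard :=
      Set.ncard_diff_singleton_add_one hv (A 4).toFinite
    have := hdeg v
    omega
  -- A2 and A5 have at least two vertices (else dominated vertex)
  have hn1 : 2 ≤ (A 1).ncard := by
    by_contra h
    push_neg at h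
    obtain ⟨u0, hu0⟩ := hP.nonempty 1
    have hne1 : (A 1).ncard = 1 := by
      have hpos : 0 < (A 1).ncard := (Set.ncard_pos (A 1).toFinite).mpr ⟨u0, hu0⟩
      omega
    obtain ⟨u, hu⟩ := Set.ncard_eq_one.mp hne1
    have hu1 : u ∈ A 1 := by rw [hu]; rfl
    obtain ⟨v6, hv6⟩ := hP.nonempty 5
    have hnuv : u ≠ v6 := block_ne hP (show (1 : Fin 7) ≠ 5 by decide) hu1 hv6
    have hnadj : ¬ G.Adj u v6 := hP.a26 u hu1 v6 hv6
    have hdom : ∀ w, G.Adj u w → G.Adj v6 w := by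
      intro w hw
      obtain ⟨i, hwi⟩ := block_exists hP w
      fin_cases i
      · exact (hP.c16 w hwi v6 hv6).symm
      · have hwu : w = u := by
          have hwi' : w ∈ A 1 := hwi
          rw [hu] at hwi'; exact hwi'
        exact absurd (hwu ▸ hw) G.irrefl
      · exact (hP.c36 w hwi v6 hv6).symm
      · exact absurd hw.symm (hP.a42 w hwi u hu1)
      · exact absurd hw (hP.a25 u hu1 w hwi)
      · exact absurd hw (hP.a26 u hu1 w hwi)
      · exact absurd hw (hP.a27 u hu1 w hwi)
    have hcne : ({u}ᶜ : Set V) ≠ Set.univ := by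
      intro he
      have hv : u ∈ ({u}ᶜ : Set V) := he ▸ Set.mem_univ u
      simp at hv
    exact hχ' (extend_dominated hnuv hnadj hdom (hsubcol _ hcne))
  have hn4 : 2 ≤ (A 4).ncard := by
    by_contra h
    push_neg at h
    obtain ⟨u0, hu0⟩ := hP.nonempty 4
    have hne1 : (A 4).ncard = 1 := by
      have hpos : 0 < (A 4).ncard := (Set.ncard_pos (A 4).toFinite).mpr ⟨u0, hu0⟩
      omega
    obtain ⟨u, hu⟩ := Set.ncard_eq_one.mp hne1
    have hu4 : u ∈ A 4 := by rw [hu]; rfl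
    obtain ⟨v6, hv6⟩ := hP.nonempty 5
    have hnuv : u ≠ v6 := block_ne hP (show (4 : Fin 7) ≠ 5 by decide) hu4 hv6
    have hnadj : ¬ G.Adj u v6 := hP.a56 u hu4 v6 hv6
    have hdom : ∀ w, G.Adj u w → G.Adj v6 w := by
      intro w hw
      obtain ⟨i, hwi⟩ := block_exists hP w
      fin_cases i
      · exact (hP.c16 w hwi v6 hv6).symm
      · exact absurd hw.symm (hP.a25 w hwi u hu4)
      · exact absurd hw.symm (hP.a35 w hwi u hu4)
      · exact (hP.c46 w hwi v6 hv6).symm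
      · have hwu : w = u := by
          have hwi' : w ∈ A 4 := hwi
          rw [hu] at hwi'; exact hwi'
        exact absurd (hwu ▸ hw) G.irrefl
      · exact absurd hw (hP.a56 u hu4 w hwi)
      · exact absurd hw (hP.a57 u hu4 w hwi)
    have hcne : ({u}ᶜ : Set V) ≠ Set.univ := by
      intro he
      have hv : u ∈ ({u}ᶜ : Set V) := he ▸ Set.mem_univ u
      simp at hv
    exact hχ' (extend_dominated hnuv hnadj hdom (hsubcol _ hcne))
  have h5q : 5 * G.cliqueNum ≤ 4 * (5 * G.cliqueNum ⌈/⌉ 4) := ceil_ge _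
  -- derived numeric facts
  have hn0 : 3 ≤ (A 0).ncard := by omega
  have hn2 : 3 ≤ (A 2).ncard := by omega
  have hn3 : 3 ≤ (A 3).ncard := by omega
  have h34big : 6 ≤ (A 2).ncard + (A 3).ncard := by omega
  have hω4 : 4 ≤ G.cliqueNum := by omega
  -- component picks
  obtain ⟨P, hP6, hPstab, hPbound⟩ := comp_picks (G := G) (A 6)
  by_cases hcaseA : (A 0).ncard + (G.induce (A 5)).cliqueNum + 2 ≤ G.cliqueNum
  · -- balanced design (2,2,2,2,2)
    obtain ⟨g0, hg0inj, hg0mem⟩ := pick (show 2 ≤ (A 0).ncard by omega)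
    obtain ⟨g1, hg1inj, hg1mem⟩ := pick (show 2 ≤ (A 1).ncard by omega)
    obtain ⟨g2, hg2inj, hg2mem⟩ := pick (show 2 ≤ (A 2).ncard by omega)
    obtain ⟨g3, hg3inj, hg3mem⟩ := pick (show 2 ≤ (A 3).ncard by omega)
    obtain ⟨g4, hg4inj, hg4mem⟩ := pick (show 2 ≤ (A 4).ncard by omega)
    obtain ⟨S, hstab, hxT, hyT, hPT⟩ := build_design hP P hP6 hPstab
      ![g0 0, g1 0, g2 1, g3 1, g4 1] ![g2 0, g3 0, g4 0, g0 1, g1 1]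
      ![0, 1, 2, 3, 4] ![2, 3, 4, 0, 1]
      (by intro j; fin_cases j <;> decide) (by intro j; fin_cases j <;> decide)
      (by intro j; fin_cases j
          · exact hg0mem 0
          · exact hg1mem 0
          · exact hg2mem 1
          · exact hg3mem 1
          · exact hg4mem 1)
      (by intro j; fin_cases j
          · exact hg2mem 0
          · exact hg3mem 0
          · exact hg4mem 0
          · exact hg0mem 1
          · exact hg1mem 1)
      (by intro j; fin_cases j
          · exact hP.a13 _ (hg0mem 0) _ (hg2mem 0)
          · exact fun h => hP.a42 _ (hg3mem 0) _ (hg1mem 0) h.symm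
          · exact hP.a35 _ (hg2mem 1) _ (hg4mem 0)
          · exact fun h => hP.a14 _ (hg0mem 1) _ (hg3mem 1) h.symm
          · exact fun h => hP.a25 _ (hg1mem 1) _ (hg4mem 1) h.symm)
    have hd0 : (A 0 \ (⋃ j, S j)).ncard + 2 ≤ (A 0).ncard :=
      ncard_diff_le (by rintro x ⟨m, rfl⟩; exact hg0mem m)
        (by rintro x ⟨m, rfl⟩
            fin_cases m
            · exact hxT 0
            · exact hyT 3) (ncard_range hg0inj)
    have hd1 : (A 1 \ (⋃ j, S j)).ncard + 2 ≤ (A 1).ncard :=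
      ncard_diff_le (by rintro x ⟨m, rfl⟩; exact hg1mem m)
        (by rintro x ⟨m, rfl⟩
            fin_cases m
            · exact hxT 1
            · exact hyT 4) (ncard_range hg1inj)
    have hd2 : (A 2 \ (⋃ j, S j)).ncard + 2 ≤ (A 2).ncard :=
      ncard_diff_le (by rintro x ⟨m, rfl⟩; exact hg2mem m)
        (by rintro x ⟨m, rfl⟩
            fin_cases m
            · exact hyT 0
            · exact hxT 2) (ncard_range hg2inj)
    have hd3 : (A 3 \ (⋃ j, S j)).ncard + 2 ≤ (A 3).ncard :=
      ncard_diff_le (by rintro x ⟨m, rfl⟩; exact hg3mem m)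
        (by rintro x ⟨m, rfl⟩
            fin_cases m
            · exact hyT 1
            · exact hxT 3) (ncard_range hg3inj)
    have hd4 : (A 4 \ (⋃ j, S j)).ncard + 2 ≤ (A 4).ncard :=
      ncard_diff_le (by rintro x ⟨m, rfl⟩; exact hg4mem m)
        (by rintro x ⟨m, rfl⟩
            fin_cases m
            · exact hyT 2
            · exact hxT 4) (ncard_range hg4inj)
    exact hχ' (final_step hP hcl5 hclC hind _ hκs S hstab ⟨_, hxT 0⟩ hω4
      (by omega) (by omega) (by omega) (by omega) (by omega) (by omega) h34big
      (fun C => hPbound C _ hPT))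
  · push_neg at hcaseA
    have hs23 : (A 1).ncard + (A 2).ncard + 1 ≤ G.cliqueNum := by omega
    have hs45 : (A 3).ncard + (A 4).ncard + 1 ≤ G.cliqueNum := by omega
    by_cases hcaseB : (A 0).ncard + (G.induce (A 5)).cliqueNum + 1 ≤ G.cliqueNum
    · -- design (3,1,3,2,1)
      obtain ⟨g0, hg0inj, hg0mem⟩ := pick (show 3 ≤ (A 0).ncard by omega)
      obtain ⟨g1, hg1inj, hg1mem⟩ := pick (show 1 ≤ (A 1).ncard by omega)
      obtain ⟨g2, hg2inj, hg2mem⟩ := pick (show 3 ≤ (A 2).ncard by omega)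
      obtain ⟨g3, hg3inj, hg3mem⟩ := pick (show 2 ≤ (A 3).ncard by omega)
      obtain ⟨g4, hg4inj, hg4mem⟩ := pick (show 1 ≤ (A 4).ncard by omega)
      obtain ⟨S, hstab, hxT, hyT, hPT⟩ := build_design hP P hP6 hPstab
        ![g0 0, g0 1, g0 2, g1 0, g2 2] ![g2 0, g2 1, g3 0, g3 1, g4 0]
        ![0, 0, 0, 1, 2] ![2, 2, 3, 3, 4]
        (by intro j; fin_cases j <;> decide) (by intro j; fin_cases j <;> decide)
        (by intro j; fin_cases j
            · exact hg0mem 0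
            · exact hg0mem 1
            · exact hg0mem 2
            · exact hg1mem 0
            · exact hg2mem 2)
        (by intro j; fin_cases j
            · exact hg2mem 0
            · exact hg2mem 1
            · exact hg3mem 0
            · exact hg3mem 1
            · exact hg4mem 0)
        (by intro j; fin_cases j
            · exact hP.a13 _ (hg0mem 0) _ (hg2mem 0)
            · exact hP.a13 _ (hg0mem 1) _ (hg2mem 1)
            · exact hP.a14 _ (hg0mem 2) _ (hg3mem 0)
            · exact fun h => hP.a42 _ (hg3mem 1) _ (hg1mem 0) h.symm
            · exact hP.a35 _ (hg2mem 2) _ (hg4mem 0))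
      have hd0 : (A 0 \ (⋃ j, S j)).ncard + 3 ≤ (A 0).ncard :=
        ncard_diff_le (by rintro x ⟨m, rfl⟩; exact hg0mem m)
          (by rintro x ⟨m, rfl⟩
              fin_cases m
              · exact hxT 0
              · exact hxT 1
              · exact hxT 2) (ncard_range hg0inj)
      have hd1 : (A 1 \ (⋃ j, S j)).ncard + 1 ≤ (A 1).ncard :=
        ncard_diff_le (by rintro x ⟨m, rfl⟩; exact hg1mem m)
          (by rintro x ⟨m, rfl⟩
              fin_cases m
              · exact hxT 3) (ncard_range hg1inj)
      have hd2 : (A 2 \ (⋃ j, S j)).ncard + 3 ≤ (A 2).ncard :=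
        ncard_diff_le (by rintro x ⟨m, rfl⟩; exact hg2mem m)
          (by rintro x ⟨m, rfl⟩
              fin_cases m
              · exact hyT 0
              · exact hyT 1
              · exact hxT 4) (ncard_range hg2inj)
      have hd3 : (A 3 \ (⋃ j, S j)).ncard + 2 ≤ (A 3).ncard :=
        ncard_diff_le (by rintro x ⟨m, rfl⟩; exact hg3mem m)
          (by rintro x ⟨m, rfl⟩
              fin_cases m
              · exact hyT 2
              · exact hyT 3) (ncard_range hg3inj)
      have hd4 : (A 4 \ (⋃ j, S j)).ncard + 1 ≤ (A 4).ncard :=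
        ncard_diff_le (by rintro x ⟨m, rfl⟩; exact hg4mem m)
          (by rintro x ⟨m, rfl⟩
              fin_cases m
              · exact hyT 4) (ncard_range hg4inj)
      exact hχ' (final_step hP hcl5 hclC hind _ hκs S hstab ⟨_, hxT 0⟩ hω4
        (by omega) (by omega) (by omega) (by omega) (by omega) (by omega) h34big
        (fun C => hPbound C _ hPT))
    · -- design (4,1,2,2,1)
      push_neg at hcaseB
      obtain ⟨g0, hg0inj, hg0mem⟩ := pick (show 4 ≤ (A 0).ncard by omega)
      obtain ⟨g1, hg1inj, hg1mem⟩ := pick (show 1 ≤ (A 1).ncard by omega)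
      obtain ⟨g2, hg2inj, hg2mem⟩ := pick (show 2 ≤ (A 2).ncard by omega)
      obtain ⟨g3, hg3inj, hg3mem⟩ := pick (show 2 ≤ (A 3).ncard by omega)
      obtain ⟨g4, hg4inj, hg4mem⟩ := pick (show 1 ≤ (A 4).ncard by omega)
      obtain ⟨S, hstab, hxT, hyT, hPT⟩ := build_design hP P hP6 hPstab
        ![g0 0, g0 1, g0 2, g0 3, g1 0] ![g2 0, g2 1, g3 0, g3 1, g4 0]
        ![0, 0, 0, 0, 1] ![2, 2, 3, 3, 4]
        (by intro j; fin_cases j <;> decide) (by intro j; fin_cases j <;> decide)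
        (by intro j; fin_cases j
            · exact hg0mem 0
            · exact hg0mem 1
            · exact hg0mem 2
            · exact hg0mem 3
            · exact hg1mem 0)
        (by intro j; fin_cases j
            · exact hg2mem 0
            · exact hg2mem 1
            · exact hg3mem 0
            · exact hg3mem 1
            · exact hg4mem 0)
        (by intro j; fin_cases j
            · exact hP.a13 _ (hg0mem 0) _ (hg2mem 0)
            · exact hP.a13 _ (hg0mem 1) _ (hg2mem 1)
            · exact hP.a14 _ (hg0mem 2) _ (hg3mem 0)
            · exact hP.a14 _ (hg0mem 3) _ (hg3mem 1)
            · exact hP.a25 _ (hg1mem 0) _ (hg4mem 0))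
      have hd0 : (A 0 \ (⋃ j, S j)).ncard + 4 ≤ (A 0).ncard :=
        ncard_diff_le (by rintro x ⟨m, rfl⟩; exact hg0mem m)
          (by rintro x ⟨m, rfl⟩
              fin_cases m
              · exact hxT 0
              · exact hxT 1
              · exact hxT 2
              · exact hxT 3) (ncard_range hg0inj)
      have hd1 : (A 1 \ (⋃ j, S j)).ncard + 1 ≤ (A 1).ncard :=
        ncard_diff_le (by rintro x ⟨m, rfl⟩; exact hg1mem m)
          (by rintro x ⟨m, rfl⟩
              fin_cases m
              · exact hxT 4) (ncard_range hg1inj)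
      have hd2 : (A 2 \ (⋃ j, S j)).ncard + 2 ≤ (A 2).ncard :=
        ncard_diff_le (by rintro x ⟨m, rfl⟩; exact hg2mem m)
          (by rintro x ⟨m, rfl⟩
              fin_cases m
              · exact hyT 0
              · exact hyT 1) (ncard_range hg2inj)
      have hd3 : (A 3 \ (⋃ j, S j)).ncard + 2 ≤ (A 3).ncard :=
        ncard_diff_le (by rintro x ⟨m, rfl⟩; exact hg3mem m)
          (by rintro x ⟨m, rfl⟩
              fin_cases m
              · exact hyT 2
              · exact hyT 3) (ncard_range hg3inj)
      have hd4 : (A 4 \ (⋃ j, S j)).ncard + 1 ≤ (A 4).ncard :=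
        ncard_diff_le (by rintro x ⟨m, rfl⟩; exact hg4mem m)
          (by rintro x ⟨m, rfl⟩
              fin_cases m
              · exact hyT 4) (ncard_range hg4inj)
      exact hχ' (final_step hP hcl5 hclC hind _ hκs S hstab ⟨_, hxT 0⟩ hω4
        (by omega) (by omega) (by omega) (by omega) (by omega) (by omega) h34big
        (fun C => hPbound C _ hPT))
end
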